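/- arXiv:2003.04613 — 7 statements merged into one kernel-verified Lean document; each statement's English description precedes it below -/
import Mathlib

section
/- Let s be a real number and c > 0. If x is any one of the four values 0, 1, (s − 2)/3, (s − 3)/3, then the power-law spectrum n(ω) = c·ω^{−x} is a stationary solution of the differential kinetic equation: the function K(ω) = ω^s · n(ω)^4 · (d²/dω²)(1/n)(ω) satisfies (d²/dω²) K(ω) = 0 for all ω > 0. (For x = 0 and x = 1 one has K ≡ 0, these are the thermodynamic equipartition spectra; for x = (s − 2)/3 the function K is a nonzero constant, the direct-cascade KZ spectrum; for x = (s − 3)/3 the function K is linear in ω, the inverse-cascade KZ spectrum.) -/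
open Filter

private lemma deriv_aux (a p : ℝ) {ω : ℝ} (hω : 0 < ω) :
    deriv (fun y : ℝ => a * y ^ p) ω = a * p * ω ^ (p - 1) := by
  have h := (Real.hasDerivAt_rpow_const (x := ω) (p := p) (Or.inl hω.ne')).const_mul a
  simpa [mul_assoc] using h.deriv

private lemma deriv_ev (a p : ℝ) {ω : ℝ} (hω : 0 < ω) :
    deriv (fun y : ℝ => a * y ^ p) =ᶠ[nhds ω] fun y => a * p * y ^ (p - 1) := by
  filter_upwards [eventually_gt_nhds hω] with y hy using deriv_aux a p hy

/-- For any `c > 0`, if `x` is one of `0`, `1`, `(s-2)/3`, `(s-3)/3`,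
then the power-law spectrum `n(ω) = c·ω^{-x}` is a stationary solution of the
differential kinetic equation: with `K(ω) = ω^s n(ω)^4 (d²/dω²)(1/n)(ω)` one has
`K'' (ω) = 0` for all `ω > 0`. -/
theorem statement3 (s c x : ℝ) (hc : 0 < c)
    (hx : x = 0 ∨ x = 1 ∨ x = (s - 2) / 3 ∨ x = (s - 3) / 3) :
    ∀ ω : ℝ, 0 < ω →
      deriv (deriv (fun w : ℝ =>
        w ^ s * (c * w ^ (-x)) ^ 4 *
          deriv (deriv (fun y : ℝ => 1 / (c * y ^ (-x)))) w)) ω = 0 := by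
  intro ω hω
  -- inner function is locally c⁻¹ * y ^ x
  have hinner : ∀ {z : ℝ}, 0 < z →
      (fun y : ℝ => 1 / (c * y ^ (-x))) =ᶠ[nhds z] fun y => c⁻¹ * y ^ x := by
    intro z hz
    filter_upwards [eventually_gt_nhds hz] with y hy
    rw [Real.rpow_neg hy.le]
    field_simp
  -- second derivative of the inner function
  have hd2 : ∀ {z : ℝ}, 0 < z →
      deriv (deriv (fun y : ℝ => 1 / (c * y ^ (-x)))) z
        = c⁻¹ * x * (x - 1) * z ^ (x - 1 - 1) := by
    intro z hz
    have h1 : deriv (fun y : ℝ => 1 / (c * y ^ (-x)))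
        =ᶠ[nhds z] fun y => c⁻¹ * x * y ^ (x - 1) :=
      ((hinner hz).deriv).trans (deriv_ev c⁻¹ x hz)
    rw [h1.deriv_eq, deriv_aux (c⁻¹ * x) (x - 1) hz]
  -- K is locally a power law
  have hK : (fun w : ℝ =>
        w ^ s * (c * w ^ (-x)) ^ 4 *
          deriv (deriv (fun y : ℝ => 1 / (c * y ^ (-x)))) w)
      =ᶠ[nhds ω] fun w => (c ^ 3 * (x * (x - 1))) * w ^ (s - 3 * x - 2) := by
    filter_upwards [eventually_gt_nhds hω] with w hw
    rw [hd2 hw]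
    have e0 : (w ^ (-x)) ^ (4 : ℕ) = w ^ (-x * 4) := by
      rw [← Real.rpow_natCast (w ^ (-x)) 4, ← Real.rpow_mul hw.le]
      norm_num
    have e1 : w ^ s * w ^ (-x * 4) * w ^ (x - 1 - 1) = w ^ (s - 3 * x - 2) := by
      rw [← Real.rpow_add hw, ← Real.rpow_add hw]
      ring_nf
    rw [mul_pow, e0, ← e1]
    field_simp
  -- differentiate twice
  have h1 : deriv (fun w : ℝ =>
        w ^ s * (c * w ^ (-x)) ^ 4 *
          deriv (deriv (fun y : ℝ => 1 / (c * y ^ (-x)))) w)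
      =ᶠ[nhds ω] fun w =>
        (c ^ 3 * (x * (x - 1))) * (s - 3 * x - 2) * w ^ (s - 3 * x - 2 - 1) :=
    (hK.deriv).trans (deriv_ev _ _ hω)
  rw [h1.deriv_eq, deriv_aux _ _ hω]
  rcases hx with h | h | h | h <;> subst h
  · simp
  · simp
  · have : s - 3 * ((s - 2) / 3) - 2 = 0 := by ring
    rw [this]; ring
  · have : s - 3 * ((s - 3) / 3) - 2 - 1 = 0 := by ring
    rw [this]; ring
end

section
/- (Minimum principle.) Let k > 1 and let u be a twice differentiable real function on an open interval J satisfying u''(τ) + (2k − 1)·u'(τ) + k(k − 1)·u(τ) = u(τ)^4 on J. Then u cannot attain a local minimum at any interior point τ_min ∈ J at which 0 < u(τ_min) < (k(k − 1))^{1/3}. -/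
/-- Minimum principle: For `k > 1`, a twice differentiable solution of
`u'' + (2k-1)u' + k(k-1)u = u⁴` on an open interval cannot attain a local minimum at an
interior point `τmin` at which `0 < u(τmin) < (k(k-1))^{1/3}`. -/
theorem statement5 (k : ℝ) (hk : 1 < k) (a b : ℝ) (u : ℝ → ℝ)
    (hd1 : ∀ τ ∈ Set.Ioo a b, DifferentiableAt ℝ u τ)
    (hd2 : ∀ τ ∈ Set.Ioo a b, DifferentiableAt ℝ (deriv u) τ)
    (heq : ∀ τ ∈ Set.Ioo a b,
      deriv (deriv u) τ + (2 * k - 1) * deriv u τ + k * (k - 1) * u τ = u τ ^ 4)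
    (τmin : ℝ) (hτ : τmin ∈ Set.Ioo a b)
    (h0 : 0 < u τmin) (h1 : u τmin < (k * (k - 1)) ^ ((1 : ℝ) / 3)) :
    ¬ IsLocalMin u τmin := by
  intro hmin
  have hkk : (0:ℝ) < k * (k - 1) := by nlinarith
  -- first derivative vanishes at the local min
  have hg0 : deriv u τmin = 0 := hmin.deriv_eq_zero
  -- u τmin ^ 3 < k * (k-1)
  have hcube : u τmin ^ 3 < k * (k - 1) := by
    have h3 : ((k * (k - 1)) ^ ((1 : ℝ) / 3)) ^ (3:ℕ) = k * (k - 1) := by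
      rw [← Real.rpow_natCast ((k * (k - 1)) ^ ((1 : ℝ) / 3)) 3,
        ← Real.rpow_mul hkk.le]
      norm_num
    calc u τmin ^ 3 < ((k * (k - 1)) ^ ((1 : ℝ) / 3)) ^ (3:ℕ) :=
          pow_lt_pow_left₀ h1 h0.le (by norm_num)
      _ = k * (k - 1) := h3
  -- second derivative is negative
  have hc : deriv (deriv u) τmin < 0 := by
    have := heq τmin hτ
    rw [hg0] at this
    have h4 : u τmin ^ 4 = u τmin * u τmin ^ 3 := by ring
    nlinarith [mul_lt_mul_of_pos_left hcube h0]
  -- deriv u is negative just to the right of τmin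
  have hda : HasDerivAt (deriv u) (deriv (deriv u) τmin) τmin :=
    (hd2 τmin hτ).hasDerivAt
  have hslope := hasDerivAt_iff_tendsto_slope.mp hda
  have hneg : ∀ᶠ y in nhdsWithin τmin (Set.Ioi τmin), deriv u y < 0 := by
    have hev : ∀ᶠ y in nhdsWithin τmin {τmin}ᶜ,
        slope (deriv u) τmin y < 0 :=
      hslope.eventually (eventually_lt_nhds hc)
    have hle : nhdsWithin τmin (Set.Ioi τmin) ≤ nhdsWithin τmin {τmin}ᶜ :=
      nhdsWithin_mono _ (fun y hy => ne_of_gt hy)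
    filter_upwards [hle hev, self_mem_nhdsWithin] with y hy hy'
    have hyy : (0:ℝ) < y - τmin := sub_pos.mpr hy'
    rw [slope_def_field] at hy
    have : (deriv u y - deriv u τmin) / (y - τmin) < 0 := hy
    rw [hg0, sub_zero] at this
    rcases div_neg_iff.mp this with h | h
    · linarith [h.2]
    · exact h.1
  -- also stay inside Ioo a b and inside the local-min neighborhood
  have hIoo : ∀ᶠ y in nhdsWithin τmin (Set.Ioi τmin), y ∈ Set.Ioo a b :=
    eventually_nhdsWithin_of_eventually_nhds
      ((isOpen_Ioo.eventually_mem hτ))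
  have hminev : ∀ᶠ y in nhdsWithin τmin (Set.Ioi τmin), u τmin ≤ u y :=
    eventually_nhdsWithin_of_eventually_nhds hmin
  obtain ⟨c, hc', hsub⟩ := mem_nhdsGT_iff_exists_Ioo_subset.mp
    ((hneg.and hIoo).and hminev)
  -- u is strictly decreasing on [τmin, c)
  have hIcosub : Set.Ico τmin c ⊆ Set.Ioo a b := by
    intro x hx
    rcases eq_or_lt_of_le hx.1 with h | h
    · exact h ▸ hτ
    · exact (hsub ⟨h, hx.2⟩).1.2
  have hanti : StrictAntiOn u (Set.Ico τmin c) := by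
    apply strictAntiOn_of_deriv_neg (convex_Ico _ _)
    · exact fun x hx => (hd1 x (hIcosub hx)).continuousAt.continuousWithinAt
    · intro x hx
      rw [interior_Ico] at hx
      exact (hsub hx).1.1
  -- contradiction at a point in (τmin, c)
  set y := (τmin + c) / 2 with hy
  have hy1 : τmin < y := by simp only [hy]; linarith [hc'.out]
  have hy2 : y < c := by simp only [hy]; linarith [hc'.out]
  have hlt : u y < u τmin :=
    hanti ⟨le_refl _, hc'.out⟩ ⟨hy1.le, hy2⟩ hy1
  have hge : u τmin ≤ u y := (hsub ⟨hy1, hy2⟩).2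
  linarith
end

section
/- (Uniform derivative bound.) Let k > 1 and let u be a twice continuously differentiable function on [0, ∞) satisfying u''(τ) + (2k − 1)·u'(τ) + k(k − 1)·u(τ) = u(τ)^4, with initial data u(0) = u₀ ∈ (0, (k(k − 1))^{1/3}] and u'(0) = 0. Define Φ(w) = k(k − 1)·w²/2 − w⁵/5. Then for every τ ≥ 0 such that u(s) ≥ 0 for all s ∈ [0, τ], one has u'(τ)² ≤ 2·Φ(u₀); in particular u' is uniformly bounded on the set where u remains nonnegative. -/
set_option maxHeartbeats 1000000


/-- Uniform derivative bound: For `k > 1`, a C² solution of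
`u'' + (2k-1)u' + k(k-1)u = u⁴` on `[0,∞)` with `u(0) = u₀ ∈ (0, (k(k-1))^{1/3}]`,
`u'(0) = 0` satisfies `u'(τ)² ≤ 2Φ(u₀)`, with `Φ(w) = k(k-1)w²/2 - w⁵/5`, at every `τ ≥ 0`
such that `u` stays nonnegative on `[0,τ]`. -/
theorem statement9 (k u₀ : ℝ) (hk : 1 < k)
    (hu₀ : 0 < u₀) (hu₀' : u₀ ≤ (k * (k - 1)) ^ ((1 : ℝ) / 3)) (u : ℝ → ℝ)
    (hd1 : ∀ τ : ℝ, 0 ≤ τ → DifferentiableAt ℝ u τ)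
    (hd2 : ∀ τ : ℝ, 0 ≤ τ → DifferentiableAt ℝ (deriv u) τ)
    (hcont : ∀ τ : ℝ, 0 ≤ τ → ContinuousAt (deriv (deriv u)) τ)
    (heq : ∀ τ : ℝ, 0 ≤ τ →
      deriv (deriv u) τ + (2 * k - 1) * deriv u τ + k * (k - 1) * u τ = u τ ^ 4)
    (hinit : u 0 = u₀) (hinit' : deriv u 0 = 0) :
    ∀ τ : ℝ, 0 ≤ τ → (∀ s ∈ Set.Icc 0 τ, 0 ≤ u s) →
      (deriv u τ) ^ 2 ≤ 2 * (k * (k - 1) * u₀ ^ 2 / 2 - u₀ ^ 5 / 5) := by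
  intro τ hτ hpos
  have hk0 : (0 : ℝ) < k - 1 := by linarith
  have hA : (0 : ℝ) < k * (k - 1) := mul_pos (by linarith) hk0
  set A : ℝ := k * (k - 1) with hA_def
  obtain ⟨w, hw, hw3, hu₀w⟩ : ∃ w : ℝ, 0 < w ∧ w ^ 3 = A ∧ u₀ ≤ w := by
    refine ⟨A ^ ((1 : ℝ) / 3), Real.rpow_pos_of_pos hA _, ?_, hu₀'⟩
    rw [← Real.rpow_natCast (A ^ ((1 : ℝ) / 3)) 3, ← Real.rpow_mul hA.le]
    norm_num
  have hucont : ∀ s : ℝ, 0 ≤ s → ContinuousAt u s := fun s hs => (hd1 s hs).continuousAt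
  set E : ℝ → ℝ := fun s => (deriv u s) ^ 2 / 2 + A * (u s) ^ 2 / 2 - (u s) ^ 5 / 5
    with hE_def
  have hEderiv : ∀ s : ℝ, 0 ≤ s → HasDerivAt E (-(2 * k - 1) * (deriv u s) ^ 2) s := by
    intro s hs
    have h1 : HasDerivAt u (deriv u s) s := (hd1 s hs).hasDerivAt
    have h2 : HasDerivAt (deriv u) (deriv (deriv u) s) s := (hd2 s hs).hasDerivAt
    have h3 : HasDerivAt E
        (((2 : ℕ) * deriv u s ^ 1 * deriv (deriv u) s) / 2
          + A * ((2 : ℕ) * u s ^ 1 * deriv u s) / 2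
          - ((5 : ℕ) * u s ^ 4 * deriv u s) / 5) s :=
      (((h2.pow 2).div_const 2).add (((h1.pow 2).const_mul A).div_const 2)).sub
        ((h1.pow 5).div_const 5)
    convert h3 using 1
    have h := heq s hs
    push_cast
    linear_combination (-(deriv u s)) * h
  have hEanti : AntitoneOn E (Set.Ici 0) := by
    apply antitoneOn_of_deriv_nonpos (convex_Ici 0)
    · exact fun s hs => ((hEderiv s hs).differentiableAt.continuousAt).continuousWithinAt
    · intro s hs
      rw [interior_Ici] at hs
      exact ((hEderiv s (le_of_lt hs)).differentiableAt).differentiableWithinAt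
    · intro s hs
      rw [interior_Ici] at hs
      rw [(hEderiv s hs.le).deriv]
      have h1 : (0:ℝ) ≤ (2*k-1) * (deriv u s)^2 :=
        mul_nonneg (by linarith) (sq_nonneg _)
      linarith
  have hE0 : E 0 = A * u₀ ^ 2 / 2 - u₀ ^ 5 / 5 := by
    simp [hE_def, hinit, hinit']
  have hEle : ∀ s : ℝ, 0 ≤ s → E s ≤ A * u₀ ^ 2 / 2 - u₀ ^ 5 / 5 := by
    intro s hs
    rw [← hE0]
    exact hEanti Set.self_mem_Ici hs hs
  have hΦu₀w : A * u₀ ^ 2 / 2 - u₀ ^ 5 / 5 ≤ A * w ^ 2 / 2 - w ^ 5 / 5 := by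
    have key : 10 * ((A * w ^ 2 / 2 - w ^ 5 / 5) - (A * u₀ ^ 2 / 2 - u₀ ^ 5 / 5))
        = (w - u₀) * (3 * w ^ 4 + 3 * w ^ 3 * u₀ - 2 * w ^ 2 * u₀ ^ 2
            - 2 * w * u₀ ^ 3 - 2 * u₀ ^ 4) := by
      rw [← hw3]; ring
    have h2 : u₀ ^ 2 ≤ w ^ 2 := pow_le_pow_left₀ hu₀.le hu₀w 2
    have h4 : u₀ ^ 4 ≤ w ^ 4 := pow_le_pow_left₀ hu₀.le hu₀w 4
    have h34 : u₀ ^ 4 ≤ w ^ 3 * u₀ := by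
      have := mul_le_mul_of_nonneg_right (pow_le_pow_left₀ hu₀.le hu₀w 3) hu₀.le
      calc u₀ ^ 4 = u₀ ^ 3 * u₀ := by ring
        _ ≤ w ^ 3 * u₀ := this
    have t1 : 0 ≤ w ^ 2 * (w ^ 2 - u₀ ^ 2) := mul_nonneg (sq_nonneg w) (by linarith)
    have t2 : 0 ≤ w * u₀ * (w ^ 2 - u₀ ^ 2) :=
      mul_nonneg (mul_nonneg hw.le hu₀.le) (by linarith)
    have hfac : 0 ≤ 3 * w ^ 4 + 3 * w ^ 3 * u₀ - 2 * w ^ 2 * u₀ ^ 2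
        - 2 * w * u₀ ^ 3 - 2 * u₀ ^ 4 := by nlinarith [t1, t2, h4, h34]
    have := mul_nonneg (sub_nonneg.2 hu₀w) hfac
    linarith
  -- the solution stays below w
  have hle : ∀ s : ℝ, 0 ≤ s → u s ≤ w := by
    by_contra h
    push_neg at h
    obtain ⟨t, ht0, htw⟩ := h
    set c : ℝ := min (u t) (w + 1) with hc_def
    have hcw : w < c := lt_min htw (by linarith)
    have hcu : c ≤ u t := min_le_left _ _
    have hcw1 : c ≤ w + 1 := min_le_right _ _
    have huconIcc : ContinuousOn u (Set.Icc 0 t) :=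
      fun s hs => (hucont s hs.1).continuousWithinAt
    set S2 : Set ℝ := {s | s ∈ Set.Icc (0:ℝ) t ∧ u s = c} with hS2_def
    have hS2ne : S2.Nonempty := by
      have hmem : c ∈ Set.Icc (u 0) (u t) := ⟨by rw [hinit]; linarith, hcu⟩
      obtain ⟨s, hs1, hs2⟩ := intermediate_value_Icc ht0 huconIcc hmem
      exact ⟨s, hs1, hs2⟩
    have hS2closed : IsClosed S2 := by
      have hset : S2 = Set.Icc 0 t ∩ u ⁻¹' {c} := by
        ext s; simp [hS2_def, Set.mem_setOf_eq]
      rw [hset]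
      exact huconIcc.preimage_isClosed_of_isClosed isClosed_Icc isClosed_singleton
    have hS2bdd : BddBelow S2 := ⟨0, fun s hs => hs.1.1⟩
    set t₂ : ℝ := sInf S2 with ht₂def
    have ht₂mem : t₂ ∈ S2 := hS2closed.csInf_mem hS2ne hS2bdd
    have ht₂Icc : t₂ ∈ Set.Icc 0 t := ht₂mem.1
    have hut₂ : u t₂ = c := ht₂mem.2
    have hlt : ∀ s : ℝ, 0 ≤ s → s < t₂ → u s < c := by
      intro s hs hst
      by_contra hge
      push_neg at hge
      have hst' : s ≤ t := le_trans hst.le ht₂Icc.2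
      have hsIcc : Set.Icc 0 s ⊆ Set.Icc 0 t := Set.Icc_subset_Icc le_rfl hst'
      have hmem : c ∈ Set.Icc (u 0) (u s) := ⟨by rw [hinit]; linarith, hge⟩
      obtain ⟨r, hr1, hr2⟩ := intermediate_value_Icc hs (huconIcc.mono hsIcc) hmem
      have : t₂ ≤ r := csInf_le hS2bdd ⟨hsIcc hr1, hr2⟩
      linarith [hr1.2]
    set S1 : Set ℝ := {s | s ∈ Set.Icc (0:ℝ) t₂ ∧ u s ≤ w} with hS1_def
    have hS1ne : S1.Nonempty := ⟨0, ⟨le_rfl, ht₂Icc.1⟩, by rw [hinit]; exact hu₀w⟩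
    have hS1closed : IsClosed S1 := by
      have hset : S1 = Set.Icc 0 t₂ ∩ u ⁻¹' (Set.Iic w) := by
        ext s; simp [hS1_def, Set.mem_setOf_eq]
      rw [hset]
      exact (huconIcc.mono (Set.Icc_subset_Icc le_rfl ht₂Icc.2)).preimage_isClosed_of_isClosed
        isClosed_Icc isClosed_Iic
    have hS1bdd : BddAbove S1 := ⟨t₂, fun s hs => hs.1.2⟩
    set t₁ : ℝ := sSup S1 with ht₁def
    have ht₁mem : t₁ ∈ S1 := hS1closed.csSup_mem hS1ne hS1bdd
    have ht₁0 : 0 ≤ t₁ := ht₁mem.1.1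
    have ht₁t₂ : t₁ ≤ t₂ := ht₁mem.1.2
    have hut₁ : u t₁ ≤ w := ht₁mem.2
    have ht₁lt : t₁ < t₂ := by
      rcases lt_or_eq_of_le ht₁t₂ with h | h
      · exact h
      · exfalso; rw [h, hut₂] at hut₁; linarith
    have hmid : ∀ s : ℝ, t₁ < s → s < t₂ → w < u s := by
      intro s hs1 hs2
      by_contra hge; push_neg at hge
      have : s ≤ t₁ := le_csSup hS1bdd ⟨⟨by linarith, by linarith⟩, hge⟩
      linarith
    have hC : (0:ℝ) < (3 / 2) * w ^ 3 + 2 * w ^ 2 + w + 1 := by positivity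
    obtain ⟨M, hM, hM2⟩ : ∃ M : ℝ, 0 < M ∧
        M ^ 2 = 2 * ((3 / 2) * w ^ 3 + 2 * w ^ 2 + w + 1) :=
      ⟨Real.sqrt (2 * ((3 / 2) * w ^ 3 + 2 * w ^ 2 + w + 1)),
        Real.sqrt_pos.2 (by linarith), Real.sq_sqrt (by linarith)⟩
    -- derivative bound on (t₁, t₂)
    have hkey : ∀ s : ℝ, t₁ < s → s < t₂ → deriv u s ≤ M * (u s - w) := by
      intro s hs1 hs2
      have hs0 : 0 ≤ s := le_trans ht₁0 hs1.le
      have hws : w < u s := hmid s hs1 hs2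
      have hsc : u s < c := hlt s hs0 hs2
      have hv0 : 0 ≤ u s - w := by linarith
      have hv1 : u s - w ≤ 1 := by linarith
      have hE1 : E s ≤ A * w ^ 2 / 2 - w ^ 5 / 5 := le_trans (hEle s hs0) hΦu₀w
      have hE2 : (deriv u s) ^ 2 ≤ 2 * (A * w ^ 2 / 2 - w ^ 5 / 5)
          - 2 * (A * (u s) ^ 2 / 2 - (u s) ^ 5 / 5) := by
        have hEs : E s = (deriv u s) ^ 2 / 2 + A * (u s) ^ 2 / 2 - (u s) ^ 5 / 5 := rfl
        rw [hEs] at hE1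
        linarith only [hE1]
      have keyP : (A * w ^ 2 / 2 - w ^ 5 / 5) - (A * (u s) ^ 2 / 2 - (u s) ^ 5 / 5)
          = (3 / 2) * w ^ 3 * (u s - w) ^ 2 + 2 * w ^ 2 * (u s - w) ^ 3
            + w * (u s - w) ^ 4 + (u s - w) ^ 5 / 5 := by
        rw [← hw3]; ring
      have hp32 : (u s - w) ^ 3 ≤ (u s - w) ^ 2 :=
        pow_le_pow_of_le_one hv0 hv1 (by norm_num)
      have hp42 : (u s - w) ^ 4 ≤ (u s - w) ^ 2 :=
        pow_le_pow_of_le_one hv0 hv1 (by norm_num)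
      have hp52 : (u s - w) ^ 5 ≤ (u s - w) ^ 2 :=
        pow_le_pow_of_le_one hv0 hv1 (by norm_num)
      have b3 : 2 * w ^ 2 * (u s - w) ^ 3 ≤ 2 * w ^ 2 * (u s - w) ^ 2 := by
        have h := mul_nonneg (mul_nonneg (by norm_num : (0:ℝ) ≤ 2) (sq_nonneg w))
          (sub_nonneg.2 hp32)
        linarith only [h]
      have b4 : w * (u s - w) ^ 4 ≤ w * (u s - w) ^ 2 := by
        have h := mul_nonneg hw.le (sub_nonneg.2 hp42)
        linarith only [h]
      have hP : (A * w ^ 2 / 2 - w ^ 5 / 5) - (A * (u s) ^ 2 / 2 - (u s) ^ 5 / 5)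
          ≤ ((3 / 2) * w ^ 3 + 2 * w ^ 2 + w + 1) * (u s - w) ^ 2 := by
        rw [keyP]; linarith only [b3, b4, hp52, sq_nonneg (u s - w)]
      have hsq : (deriv u s) ^ 2 ≤ (M * (u s - w)) ^ 2 := by
        have hMv : (M * (u s - w)) ^ 2
            = 2 * ((3 / 2) * w ^ 3 + 2 * w ^ 2 + w + 1) * (u s - w) ^ 2 := by
          rw [mul_pow, hM2]
        linarith only [hMv, hE2, hP]
      exact (abs_le_of_sq_le_sq' hsq (mul_nonneg hM.le hv0)).2
    set g : ℝ → ℝ := fun s => Real.exp (-M * s) * (u s - w) with hg_def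
    have hgd : ∀ s : ℝ, 0 ≤ s →
        HasDerivAt g (-M * Real.exp (-M * s) * (u s - w) + Real.exp (-M * s) * deriv u s) s := by
      intro s hs
      have h1 : HasDerivAt (fun x : ℝ => Real.exp (-M * x)) (-M * Real.exp (-M * s)) s := by
        have h0 : HasDerivAt (fun x : ℝ => -M * x) (-M) s := by
          simpa using (hasDerivAt_id s).const_mul (-M)
        have := h0.exp
        convert this using 1
        ring
      have h2 : HasDerivAt (fun x => u x - w) (deriv u s) s :=
        (hd1 s hs).hasDerivAt.sub_const w
      exact h1.mul h2
    have hganti : AntitoneOn g (Set.Icc t₁ t₂) := by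
      apply antitoneOn_of_deriv_nonpos (convex_Icc _ _)
      · intro s hs
        exact ((hgd s (le_trans ht₁0 hs.1)).differentiableAt.continuousAt).continuousWithinAt
      · intro s hs
        rw [interior_Icc] at hs
        exact ((hgd s (le_trans ht₁0 hs.1.le)).differentiableAt).differentiableWithinAt
      · intro s hs
        rw [interior_Icc] at hs
        rw [(hgd s (le_trans ht₁0 hs.1.le)).deriv]
        have hb := hkey s hs.1 hs.2
        have he : 0 < Real.exp (-M * s) := Real.exp_pos _
        have heq2 : -M * Real.exp (-M * s) * (u s - w) + Real.exp (-M * s) * deriv u s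
            = Real.exp (-M * s) * (deriv u s - M * (u s - w)) := by ring
        rw [heq2]
        exact mul_nonpos_of_nonneg_of_nonpos he.le (by linarith)
    have hg1 : g t₁ ≤ 0 := by
      have : u t₁ - w ≤ 0 := by linarith
      exact mul_nonpos_of_nonneg_of_nonpos (Real.exp_pos _).le this
    have hg2 : 0 < g t₂ := by
      have : 0 < u t₂ - w := by rw [hut₂]; linarith
      exact mul_pos (Real.exp_pos _) this
    have hfin := hganti (Set.left_mem_Icc.2 ht₁t₂) (Set.right_mem_Icc.2 ht₁t₂) ht₁t₂
    linarith only [hfin, hg1, hg2]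
  -- conclusion
  have hEτ := hEle τ hτ
  have huτw := hle τ hτ
  have huτ0 : 0 ≤ u τ := hpos τ ⟨hτ, le_rfl⟩
  have hcube : (u τ) ^ 3 ≤ A := by
    rw [← hw3]
    exact pow_le_pow_left₀ huτ0 huτw 3
  have hΦuτ : 0 ≤ A * (u τ) ^ 2 / 2 - (u τ) ^ 5 / 5 := by
    have h1 : (u τ) ^ 2 * (u τ) ^ 3 ≤ (u τ) ^ 2 * A :=
      mul_le_mul_of_nonneg_left hcube (sq_nonneg _)
    have h2 : 0 ≤ A * (u τ) ^ 2 := mul_nonneg hA.le (sq_nonneg _)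
    linarith only [h1, h2]
  have hEτ' : E τ = (deriv u τ) ^ 2 / 2 + A * (u τ) ^ 2 / 2 - (u τ) ^ 5 / 5 := rfl
  rw [hEτ'] at hEτ
  linarith only [hEτ, hΦuτ]
end

section
/- (Existence of the separatrix S_{IV,I}.) Let k > 1. There exist v₀ > 0 and a twice continuously differentiable function u : [0, ∞) → ℝ satisfying u''(τ) + (2k − 1)·u'(τ) + k(k − 1)·u(τ) = u(τ)^4 for all τ ≥ 0, such that u(0) = 0, u'(0) = v₀, u is strictly increasing with 0 < u(τ) < (k(k − 1))^{1/3} for all τ > 0, and u(τ) → (k(k − 1))^{1/3}, u'(τ) → 0 as τ → ∞. (This is a stable-manifold orbit of the saddle P2 which crosses the v-axis at a finite point; the corresponding spectrum increases monotonically from zero to the KZ value.) -/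
open MeasureTheory intervalIntegral Real Set Filter Topology

namespace Stmt12



noncomputable def Phi (U y : ℝ) : ℝ := U^3*y^2/2 - y^5/5

noncomputable def TT (a U : ℝ) (f : ℝ → ℝ) : ℝ → ℝ :=
  fun y => Real.sqrt (2*a*(∫ s in y..U, f s) + 2*(Phi U U - Phi U y))

noncomputable def seq (a U : ℝ) : ℕ → ℝ → ℝ := fun n => (TT a U)^[n] (fun _ => 0)

noncomputable def clmp (U y : ℝ) : ℝ := max 0 (min y U)

noncomputable def phi (a U : ℝ) : ℝ → ℝ := fun y => ⨆ n, seq a U n (clmp U y)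

noncomputable def CC (a U : ℝ) : ℝ := 2*a*U + Real.sqrt (2 * Phi U U) + 1

variable {a U : ℝ}

lemma sqrt_add_le {x y : ℝ} (hx : 0 ≤ x) (hy : 0 ≤ y) :
    Real.sqrt (x + y) ≤ Real.sqrt x + Real.sqrt y := by
  have h : x + y ≤ (Real.sqrt x + Real.sqrt y)^2 := by
    nlinarith [Real.sq_sqrt hx, Real.sq_sqrt hy, Real.sqrt_nonneg x, Real.sqrt_nonneg y,
      mul_nonneg (Real.sqrt_nonneg x) (Real.sqrt_nonneg y)]
  calc Real.sqrt (x + y) ≤ Real.sqrt ((Real.sqrt x + Real.sqrt y)^2) := Real.sqrt_le_sqrt h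
    _ = _ := Real.sqrt_sq (by positivity)

lemma hasDerivAt_Phi (y : ℝ) : HasDerivAt (Phi U) (U^3*y - y^4) y := by
  have h : HasDerivAt (fun y : ℝ => U^3*y^2/2 - y^5/5) (U^3*(2*y^(2-1))/2 - 5*y^(5-1)/5) y := by
    exact (((hasDerivAt_pow 2 y).const_mul (U^3)).div_const 2).sub
      ((hasDerivAt_pow 5 y).div_const 5)
  unfold Phi
  convert h using 1
  norm_num
  ring

lemma Phi_cont : Continuous (Phi U) := by unfold Phi; continuity

lemma Phi_strictMonoOn (hU : 0 < U) : StrictMonoOn (Phi U) (Icc 0 U) := by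
  apply strictMonoOn_of_deriv_pos (convex_Icc 0 U) Phi_cont.continuousOn
  intro y hy
  rw [interior_Icc] at hy
  rw [(hasDerivAt_Phi y).deriv]
  have h1 : 0 < y := hy.1
  have h2 : y < U := hy.2
  nlinarith [pow_lt_pow_left₀ h2 (le_of_lt h1) (by norm_num : (3:ℕ) ≠ 0)]

lemma Phi_nonneg (hU : 0 < U) {y : ℝ} (hy : y ∈ Icc 0 U) : 0 ≤ Phi U y := by
  obtain ⟨h0, h1⟩ := hy
  have h3 : y^3 ≤ U^3 := by nlinarith [pow_le_pow_left₀ h0 h1 3]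
  unfold Phi; nlinarith [mul_nonneg (sq_nonneg y) (sub_nonneg.2 h3), pow_nonneg h0 5]

lemma Phi_diff_nonneg (hU : 0 < U) {y : ℝ} (hy : y ∈ Icc 0 U) : 0 ≤ Phi U U - Phi U y := by
  rcases eq_or_lt_of_le hy.2 with h | h
  · simp [h]
  · have := Phi_strictMonoOn hU hy (right_mem_Icc.2 (le_of_lt hU)) h
    linarith

lemma Phi_diff_pos (hU : 0 < U) {y : ℝ} (hy : y ∈ Ico 0 U) : 0 < Phi U U - Phi U y := by
  have := Phi_strictMonoOn hU ⟨hy.1, le_of_lt hy.2⟩ (right_mem_Icc.2 (le_of_lt hU)) hy.2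
  linarith

lemma TT_cont {f : ℝ → ℝ} (hf : Continuous f) : Continuous (TT a U f) := by
  apply Real.continuous_sqrt.comp
  apply Continuous.add
  · apply Continuous.mul continuous_const
    have : (fun y => ∫ s in y..U, f s) = fun y => -∫ s in U..y, f s := by
      funext y; rw [intervalIntegral.integral_symm]
    rw [this]
    exact (intervalIntegral.continuous_primitive (fun a b => hf.intervalIntegrable a b) U).neg
  · exact continuous_const.mul (continuous_const.sub Phi_cont)

lemma seq_zero : seq a U 0 = fun _ => (0:ℝ) := rfl

lemma seq_succ (n : ℕ) : seq a U (n+1) = TT a U (seq a U n) :=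
  Function.iterate_succ_apply' _ _ _

lemma seq_cont (n : ℕ) : Continuous (seq a U n) := by
  induction n with
  | zero => exact continuous_const
  | succ n ih => rw [seq_succ]; exact TT_cont ih

lemma seq_nonneg (n : ℕ) (y : ℝ) : 0 ≤ seq a U n y := by
  cases n with
  | zero => simp [seq_zero]
  | succ n => rw [seq_succ]; exact Real.sqrt_nonneg _


-- new material
lemma CC_pos (ha : 0 < a) (hU : 0 < U) : 0 < CC a U := by
  have := Real.sqrt_nonneg (2 * Phi U U); unfold CC; nlinarith

lemma TT_le_TT (ha : 0 < a) (hU : 0 < U) {f g : ℝ → ℝ} (hf : Continuous f) (hg : Continuous g)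
    (h : ∀ s ∈ Icc 0 U, f s ≤ g s) {y : ℝ} (hy : y ∈ Icc 0 U) : TT a U f y ≤ TT a U g y := by
  apply Real.sqrt_le_sqrt
  have hint : (∫ s in y..U, f s) ≤ ∫ s in y..U, g s := by
    apply intervalIntegral.integral_mono_on hy.2 (hf.intervalIntegrable _ _)
      (hg.intervalIntegrable _ _)
    intro x hx; exact h x ⟨le_trans hy.1 hx.1, hx.2⟩
  nlinarith

lemma seq_mono_succ (ha : 0 < a) (hU : 0 < U) (n : ℕ) {y : ℝ} (hy : y ∈ Icc 0 U) :
    seq a U n y ≤ seq a U (n+1) y := by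
  induction n generalizing y with
  | zero => exact seq_nonneg 1 y
  | succ n ih =>
      rw [seq_succ, seq_succ]
      exact TT_le_TT ha hU (seq_cont n) (seq_cont (n+1)) (fun s hs => ih hs) hy

lemma seq_le_CC (ha : 0 < a) (hU : 0 < U) (n : ℕ) {y : ℝ} (hy : y ∈ Icc 0 U) :
    seq a U n y ≤ CC a U := by
  induction n generalizing y with
  | zero => exact le_of_lt (CC_pos ha hU)
  | succ n ih =>
      rw [seq_succ]
      have h1 : (∫ s in y..U, seq a U n s) ≤ ∫ s in y..U, CC a U := by
        apply intervalIntegral.integral_mono_on hy.2 ((seq_cont n).intervalIntegrable _ _)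
          (intervalIntegrable_const)
        intro x hx; exact ih ⟨le_trans hy.1 hx.1, hx.2⟩
      have h2 : (∫ s in y..U, (CC a U : ℝ)) = (U - y) * CC a U := by
        simp [intervalIntegral.integral_const, smul_eq_mul]
      have h3 : 2*a*(∫ s in y..U, seq a U n s) + 2*(Phi U U - Phi U y) ≤ (CC a U)^2 := by
        have hb : 2*(Phi U U - Phi U y) ≤ 2 * Phi U U := by
          have := Phi_nonneg hU hy; linarith
        have hsq : (Real.sqrt (2 * Phi U U))^2 = 2 * Phi U U := by
          apply Real.sq_sqrt
          have := Phi_nonneg hU (right_mem_Icc.2 (le_of_lt hU)); linarith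
        have hCge : Real.sqrt (2 * Phi U U) ≤ CC a U := by
          unfold CC; nlinarith
        have hUy : (U - y) * CC a U ≤ U * CC a U := by
          have := CC_pos ha hU; nlinarith [hy.1]
        have h4 : 2*a*(∫ s in y..U, seq a U n s) ≤ 2*a*(U * CC a U) := by
          have := le_trans h1 (le_of_eq h2)
          nlinarith [le_trans this hUy]
        have hC := CC_pos ha hU
        have h6 : (CC a U)^2 = 2*a*U*(CC a U) + Real.sqrt (2 * Phi U U)*(CC a U) + CC a U := by
          unfold CC; ring
        have h5 : 2 * Phi U U ≤ Real.sqrt (2 * Phi U U) * CC a U := by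
          nlinarith [mul_le_mul_of_nonneg_left hCge (Real.sqrt_nonneg (2 * Phi U U))]
        nlinarith
      calc Real.sqrt _ ≤ Real.sqrt ((CC a U)^2) := Real.sqrt_le_sqrt h3
        _ = CC a U := Real.sqrt_sq (le_of_lt (CC_pos ha hU))

lemma clmp_mem (U y : ℝ) (hU : 0 < U) : clmp U y ∈ Icc 0 U := by
  unfold clmp
  exact ⟨le_max_left _ _, max_le (le_of_lt hU) (min_le_right _ _)⟩

lemma clmp_eq_self (hU : 0 < U) {y : ℝ} (hy : y ∈ Icc 0 U) : clmp U y = y := by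
  unfold clmp; rw [min_eq_left hy.2, max_eq_right hy.1]

lemma clmp_cont : Continuous (clmp U) := continuous_const.max (continuous_id.min continuous_const)

lemma seq_mono (ha : 0 < a) (hU : 0 < U) {y : ℝ} (hy : y ∈ Icc 0 U) :
    Monotone (fun n => seq a U n y) :=
  monotone_nat_of_le_succ (fun n => seq_mono_succ ha hU n hy)

lemma seq_bdd (ha : 0 < a) (hU : 0 < U) {y : ℝ} (hy : y ∈ Icc 0 U) :
    BddAbove (Set.range (fun n => seq a U n y)) :=
  ⟨CC a U, by rintro x ⟨n, rfl⟩; exact seq_le_CC ha hU n hy⟩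

lemma seq_tendsto_phi (ha : 0 < a) (hU : 0 < U) {y : ℝ} (hy : y ∈ Icc 0 U) :
    Tendsto (fun n => seq a U n y) atTop (𝓝 (phi a U y)) := by
  have : phi a U y = ⨆ n, seq a U n y := by unfold phi; rw [clmp_eq_self hU hy]
  rw [this]
  exact tendsto_atTop_ciSup (seq_mono ha hU hy) (seq_bdd ha hU hy)

lemma phi_eq_clmp (hU : 0 < U) (y : ℝ) : phi a U y = phi a U (clmp U y) := by
  unfold phi
  rw [clmp_eq_self hU (clmp_mem U y hU)]

lemma phi_nonneg (ha : 0 < a) (hU : 0 < U) (y : ℝ) : 0 ≤ phi a U y := by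
  have h := clmp_mem U y hU
  exact le_trans (seq_nonneg 0 _) (le_ciSup (seq_bdd ha hU h) 0)

lemma phi_le_CC (ha : 0 < a) (hU : 0 < U) (y : ℝ) : phi a U y ≤ CC a U := by
  have h := clmp_mem U y hU
  exact ciSup_le (fun n => seq_le_CC ha hU n h)

lemma seq_le_phi (ha : 0 < a) (hU : 0 < U) (n : ℕ) {y : ℝ} (hy : y ∈ Icc 0 U) :
    seq a U n y ≤ phi a U y := by
  have : phi a U y = ⨆ m, seq a U m y := by unfold phi; rw [clmp_eq_self hU hy]
  rw [this]; exact le_ciSup (seq_bdd ha hU hy) n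

lemma phi_measurable (ha : 0 < a) (hU : 0 < U) : Measurable (phi a U) := by
  apply measurable_of_tendsto_metrizable
    (f := fun n => fun y => seq a U n (clmp U y))
    (fun n => ((seq_cont n).comp clmp_cont).measurable)
  rw [tendsto_pi_nhds]
  intro y
  have h := clmp_mem U y hU
  have := seq_tendsto_phi ha hU h
  rwa [← phi_eq_clmp hU] at this

lemma phi_intervalIntegrable (ha : 0 < a) (hU : 0 < U) (c d : ℝ) :
    IntervalIntegrable (phi a U) volume c d := by
  apply IntervalIntegrable.mono_fun' (g := fun _ => CC a U) intervalIntegrable_const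
    (phi_measurable ha hU).aestronglyMeasurable
  filter_upwards with x
  rw [Real.norm_eq_abs, abs_of_nonneg (phi_nonneg ha hU x)]
  exact phi_le_CC ha hU x

lemma phi_fix (ha : 0 < a) (hU : 0 < U) {y : ℝ} (hy : y ∈ Icc 0 U) :
    phi a U y = Real.sqrt (2*a*(∫ s in y..U, phi a U s) + 2*(Phi U U - Phi U y)) := by
  have hInt : Tendsto (fun n => ∫ s in y..U, seq a U n s) atTop
      (𝓝 (∫ s in y..U, phi a U s)) := by
    apply intervalIntegral.tendsto_integral_filter_of_dominated_convergence (fun _ => CC a U)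
    · exact Eventually.of_forall (fun n => ((seq_cont n).aestronglyMeasurable).restrict)
    · apply Eventually.of_forall
      intro n
      filter_upwards with x hx
      rw [Set.uIoc_of_le hy.2] at hx
      rw [Real.norm_eq_abs, abs_of_nonneg (seq_nonneg n x)]
      exact seq_le_CC ha hU n ⟨le_trans hy.1 (le_of_lt hx.1), hx.2⟩
    · exact intervalIntegrable_const
    · filter_upwards with x hx
      rw [Set.uIoc_of_le hy.2] at hx
      exact seq_tendsto_phi ha hU ⟨le_trans hy.1 (le_of_lt hx.1), hx.2⟩
  have h2 : Tendsto (fun n => seq a U (n+1) y) atTop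
      (𝓝 (Real.sqrt (2*a*(∫ s in y..U, phi a U s) + 2*(Phi U U - Phi U y)))) := by
    have : (fun n => seq a U (n+1) y) =
        fun n => Real.sqrt (2*a*(∫ s in y..U, seq a U n s) + 2*(Phi U U - Phi U y)) := by
      funext n; rw [seq_succ]; rfl
    rw [this]
    exact (Real.continuous_sqrt.continuousAt.tendsto.comp
      (((hInt.const_mul (2*a)).add tendsto_const_nhds)))
  have h1 : Tendsto (fun n => seq a U (n+1) y) atTop (𝓝 (phi a U y)) :=
    (seq_tendsto_phi ha hU hy).comp (tendsto_add_atTop_nat 1)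
  exact tendsto_nhds_unique h1 h2

lemma phi_contOn (ha : 0 < a) (hU : 0 < U) : Continuous (phi a U) := by
  have hg : Continuous (fun y => Real.sqrt (2*a*(∫ s in y..U, phi a U s)
      + 2*(Phi U U - Phi U y))) := by
    apply Real.continuous_sqrt.comp
    apply Continuous.add
    · apply continuous_const.mul
      have : (fun y => ∫ s in y..U, phi a U s) = fun y => -∫ s in U..y, phi a U s := by
        funext y; rw [intervalIntegral.integral_symm]
      rw [this]
      exact (intervalIntegral.continuous_primitive (phi_intervalIntegrable ha hU) U).neg
    · exact continuous_const.mul (continuous_const.sub Phi_cont)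
  have heq : ∀ y ∈ Icc 0 U, phi a U y = Real.sqrt (2*a*(∫ s in y..U, phi a U s)
      + 2*(Phi U U - Phi U y)) := fun y hy => phi_fix ha hU hy
  have : phi a U = (fun y => phi a U (clmp U y)) := by
    funext y; exact phi_eq_clmp hU y
  rw [this]
  have hcont : ContinuousOn (phi a U) (Icc 0 U) := hg.continuousOn.congr heq
  exact hcont.comp_continuous clmp_cont (fun y => clmp_mem U y hU)


-- the function under the sqrt
noncomputable def GG (a U : ℝ) : ℝ → ℝ :=
  fun y => 2*a*(∫ s in y..U, phi a U s) + 2*(Phi U U - Phi U y)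

lemma seq_one (y : ℝ) : seq a U 1 y = Real.sqrt (2*(Phi U U - Phi U y)) := by
  have : seq a U 1 = TT a U (fun _ => 0) := seq_succ 0
  rw [this]
  unfold TT
  simp

lemma phi_lower (ha : 0 < a) (hU : 0 < U) {y : ℝ} (hy : y ∈ Icc 0 U) :
    Real.sqrt (2*(Phi U U - Phi U y)) ≤ phi a U y := by
  rw [← seq_one]; exact seq_le_phi ha hU 1 hy

lemma phi_pos (ha : 0 < a) (hU : 0 < U) {y : ℝ} (hy : y ∈ Ico 0 U) : 0 < phi a U y := by
  have h1 := Phi_diff_pos hU hy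
  have := phi_lower ha hU ⟨hy.1, le_of_lt hy.2⟩
  have h2 : 0 < Real.sqrt (2*(Phi U U - Phi U y)) := Real.sqrt_pos.2 (by linarith)
  linarith

lemma phi_at_U (ha : 0 < a) (hU : 0 < U) : phi a U U = 0 := by
  rw [phi_fix ha hU (right_mem_Icc.2 (le_of_lt hU))]
  simp

lemma GG_pos (ha : 0 < a) (hU : 0 < U) {y : ℝ} (hy : y ∈ Ico 0 U) : 0 < GG a U y := by
  have h1 := Phi_diff_pos hU hy
  have h2 : 0 ≤ ∫ s in y..U, phi a U s := by
    apply intervalIntegral.integral_nonneg (le_of_lt hy.2)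
    intro x _; exact phi_nonneg ha hU x
  unfold GG; nlinarith

lemma sqrt_GG_eq_phi (ha : 0 < a) (hU : 0 < U) {y : ℝ} (hy : y ∈ Icc 0 U) :
    Real.sqrt (GG a U y) = phi a U y := (phi_fix ha hU hy).symm

lemma hasDerivAt_GG (ha : 0 < a) (hU : 0 < U) (y : ℝ) :
    HasDerivAt (GG a U) (-(2*a*phi a U y) - 2*(U^3*y - y^4)) y := by
  have h1 : HasDerivAt (fun y => ∫ s in y..U, phi a U s) (-phi a U y) y := by
    apply intervalIntegral.integral_hasDerivAt_left (phi_intervalIntegrable ha hU y U)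
    · exact (phi_contOn ha hU).stronglyMeasurable.stronglyMeasurableAtFilter
    · exact (phi_contOn ha hU).continuousAt
  have h2 := (hasDerivAt_Phi (U := U) y).const_mul 2
  have h3 := h1.const_mul (2*a)
  have h4 : HasDerivAt (fun y => 2*(Phi U U - Phi U y)) (-(2*(U^3*y - y^4))) y := by
    have := ((hasDerivAt_Phi (U := U) y).const_sub (Phi U U)).const_mul 2
    exact this.congr_deriv (by ring)
  have := h3.add h4
  exact this.congr_deriv (by ring)

-- extension below 0 and the derivative function
noncomputable def phiext (a U : ℝ) : ℝ → ℝ :=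
  fun y => if y ≤ 0 then phi a U 0 - a*y else phi a U y

noncomputable def phid (a U : ℝ) : ℝ → ℝ :=
  fun y => -a - (U^3*(max y 0) - (max y 0)^4)/(phi a U (max y 0))

lemma phiext_eq_phi (ha : 0 < a) (hU : 0 < U) {y : ℝ} (hy : 0 ≤ y) :
    phiext a U y = phi a U y := by
  unfold phiext
  rcases eq_or_lt_of_le hy with h | h
  · simp [← h]
  · rw [if_neg (not_le.2 h)]

lemma phiext_cont (ha : 0 < a) (hU : 0 < U) : Continuous (phiext a U) := by
  unfold phiext
  apply Continuous.if_le
  · exact continuous_const.sub (continuous_const.mul continuous_id)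
  · exact phi_contOn ha hU
  · exact continuous_id
  · exact continuous_const
  · intro y hy; simp [hy]

lemma phiext_pos (ha : 0 < a) (hU : 0 < U) {y : ℝ} (hy : y < U) : 0 < phiext a U y := by
  unfold phiext
  by_cases h : y ≤ 0
  · rw [if_pos h]
    have h0 : 0 < phi a U 0 := phi_pos ha hU ⟨le_refl 0, hU⟩
    nlinarith
  · rw [if_neg h]
    exact phi_pos ha hU ⟨le_of_lt (not_le.1 h), hy⟩

lemma hasDerivAt_phiext (ha : 0 < a) (hU : 0 < U) {y : ℝ} (hy : y < U) :
    HasDerivAt (phiext a U) (phid a U y) y := by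
  have hlin : ∀ z : ℝ, HasDerivAt (fun w => phi a U 0 - a*w) (-a) z := by
    intro z
    simpa using (hasDerivAt_id z).const_mul a |>.const_sub (phi a U 0)
  rcases lt_trichotomy y 0 with h | h | h
  · have : phid a U y = -a := by
      unfold phid; rw [max_eq_right (le_of_lt h)]; simp
    rw [this]
    apply (hlin y).congr_of_eventuallyEq
    filter_upwards [Iio_mem_nhds h] with z hz
    unfold phiext; rw [if_pos (le_of_lt hz)]
  · subst h
    have hsqrt : HasDerivAt (fun z => Real.sqrt (GG a U z))
        (1 / (2 * Real.sqrt (GG a U 0)) * (-(2*a*phi a U 0) - 2*(U^3*0 - 0^4))) 0 := by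
      exact (Real.hasDerivAt_sqrt (ne_of_gt (GG_pos ha hU ⟨le_refl 0, hU⟩))).comp 0
        (hasDerivAt_GG ha hU 0)
    have hval : Real.sqrt (GG a U 0) = phi a U 0 :=
      sqrt_GG_eq_phi ha hU ⟨le_refl 0, le_of_lt hU⟩
    have hphi0 : 0 < phi a U 0 := phi_pos ha hU ⟨le_refl 0, hU⟩
    have hder : (1 / (2 * Real.sqrt (GG a U 0)) * (-(2*a*phi a U 0) - 2*(U^3*0 - 0^4))) = -a := by
      rw [hval]; field_simp; ring
    rw [hder] at hsqrt
    have hright : HasDerivWithinAt (phiext a U) (-a) (Icc 0 U) 0 := by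
      apply (hsqrt.hasDerivWithinAt (s := Icc 0 U)).congr
      · intro z hz
        rw [phiext_eq_phi ha hU hz.1, ← sqrt_GG_eq_phi ha hU hz]
      · rw [phiext_eq_phi ha hU (le_refl 0), ← sqrt_GG_eq_phi ha hU ⟨le_refl 0, le_of_lt hU⟩]
    have hleft : HasDerivWithinAt (phiext a U) (-a) (Iic 0) 0 := by
      apply ((hlin 0).hasDerivWithinAt (s := Iic 0)).congr
      · intro z hz; unfold phiext; rw [if_pos (mem_Iic.1 hz)]
      · simp [phiext]
    have huniv : HasDerivWithinAt (phiext a U) (-a) (Iic 0 ∪ Icc 0 U) 0 := hleft.union hright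
    have hmem : Iic 0 ∪ Icc 0 U ∈ 𝓝 (0:ℝ) := by
      have : Iic U ∈ 𝓝 (0:ℝ) := Iic_mem_nhds hU
      apply mem_of_superset this
      intro z hz
      by_cases h : z ≤ 0
      · exact Or.inl h
      · exact Or.inr ⟨le_of_lt (not_le.1 h), hz⟩
    have : phid a U 0 = -a := by unfold phid; simp
    rw [this]
    exact huniv.hasDerivAt hmem
  · have hmem : y ∈ Ico 0 U := ⟨le_of_lt h, hy⟩
    have hsqrt : HasDerivAt (fun z => Real.sqrt (GG a U z))
        (1 / (2 * Real.sqrt (GG a U y)) * (-(2*a*phi a U y) - 2*(U^3*y - y^4))) y := by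
      exact (Real.hasDerivAt_sqrt (ne_of_gt (GG_pos ha hU hmem))).comp y (hasDerivAt_GG ha hU y)
    have hval : Real.sqrt (GG a U y) = phi a U y := sqrt_GG_eq_phi ha hU ⟨hmem.1, le_of_lt hy⟩
    have hphiy : 0 < phi a U y := phi_pos ha hU hmem
    have hder : (1 / (2 * Real.sqrt (GG a U y)) * (-(2*a*phi a U y) - 2*(U^3*y - y^4)))
        = phid a U y := by
      rw [hval]; unfold phid; rw [max_eq_left (le_of_lt h)]
      field_simp
    rw [hder] at hsqrt
    apply hsqrt.congr_of_eventuallyEq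
    filter_upwards [Ioo_mem_nhds h hy] with z hz
    rw [phiext_eq_phi ha hU (le_of_lt hz.1), ← sqrt_GG_eq_phi ha hU ⟨le_of_lt hz.1, le_of_lt hz.2⟩]

lemma phid_contAt (ha : 0 < a) (hU : 0 < U) {y : ℝ} (hy : y < U) :
    ContinuousAt (phid a U) y := by
  unfold phid
  have hmax : ContinuousAt (fun z : ℝ => max z 0) y := (continuous_id.max continuous_const).continuousAt
  have hmem : max y 0 ∈ Ico 0 U := by
    constructor
    · exact le_max_right _ _
    · rcases le_total y 0 with h | h
      · rw [max_eq_right h]; exact hU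
      · rw [max_eq_left h]; exact hy
  have hphi : 0 < phi a U (max y 0) := phi_pos ha hU hmem
  apply ContinuousAt.sub continuousAt_const
  apply ContinuousAt.div
  · exact (ContinuousAt.sub ((continuousAt_const).mul hmax)
      (hmax.pow 4))
  · exact ((phi_contOn ha hU).continuousAt).comp hmax
  · exact ne_of_gt hphi

lemma phid_mul_phi (ha : 0 < a) (hU : 0 < U) {y : ℝ} (hy : y ∈ Ico 0 U) :
    phid a U y * phiext a U y + a * phiext a U y + U^3 * y = y^4 := by
  have hmax : max y 0 = y := max_eq_left hy.1
  have hphi : 0 < phi a U y := phi_pos ha hU hy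
  rw [phiext_eq_phi ha hU hy.1]
  unfold phid
  rw [hmax]
  field_simp
  ring


noncomputable def II (a U : ℝ) : ℝ → ℝ := fun y => ∫ s in y..U, phi a U s
noncomputable def mphi (U : ℝ) : ℝ := Real.sqrt (U^3/2)
noncomputable def mI (U : ℝ) : ℝ := Real.sqrt (mphi U / 2)
noncomputable def c1 (a U : ℝ) : ℝ := Real.sqrt (2*a)/2 + Real.sqrt (3*U^3)/(2*mI U)
noncomputable def c2 (a U : ℝ) : ℝ := Real.sqrt (2*a) * c1 a U + Real.sqrt (3*U^3)

lemma mphi_pos (hU : 0 < U) : 0 < mphi U := Real.sqrt_pos.2 (by positivity)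
lemma mI_pos (hU : 0 < U) : 0 < mI U := Real.sqrt_pos.2 (by have := mphi_pos hU; positivity)
lemma c1_pos (ha : 0 < a) (hU : 0 < U) : 0 < c1 a U := by
  have h1 : 0 < Real.sqrt (2*a) := Real.sqrt_pos.2 (by linarith)
  have h2 : 0 < Real.sqrt (3*U^3) := Real.sqrt_pos.2 (by positivity)
  have := mI_pos hU
  unfold c1; positivity
lemma c2_pos (ha : 0 < a) (hU : 0 < U) : 0 < c2 a U := by
  have h1 : 0 < Real.sqrt (2*a) := Real.sqrt_pos.2 (by linarith)
  have h2 : 0 < Real.sqrt (3*U^3) := Real.sqrt_pos.2 (by positivity)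
  have := c1_pos ha hU
  unfold c2; positivity

lemma Phi_diff_ub (hU : 0 < U) {y : ℝ} (hy : y ∈ Icc 0 U) :
    2*(Phi U U - Phi U y) ≤ 3*U^3*(U-y)^2 := by
  have key : 3*U^3*(U-y)^2 - 2*(Phi U U - Phi U y)
      = (2/5)*(U-y)^3*(y^2+3*y*U+6*U^2) := by unfold Phi; ring
  nlinarith [pow_nonneg (sub_nonneg.2 hy.2) 3, sq_nonneg y,
    mul_nonneg (mul_nonneg hy.1 (le_of_lt hU)) (le_of_lt hU), sq_nonneg U,
    mul_nonneg hy.1 (le_of_lt hU), pow_pos hU 2,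
    mul_nonneg (pow_nonneg (sub_nonneg.2 hy.2) 3)
      (by nlinarith [sq_nonneg y, mul_nonneg hy.1 (le_of_lt hU), sq_nonneg U] :
        (0:ℝ) ≤ y^2+3*y*U+6*U^2)]

lemma Phi_diff_lb (hU : 0 < U) {y : ℝ} (hy : y ∈ Icc 0 U) :
    U^3/2*(U-y)^2 ≤ 2*(Phi U U - Phi U y) := by
  have key : 2*(Phi U U - Phi U y) - U^3/2*(U-y)^2
      = (U-y)^2*(4*y^3+8*y^2*U+12*y*U^2+U^3)/10 := by unfold Phi; ring
  have h1 : (0:ℝ) ≤ 4*y^3+8*y^2*U+12*y*U^2+U^3 := by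
    have := hy.1
    positivity
  nlinarith [mul_nonneg (sq_nonneg (U-y)) h1]

lemma phi_lb (ha : 0 < a) (hU : 0 < U) {y : ℝ} (hy : y ∈ Icc 0 U) :
    mphi U * (U - y) ≤ phi a U y := by
  have h1 : Real.sqrt (U^3/2*(U-y)^2) ≤ Real.sqrt (2*(Phi U U - Phi U y)) :=
    Real.sqrt_le_sqrt (Phi_diff_lb hU hy)
  have h2 : Real.sqrt (U^3/2*(U-y)^2) = mphi U * (U - y) := by
    rw [Real.sqrt_mul (by positivity) ((U-y)^2), Real.sqrt_sq (sub_nonneg.2 hy.2)]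
    rfl
  calc mphi U * (U - y) = _ := h2.symm
    _ ≤ _ := h1
    _ ≤ _ := phi_lower ha hU hy

lemma sqrt_Phi_diff_ub (hU : 0 < U) {y : ℝ} (hy : y ∈ Icc 0 U) :
    Real.sqrt (2*(Phi U U - Phi U y)) ≤ Real.sqrt (3*U^3) * (U - y) := by
  have h1 := Real.sqrt_le_sqrt (Phi_diff_ub hU hy)
  have h2 : Real.sqrt (3*U^3*(U-y)^2) = Real.sqrt (3*U^3) * (U - y) := by
    rw [Real.sqrt_mul (by positivity) ((U-y)^2), Real.sqrt_sq (sub_nonneg.2 hy.2)]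
  calc _ ≤ _ := h1
    _ = _ := h2

lemma II_cont (ha : 0 < a) (hU : 0 < U) : Continuous (II a U) := by
  have : II a U = fun y => -∫ s in U..y, phi a U s := by
    funext y; rw [show II a U y = ∫ s in y..U, phi a U s from rfl, intervalIntegral.integral_symm]
  rw [this]
  exact (intervalIntegral.continuous_primitive (phi_intervalIntegrable ha hU) U).neg

lemma II_nonneg (ha : 0 < a) (hU : 0 < U) {y : ℝ} (hy : y ∈ Icc 0 U) : 0 ≤ II a U y :=
  intervalIntegral.integral_nonneg hy.2 (fun x _ => phi_nonneg ha hU x)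

lemma II_lb (ha : 0 < a) (hU : 0 < U) {y : ℝ} (hy : y ∈ Icc 0 U) :
    mphi U / 2 * (U - y)^2 ≤ II a U y := by
  have heval : (∫ s in y..U, mphi U * (U - s)) = mphi U / 2 * (U - y)^2 := by
    have hF : ∀ s ∈ uIcc y U, HasDerivAt (fun s : ℝ => -(mphi U) * (U - s)^2/2)
        (mphi U * (U - s)) s := by
      intro s _
      have h := (((hasDerivAt_id s).const_sub U).pow 2).const_mul (-(mphi U))
      have h2 := h.div_const 2
      exact h2.congr_deriv (by simp; ring)
    have := intervalIntegral.integral_eq_sub_of_hasDerivAt hF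
      (Continuous.intervalIntegrable (by continuity) _ _)
    rw [this]; ring
  rw [← heval]
  apply intervalIntegral.integral_mono_on hy.2 (Continuous.intervalIntegrable (by continuity) _ _)
    (phi_intervalIntegrable ha hU _ _)
  intro x hx
  exact phi_lb ha hU ⟨le_trans hy.1 hx.1, hx.2⟩

lemma sqrt_II_lb (ha : 0 < a) (hU : 0 < U) {y : ℝ} (hy : y ∈ Icc 0 U) :
    mI U * (U - y) ≤ Real.sqrt (II a U y) := by
  have h1 : Real.sqrt (mphi U / 2 * (U - y)^2) ≤ Real.sqrt (II a U y) :=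
    Real.sqrt_le_sqrt (II_lb ha hU hy)
  have h2 : Real.sqrt (mphi U / 2 * (U - y)^2) = mI U * (U - y) := by
    have hm := mphi_pos hU
    rw [Real.sqrt_mul (by positivity) ((U-y)^2), Real.sqrt_sq (sub_nonneg.2 hy.2)]
    rfl
  linarith [h2 ▸ h1]

lemma II_pos (ha : 0 < a) (hU : 0 < U) {y : ℝ} (hy : y ∈ Ico 0 U) : 0 < II a U y := by
  have := II_lb ha hU ⟨hy.1, le_of_lt hy.2⟩
  have h1 : 0 < mphi U / 2 * (U - y)^2 := by
    have := mphi_pos hU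
    have h2 : 0 < U - y := sub_pos.2 hy.2
    positivity
  linarith

lemma hasDerivAt_II (ha : 0 < a) (hU : 0 < U) (y : ℝ) :
    HasDerivAt (II a U) (-phi a U y) y := by
  apply intervalIntegral.integral_hasDerivAt_left (phi_intervalIntegrable ha hU y U)
  · exact (phi_contOn ha hU).stronglyMeasurable.stronglyMeasurableAtFilter
  · exact (phi_contOn ha hU).continuousAt

-- phi y ≤ √(2a)·√(II y) + √(3U³)(U−y) on Icc 0 U
lemma phi_split_ub (ha : 0 < a) (hU : 0 < U) {y : ℝ} (hy : y ∈ Icc 0 U) :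
    phi a U y ≤ Real.sqrt (2*a) * Real.sqrt (II a U y) + Real.sqrt (3*U^3) * (U - y) := by
  rw [phi_fix ha hU hy]
  have h0 : (2*a*(∫ s in y..U, phi a U s)) = 2*a*II a U y := rfl
  have h1 : Real.sqrt (2*a*II a U y + 2*(Phi U U - Phi U y))
      ≤ Real.sqrt (2*a*II a U y) + Real.sqrt (2*(Phi U U - Phi U y)) := by
    apply sqrt_add_le
    · have := II_nonneg ha hU hy; positivity
    · have := Phi_diff_nonneg hU hy; linarith
  have h2 : Real.sqrt (2*a*II a U y) = Real.sqrt (2*a) * Real.sqrt (II a U y) :=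
    Real.sqrt_mul (by linarith) _
  calc Real.sqrt (2*a*(∫ s in y..U, phi a U s) + 2*(Phi U U - Phi U y))
      = Real.sqrt (2*a*II a U y + 2*(Phi U U - Phi U y)) := by rw [h0]
    _ ≤ _ := h1
    _ = Real.sqrt (2*a) * Real.sqrt (II a U y) + Real.sqrt (2*(Phi U U - Phi U y)) := by rw [h2]
    _ ≤ _ := by have := sqrt_Phi_diff_ub hU hy; linarith

lemma HH_mono (ha : 0 < a) (hU : 0 < U) :
    MonotoneOn (fun y => Real.sqrt (II a U y) + c1 a U * y) (Icc 0 U) := by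
  have hderiv : ∀ y ∈ Ioo 0 U, HasDerivAt (fun y => Real.sqrt (II a U y) + c1 a U * y)
      (1/(2*Real.sqrt (II a U y)) * (-phi a U y) + c1 a U) y := by
    intro y hy
    have hII : II a U y ≠ 0 := ne_of_gt (II_pos ha hU ⟨le_of_lt hy.1, hy.2⟩)
    have h2 : HasDerivAt (fun y : ℝ => c1 a U * y) (c1 a U) y := by
      simpa using (hasDerivAt_id y).const_mul (c1 a U)
    exact ((Real.hasDerivAt_sqrt hII).comp y (hasDerivAt_II ha hU y)).add h2
  apply monotoneOn_of_deriv_nonneg (convex_Icc 0 U)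
  · apply ContinuousOn.add
    · exact (Real.continuous_sqrt.comp (II_cont ha hU)).continuousOn
    · exact (continuous_const.mul continuous_id).continuousOn
  · rw [interior_Icc]
    intro y hy
    exact (hderiv y hy).differentiableAt.differentiableWithinAt
  · rw [interior_Icc]
    intro y hy
    rw [(hderiv y hy).deriv]
    have hyIcc : y ∈ Icc 0 U := ⟨le_of_lt hy.1, le_of_lt hy.2⟩
    have hsq : 0 < Real.sqrt (II a U y) :=
      Real.sqrt_pos.2 (II_pos ha hU ⟨le_of_lt hy.1, hy.2⟩)
    have hUb := phi_split_ub ha hU hyIcc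
    have hlb := sqrt_II_lb ha hU hyIcc
    have hUy : 0 < U - y := sub_pos.2 hy.2
    have hmI := mI_pos hU
    have hs3 : 0 ≤ Real.sqrt (3*U^3) := Real.sqrt_nonneg _
    -- phi/(2√II) ≤ √(2a)/2 + √(3U³)/(2 mI) = c1
    have hkey : phi a U y / (2*Real.sqrt (II a U y)) ≤ c1 a U := by
      have h1 : phi a U y / (2*Real.sqrt (II a U y))
          ≤ (Real.sqrt (2*a) * Real.sqrt (II a U y) + Real.sqrt (3*U^3) * (U - y))
            / (2*Real.sqrt (II a U y)) := by
        apply div_le_div_of_nonneg_right hUb (by linarith) |>.trans_eq rfl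
      have h2 : (Real.sqrt (2*a) * Real.sqrt (II a U y) + Real.sqrt (3*U^3) * (U - y))
            / (2*Real.sqrt (II a U y))
          = Real.sqrt (2*a)/2 + Real.sqrt (3*U^3) * (U - y) / (2*Real.sqrt (II a U y)) := by
        field_simp
      have h3 : Real.sqrt (3*U^3) * (U - y) / (2*Real.sqrt (II a U y))
          ≤ Real.sqrt (3*U^3) / (2 * mI U) := by
        rw [div_le_div_iff₀ (by linarith) (by linarith)]
        have : mI U * (U - y) ≤ Real.sqrt (II a U y) := hlb
        nlinarith
      unfold c1
      calc phi a U y / (2*Real.sqrt (II a U y)) ≤ _ := h1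
        _ = _ := h2
        _ ≤ _ := by linarith
    have : phi a U y / (2*Real.sqrt (II a U y)) = -(1/(2*Real.sqrt (II a U y)) * (-phi a U y)) := by
      field_simp
    linarith [hkey, this ▸ hkey]

lemma phi_ub (ha : 0 < a) (hU : 0 < U) {y : ℝ} (hy : y ∈ Icc 0 U) :
    phi a U y ≤ c2 a U * (U - y) := by
  have hIIU : II a U U = 0 := by unfold II; simp
  have hmono := HH_mono ha hU hy (right_mem_Icc.2 (le_of_lt hU)) hy.2
  simp only [hIIU, Real.sqrt_zero, zero_add] at hmono
  -- √(II y) ≤ c1 (U − y)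
  have hH : Real.sqrt (II a U y) ≤ c1 a U * (U - y) := by linarith
  have hIub : II a U y ≤ (c1 a U)^2 * (U - y)^2 := by
    have h1 : II a U y = (Real.sqrt (II a U y))^2 := (Real.sq_sqrt (II_nonneg ha hU hy)).symm
    rw [h1]
    have h2 : (Real.sqrt (II a U y))^2 ≤ (c1 a U * (U - y))^2 := by
      apply pow_le_pow_left₀ (Real.sqrt_nonneg _) hH
    calc _ ≤ (c1 a U * (U-y))^2 := h2
      _ = _ := by ring
  have hsplit := phi_split_ub ha hU hy
  have hsqII : Real.sqrt (II a U y) ≤ c1 a U * (U - y) := hH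
  have h2a : 0 ≤ Real.sqrt (2*a) := Real.sqrt_nonneg _
  unfold c2
  nlinarith [mul_le_mul_of_nonneg_left hsqII h2a]


noncomputable def rho (a U : ℝ) : ℝ → ℝ := fun y => ∫ s in (0:ℝ)..y, (phiext a U s)⁻¹

lemma phiextInv_contOn (ha : 0 < a) (hU : 0 < U) :
    ContinuousOn (fun s => (phiext a U s)⁻¹) (Iio U) :=
  ContinuousOn.inv₀ (phiext_cont ha hU).continuousOn
    (fun s hs => ne_of_gt (phiext_pos ha hU hs))

lemma phiextInv_intInt (ha : 0 < a) (hU : 0 < U) {c d : ℝ} (hc : c < U) (hd : d < U) :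
    IntervalIntegrable (fun s => (phiext a U s)⁻¹) volume c d := by
  apply ContinuousOn.intervalIntegrable
  apply (phiextInv_contOn ha hU).mono
  intro x hx
  rcases le_total c d with h | h
  · rw [uIcc_of_le h] at hx; exact lt_of_le_of_lt hx.2 hd
  · rw [uIcc_of_ge h] at hx; exact lt_of_le_of_lt hx.2 hc

lemma hasDerivAt_rho (ha : 0 < a) (hU : 0 < U) {y : ℝ} (hy : y < U) :
    HasDerivAt (rho a U) (phiext a U y)⁻¹ y := by
  apply intervalIntegral.integral_hasDerivAt_right (phiextInv_intInt ha hU hU hy)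
  · exact (phiextInv_contOn ha hU).stronglyMeasurableAtFilter isOpen_Iio y hy
  · exact (phiextInv_contOn ha hU).continuousAt (Iio_mem_nhds hy)

lemma rho_strictMonoOn (ha : 0 < a) (hU : 0 < U) : StrictMonoOn (rho a U) (Iio U) := by
  apply strictMonoOn_of_deriv_pos (convex_Iio U)
  · intro y hy
    exact (hasDerivAt_rho ha hU hy).continuousAt.continuousWithinAt
  · rw [interior_Iio]
    intro y hy
    rw [(hasDerivAt_rho ha hU hy).deriv]
    exact inv_pos.2 (phiext_pos ha hU hy)

lemma rho_zero : rho a U 0 = 0 := intervalIntegral.integral_same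

lemma rho_le_rho (ha : 0 < a) (hU : 0 < U) {x y : ℝ} (hx : x < U) (hy : y < U) (h : x ≤ y) :
    rho a U x ≤ rho a U y := by
  rcases eq_or_lt_of_le h with h | h
  · rw [h]
  · exact le_of_lt (rho_strictMonoOn ha hU hx hy h)

lemma rho_surj_up (ha : 0 < a) (hU : 0 < U) (M : ℝ) :
    ∃ y, 0 ≤ y ∧ y < U ∧ M ≤ rho a U y := by
  set M' := max M 0 with hM'
  have hM'0 : 0 ≤ M' := le_max_right _ _
  have hc2 := c2_pos ha hU
  set y := U - U*Real.exp (-(c2 a U)*M') with hy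
  have hexp : 0 < Real.exp (-(c2 a U)*M') := Real.exp_pos _
  have hexple : Real.exp (-(c2 a U)*M') ≤ 1 := by
    apply Real.exp_le_one_iff.2
    nlinarith
  have hy0 : 0 ≤ y := by rw [hy]; nlinarith
  have hyU : y < U := by rw [hy]; nlinarith
  refine ⟨y, hy0, hyU, ?_⟩
  have hUy : U - y = U*Real.exp (-(c2 a U)*M') := by rw [hy]; ring
  -- lower bound integrand
  have hcomp : ∀ s ∈ Icc 0 y, (c2 a U)⁻¹ * (U - s)⁻¹ ≤ (phiext a U s)⁻¹ := by
    intro s hs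
    have hsU : s < U := lt_of_le_of_lt hs.2 hyU
    have hpos := phiext_pos ha hU hsU
    have hub : phiext a U s ≤ c2 a U * (U - s) := by
      rw [phiext_eq_phi ha hU hs.1]
      exact phi_ub ha hU ⟨hs.1, le_of_lt hsU⟩
    have h1 : (c2 a U * (U - s))⁻¹ ≤ (phiext a U s)⁻¹ := by
      apply inv_anti₀ hpos hub
    rw [mul_inv] at h1
    exact h1
  have hint1 : IntervalIntegrable (fun s => (c2 a U)⁻¹ * (U - s)⁻¹) volume 0 y := by
    apply ContinuousOn.intervalIntegrable
    apply ContinuousOn.mul continuousOn_const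
    apply ContinuousOn.inv₀ (by fun_prop)
    intro x hx
    rw [uIcc_of_le hy0] at hx
    have : x < U := lt_of_le_of_lt hx.2 hyU
    exact ne_of_gt (by linarith)
  have hmono : (∫ s in (0:ℝ)..y, (c2 a U)⁻¹ * (U - s)⁻¹) ≤ rho a U y := by
    apply intervalIntegral.integral_mono_on hy0 hint1 (phiextInv_intInt ha hU hU hyU) hcomp
  have heval : (∫ s in (0:ℝ)..y, (c2 a U)⁻¹ * (U - s)⁻¹)
      = (c2 a U)⁻¹ * (Real.log U - Real.log (U - y)) := by
    have hF : ∀ s ∈ uIcc (0:ℝ) y, HasDerivAt (fun s => -(c2 a U)⁻¹ * Real.log (U - s))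
        ((c2 a U)⁻¹ * (U - s)⁻¹) s := by
      intro s hs
      rw [uIcc_of_le hy0] at hs
      have hsU : U - s ≠ 0 := by
        have : s < U := lt_of_le_of_lt hs.2 hyU
        intro h; linarith [this]
      have hlog : HasDerivAt (fun s : ℝ => Real.log (U - s)) ((U - s)⁻¹ * (-1)) s :=
        (Real.hasDerivAt_log hsU).comp s ((hasDerivAt_id s).const_sub U)
      have := hlog.const_mul (-(c2 a U)⁻¹)
      exact this.congr_deriv (by ring)
    rw [intervalIntegral.integral_eq_sub_of_hasDerivAt hF hint1]
    simp
    ring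
  rw [heval] at hmono
  have hlog : Real.log (U - y) = Real.log U + (-(c2 a U)*M') := by
    rw [hUy, Real.log_mul (ne_of_gt hU) (ne_of_gt hexp), Real.log_exp]
  have : (c2 a U)⁻¹ * (Real.log U - Real.log (U - y)) = M' := by
    rw [hlog]; field_simp; ring
  rw [this] at hmono
  exact le_trans (le_max_left M 0) hmono

lemma rho_surj_down (ha : 0 < a) (hU : 0 < U) (M : ℝ) :
    ∃ y, y ≤ 0 ∧ rho a U y ≤ M := by
  set v0 := phi a U 0 with hv0
  have hv0pos : 0 < v0 := phi_pos ha hU ⟨le_refl 0, hU⟩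
  set M'' := min M 0 with hM''
  have hM''0 : M'' ≤ 0 := min_le_right _ _
  set y := v0/a * (1 - Real.exp (-(a*M''))) with hy
  have hexp : 0 < Real.exp (-(a*M'')) := Real.exp_pos _
  have hexpge : 1 ≤ Real.exp (-(a*M'')) := by
    apply Real.one_le_exp_iff.2
    nlinarith
  have hy0 : y ≤ 0 := by
    rw [hy]
    apply mul_nonpos_of_nonneg_of_nonpos
    · positivity
    · linarith
  refine ⟨y, hy0, ?_⟩
  have hkey : v0 - a*y = v0 * Real.exp (-(a*M'')) := by
    rw [hy]; field_simp; ring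
  -- pointwise on [y, 0], phiext = v0 - a s
  have heqOn : EqOn (fun s => (phiext a U s)⁻¹) (fun s => (v0 - a*s)⁻¹) (uIcc 0 y) := by
    intro s hs
    rw [uIcc_of_ge hy0] at hs
    simp only
    unfold phiext
    rw [if_pos hs.2]
  have hint1 : IntervalIntegrable (fun s => (v0 - a*s)⁻¹) volume 0 y := by
    apply ContinuousOn.intervalIntegrable
    apply ContinuousOn.inv₀ (by fun_prop)
    intro x hx
    rw [uIcc_of_ge hy0] at hx
    have : 0 < v0 - a*x := by nlinarith [hx.2]
    exact ne_of_gt this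
  have heq : rho a U y = ∫ s in (0:ℝ)..y, (v0 - a*s)⁻¹ :=
    intervalIntegral.integral_congr heqOn
  have heval : (∫ s in (0:ℝ)..y, (v0 - a*s)⁻¹)
      = -(a⁻¹) * Real.log (v0 - a*y) - (-(a⁻¹) * Real.log v0) := by
    have hF : ∀ s ∈ uIcc (0:ℝ) y, HasDerivAt (fun s => -(a⁻¹) * Real.log (v0 - a*s))
        ((v0 - a*s)⁻¹) s := by
      intro s hs
      rw [uIcc_of_ge hy0] at hs
      have hpos : 0 < v0 - a*s := by nlinarith [hs.2]
      have hlog : HasDerivAt (fun s : ℝ => Real.log (v0 - a*s)) ((v0 - a*s)⁻¹ * (-a)) s := by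
        apply (Real.hasDerivAt_log (ne_of_gt hpos)).comp s (h := fun s => v0 - a*s)
        simpa using ((hasDerivAt_id s).const_mul a).const_sub v0
      have := hlog.const_mul (-(a⁻¹))
      exact this.congr_deriv (by field_simp)
    have := intervalIntegral.integral_eq_sub_of_hasDerivAt hF hint1
    rw [this]
    norm_num
  rw [heq, heval, hkey, Real.log_mul (ne_of_gt hv0pos) (ne_of_gt hexp), Real.log_exp]
  have : -(a⁻¹) * (Real.log v0 + -(a*M'')) - (-(a⁻¹) * Real.log v0) = M'' := by
    field_simp; ring
  rw [this]
  exact min_le_left _ _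

lemma exists_rho_eq (ha : 0 < a) (hU : 0 < U) (τ : ℝ) :
    ∃ y, y < U ∧ rho a U y = τ := by
  obtain ⟨y1, hy10, hy1⟩ := rho_surj_down ha hU τ
  obtain ⟨y2, hy20, hy2U, hy2⟩ := rho_surj_up ha hU τ
  have h12 : y1 ≤ y2 := le_trans hy10 hy20
  have hsub : Icc y1 y2 ⊆ Iio U := fun x hx => lt_of_le_of_lt hx.2 hy2U
  have hcont : ContinuousOn (rho a U) (Icc y1 y2) := by
    intro x hx
    exact (hasDerivAt_rho ha hU (hsub hx)).continuousAt.continuousWithinAt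
  have := intermediate_value_Icc h12 hcont
  have hτ : τ ∈ Icc (rho a U y1) (rho a U y2) := ⟨hy1, hy2⟩
  obtain ⟨y, hy, hyeq⟩ := this hτ
  exact ⟨y, hsub hy, hyeq⟩

section w
variable {w : ℝ → ℝ} (ha : 0 < a) (hU : 0 < U)
  (hw : ∀ τ, w τ < U ∧ rho a U (w τ) = τ)
include ha hU hw

lemma w_strictMono : StrictMono w := by
  intro τ τ' h
  have h1 := (hw τ).2
  have h2 := (hw τ').2
  by_contra hcon
  push_neg at hcon
  have : rho a U (w τ') ≤ rho a U (w τ) :=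
    rho_le_rho ha hU (hw τ').1 (hw τ).1 hcon
  rw [h1, h2] at this
  linarith

lemma w_eq (y : ℝ) (hy : y < U) : w (rho a U y) = y := by
  have h1 := (hw (rho a U y)).2
  exact (rho_strictMonoOn ha hU).injOn (hw (rho a U y)).1 hy h1

lemma w_zero : w 0 = 0 := by
  have := w_eq ha hU hw 0 hU
  rwa [rho_zero] at this

lemma w_cont : Continuous w := by
  rw [continuous_iff_continuousAt]
  intro τ
  rw [ContinuousAt, tendsto_order]
  constructor
  · intro b hb
    have hbU : b < U := lt_trans hb (hw τ).1
    have h1 : rho a U b < τ := by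
      rw [← (hw τ).2]
      exact rho_strictMonoOn ha hU hbU (hw τ).1 hb
    filter_upwards [Ioi_mem_nhds h1] with τ' hτ'
    by_contra hcon
    push_neg at hcon
    have : rho a U (w τ') ≤ rho a U b := rho_le_rho ha hU (hw τ').1 hbU hcon
    rw [(hw τ').2] at this
    exact absurd hτ' (not_lt.2 this)
  · intro b hb
    rcases lt_or_ge b U with hbU | hbU
    · have h1 : τ < rho a U b := by
        rw [← (hw τ).2]
        exact rho_strictMonoOn ha hU (hw τ).1 hbU hb
      filter_upwards [Iio_mem_nhds h1] with τ' hτ'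
      by_contra hcon
      push_neg at hcon
      have : rho a U b ≤ rho a U (w τ') := rho_le_rho ha hU hbU (hw τ').1 hcon
      rw [(hw τ').2] at this
      exact absurd hτ' (not_lt.2 this)
    · filter_upwards with τ'
      exact lt_of_lt_of_le (hw τ').1 hbU

lemma w_hasDeriv (τ : ℝ) : HasDerivAt w (phiext a U (w τ)) τ := by
  have h := HasDerivAt.of_local_left_inverse ((w_cont ha hU hw).continuousAt)
    (hasDerivAt_rho ha hU (hw τ).1)
    (ne_of_gt (inv_pos.2 (phiext_pos ha hU (hw τ).1)))
    (Eventually.of_forall (fun τ' => (hw τ').2))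
  rwa [inv_inv] at h

lemma w_deriv_eq : deriv w = fun τ => phiext a U (w τ) :=
  funext fun τ => (w_hasDeriv ha hU hw τ).deriv

lemma w_hasDeriv2 (τ : ℝ) :
    HasDerivAt (fun τ => phiext a U (w τ)) (phid a U (w τ) * phiext a U (w τ)) τ :=
  (hasDerivAt_phiext ha hU (hw τ).1).comp τ (w_hasDeriv ha hU hw τ)

lemma w_deriv2_eq : deriv (deriv w) = fun τ => phid a U (w τ) * phiext a U (w τ) := by
  rw [w_deriv_eq ha hU hw]
  exact funext fun τ => (w_hasDeriv2 ha hU hw τ).deriv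

lemma w_nonneg {τ : ℝ} (hτ : 0 ≤ τ) : 0 ≤ w τ := by
  rcases eq_or_lt_of_le hτ with h | h
  · rw [← h, w_zero ha hU hw]
  · rw [← w_zero ha hU hw]
    exact le_of_lt (w_strictMono ha hU hw h)

lemma w_pos {τ : ℝ} (hτ : 0 < τ) : 0 < w τ := by
  rw [← w_zero ha hU hw]
  exact w_strictMono ha hU hw hτ

lemma w_tendsto : Tendsto w atTop (𝓝 U) := by
  have hmono : Monotone w := (w_strictMono ha hU hw).monotone
  have hbdd : BddAbove (Set.range w) := ⟨U, by rintro x ⟨τ, rfl⟩; exact le_of_lt (hw τ).1⟩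
  have h := tendsto_atTop_ciSup hmono hbdd
  have hLU : (⨆ τ, w τ) = U := by
    apply le_antisymm
    · exact ciSup_le (fun τ => le_of_lt (hw τ).1)
    · by_contra hcon
      push_neg at hcon
      have hle : ∀ τ, w τ ≤ ⨆ τ, w τ := fun τ => le_ciSup hbdd τ
      have : ∀ τ : ℝ, τ ≤ rho a U (⨆ τ, w τ) := by
        intro τ
        rw [← (hw τ).2]
        exact rho_le_rho ha hU (hw τ).1 hcon (hle τ)
      linarith [this (rho a U (⨆ τ, w τ) + 1)]
  rwa [hLU] at h

lemma w_deriv_tendsto : Tendsto (deriv w) atTop (𝓝 0) := by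
  rw [w_deriv_eq ha hU hw]
  have hphiU : phiext a U U = 0 := by
    rw [phiext_eq_phi ha hU (le_of_lt hU)]
    exact phi_at_U ha hU
  have := ((phiext_cont ha hU).continuousAt (x := U)).tendsto.comp (w_tendsto ha hU hw)
  rwa [hphiU] at this

end w


end Stmt12

open Stmt12 Set Filter in
/-- Existence of the separatrix S_{IV,I}: For `k > 1` there exist `v₀ > 0`
and a C² function `u` solving `u'' + (2k-1)u' + k(k-1)u = u⁴` on `[0,∞)` with `u(0) = 0`,
`u'(0) = v₀`, `u` strictly increasing, `0 < u(τ) < (k(k-1))^{1/3}` for `τ > 0`, and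
`u(τ) → (k(k-1))^{1/3}`, `u'(τ) → 0` as `τ → ∞`. -/
theorem statement12 (k : ℝ) (hk : 1 < k) :
    ∃ v₀ : ℝ, 0 < v₀ ∧
    ∃ u : ℝ → ℝ,
      (∀ τ : ℝ, 0 ≤ τ → DifferentiableAt ℝ u τ) ∧
      (∀ τ : ℝ, 0 ≤ τ → DifferentiableAt ℝ (deriv u) τ) ∧
      (∀ τ : ℝ, 0 ≤ τ → ContinuousAt (deriv (deriv u)) τ) ∧
      (∀ τ : ℝ, 0 ≤ τ →
        deriv (deriv u) τ + (2 * k - 1) * deriv u τ + k * (k - 1) * u τ = u τ ^ 4) ∧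
      u 0 = 0 ∧ deriv u 0 = v₀ ∧
      StrictMonoOn u (Set.Ici 0) ∧
      (∀ τ : ℝ, 0 < τ → 0 < u τ ∧ u τ < (k * (k - 1)) ^ ((1 : ℝ) / 3)) ∧
      Filter.Tendsto u Filter.atTop (nhds ((k * (k - 1)) ^ ((1 : ℝ) / 3))) ∧
      Filter.Tendsto (deriv u) Filter.atTop (nhds 0) := by
  have hKpos : 0 < k * (k - 1) := by nlinarith
  set U : ℝ := (k * (k - 1)) ^ ((1:ℝ)/3) with hUdef
  set a : ℝ := 2*k - 1 with hadef
  have ha : 0 < a := by rw [hadef]; linarith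
  have hU : 0 < U := Real.rpow_pos_of_pos hKpos _
  have hU3 : U^3 = k * (k - 1) := by
    rw [hUdef, ← Real.rpow_natCast ((k * (k-1)) ^ ((1:ℝ)/3)) 3,
      ← Real.rpow_mul (le_of_lt hKpos)]
    norm_num
  have hex := exists_rho_eq (a := a) (U := U) ha hU
  refine ⟨phi a U 0, phi_pos ha hU ⟨le_refl 0, hU⟩, fun τ => (hex τ).choose,
    ?_⟩
  set u : ℝ → ℝ := fun τ => (hex τ).choose with hu
  have hw : ∀ τ, u τ < U ∧ rho a U (u τ) = τ := fun τ => (hex τ).choose_spec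
  refine ⟨?_, ?_, ?_, ?_, ?_, ?_, ?_, ?_, ?_, ?_⟩
  · intro τ _
    exact (w_hasDeriv ha hU hw τ).differentiableAt
  · intro τ _
    rw [w_deriv_eq ha hU hw]
    exact (w_hasDeriv2 ha hU hw τ).differentiableAt
  · intro τ _
    rw [w_deriv2_eq ha hU hw]
    exact ((phid_contAt ha hU (hw τ).1).comp (w_cont ha hU hw).continuousAt).mul
      ((phiext_cont ha hU).continuousAt.comp (w_cont ha hU hw).continuousAt)
  · intro τ hτ
    rw [w_deriv2_eq ha hU hw, w_deriv_eq ha hU hw]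
    have hmem : u τ ∈ Ico 0 U := ⟨w_nonneg ha hU hw hτ, (hw τ).1⟩
    have hkey := phid_mul_phi ha hU hmem
    have hKeq : k * (k - 1) = U^3 := hU3.symm
    rw [hKeq]
    simp only
    linarith [hkey]
  · exact w_zero ha hU hw
  · rw [w_deriv_eq ha hU hw]
    show phiext a U (u 0) = phi a U 0
    rw [w_zero ha hU hw]
    exact phiext_eq_phi ha hU le_rfl
  · exact (w_strictMono ha hU hw).strictMonoOn _
  · intro τ hτ
    exact ⟨w_pos ha hU hw hτ, (hw τ).1⟩
  · exact w_tendsto ha hU hw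
  · exact w_deriv_tendsto ha hU hw
end

section
/- Let k > 1 and u₀ > (k(k − 1))^{1/3}. Let u be the maximal forward solution of u''(τ) + (2k − 1)·u'(τ) + k(k − 1)·u(τ) = u(τ)^4 with u(0) = u₀ and u'(0) = 0, defined on its maximal interval of existence [0, T_max). Then u is unbounded: sup over τ ∈ [0, T_max) of u(τ) = +∞. In particular u does not converge to any constant. -/
open Set

section AuxiliaryLemmas

lemma aux_mono {g : ℝ → ℝ} {s t : ℝ} (hst : s ≤ t)
    (hdiff : ∀ r ∈ Set.Icc s t, DifferentiableAt ℝ g r)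
    (hpos : ∀ r ∈ Set.Ioo s t, 0 ≤ deriv g r) : g s ≤ g t := by
  have h := monotoneOn_of_deriv_nonneg (convex_Icc s t)
    (fun r hr => (hdiff r hr).continuousAt.continuousWithinAt)
    (fun r hr => (hdiff r (interior_subset hr)).differentiableWithinAt)
    (fun r hr => hpos r (by rwa [interior_Icc] at hr))
  exact h (left_mem_Icc.2 hst) (right_mem_Icc.2 hst) hst

lemma aux_strict {g : ℝ → ℝ} {s t : ℝ} (hst : s < t)
    (hdiff : ∀ r ∈ Set.Icc s t, DifferentiableAt ℝ g r)
    (hpos : ∀ r ∈ Set.Ioo s t, 0 < deriv g r) : g s < g t := by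
  have h := strictMonoOn_of_deriv_pos (convex_Icc s t)
    (fun r hr => (hdiff r hr).continuousAt.continuousWithinAt)
    (fun r hr => hpos r (by rwa [interior_Icc] at hr))
  exact h (left_mem_Icc.2 hst.le) (right_mem_Icc.2 hst.le) hst

lemma abs_pow4 {B x y : ℝ} (hx : |x| ≤ B) (hy : |y| ≤ B) :
    |x ^ 4 - y ^ 4| ≤ 4 * B ^ 3 * |x - y| := by
  have hB : 0 ≤ B := (abs_nonneg x).trans hx
  have e : x ^ 4 - y ^ 4 = (x - y) * (x ^ 3 + x ^ 2 * y + x * y ^ 2 + y ^ 3) := by ring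
  rw [e, abs_mul, mul_comm]
  apply mul_le_mul_of_nonneg_right _ (abs_nonneg _)
  have h1 : |x ^ 3 + x ^ 2 * y + x * y ^ 2 + y ^ 3|
      ≤ |x| ^ 3 + |x| ^ 2 * |y| + |x| * |y| ^ 2 + |y| ^ 3 := by
    calc |x ^ 3 + x ^ 2 * y + x * y ^ 2 + y ^ 3|
        ≤ |x ^ 3 + x ^ 2 * y + x * y ^ 2| + |y ^ 3| := abs_add_le _ _
      _ ≤ |x ^ 3 + x ^ 2 * y| + |x * y ^ 2| + |y ^ 3| := by
          have := abs_add_le (x ^ 3 + x ^ 2 * y) (x * y ^ 2); linarith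
      _ ≤ |x ^ 3| + |x ^ 2 * y| + |x * y ^ 2| + |y ^ 3| := by
          have := abs_add_le (x ^ 3) (x ^ 2 * y); linarith
      _ = |x| ^ 3 + |x| ^ 2 * |y| + |x| * |y| ^ 2 + |y| ^ 3 := by
          simp [abs_mul, abs_pow]
  have hx0 := abs_nonneg x
  have hy0 := abs_nonneg y
  have t1 : |x| ^ 3 ≤ B ^ 3 := pow_le_pow_left₀ hx0 hx 3
  have t2 : |y| ^ 3 ≤ B ^ 3 := pow_le_pow_left₀ hy0 hy 3
  have t3 : |x| ^ 2 * |y| ≤ B ^ 3 := by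
    nlinarith [mul_le_mul hx hx hx0 hB,
      mul_le_mul (mul_le_mul hx hx hx0 hB) hy hy0 (by positivity : (0:ℝ) ≤ B * B)]
  have t4 : |x| * |y| ^ 2 ≤ B ^ 3 := by
    nlinarith [mul_le_mul hy hy hy0 hB,
      mul_le_mul hx (mul_le_mul hy hy hy0 hB) (by positivity : (0:ℝ) ≤ |y| * |y|) hB]
  linarith

theorem picard_range {E : Type*} [NormedAddCommGroup E] [NormedSpace ℝ E] [CompleteSpace E]
    {v : ℝ → E → E} {tMin t₀ tMax : ℝ} (ht₀ : t₀ ∈ Set.Icc tMin tMax) (x₀ : E) {R C L : NNReal}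
    (hpl : IsPicardLindelof v (⟨t₀, ht₀⟩ : Set.Icc tMin tMax) x₀ R 0 C L) :
    ∃ f : ℝ → E, f t₀ = x₀ ∧
      (∀ t ∈ Set.Icc tMin tMax, HasDerivWithinAt f (v t (f t)) (Set.Icc tMin tMax) t) ∧
      (∀ t, f t ∈ Metric.closedBall x₀ R) := by
  obtain ⟨α, hα⟩ := ODE.FunSpace.exists_isFixedPt_next hpl (Metric.mem_closedBall_self le_rfl)
  refine ⟨α.compProj, ?_, fun t ht => ?_, fun t => α.compProj_mem_closedBall hpl.mul_max_le⟩
  · show α.compProj ((⟨t₀, ht₀⟩ : Set.Icc tMin tMax) : ℝ) = x₀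
    rw [ODE.FunSpace.compProj_val, ← hα, ODE.FunSpace.next_apply₀]
  · apply ODE.hasDerivWithinAt_picard_Icc ht₀ hpl.continuousOn_uncurry
      α.continuous_compProj.continuousOn (fun _ ht' ↦ α.compProj_mem_closedBall hpl.mul_max_le)
      x₀ ht |>.congr_of_mem _ ht
    intro t' ht'
    nth_rw 1 [← hα]
    rw [ODE.FunSpace.compProj_of_mem ht', ODE.FunSpace.next_apply]

end AuxiliaryLemmas

set_option maxHeartbeats 4000000 in
/-- For `k > 1` and `u₀ > (k(k-1))^{1/3}`, the maximal forward solution of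
`u'' + (2k-1)u' + k(k-1)u = u⁴` with `u(0) = u₀`, `u'(0) = 0`, defined on its maximal
interval of existence `J = [0, T_max)` (with `T_max ≤ ∞`), is unbounded:
`sup_{τ ∈ J} u(τ) = +∞`. Maximality is expressed as non-extendability: any solution on a
forward interval `J' ⊇ J` agreeing with `u` on `J` has `J' ⊆ J`. -/
theorem statement13 (k u₀ : ℝ) (hk : 1 < k) (hu₀ : (k * (k - 1)) ^ ((1 : ℝ) / 3) < u₀)
    (u : ℝ → ℝ) (J : Set ℝ)
    (hJ : J = Set.Ici (0 : ℝ) ∨ ∃ Tmax : ℝ, 0 < Tmax ∧ J = Set.Ico 0 Tmax)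
    (hd1 : ∀ τ ∈ J, DifferentiableAt ℝ u τ)
    (hd2 : ∀ τ ∈ J, DifferentiableAt ℝ (deriv u) τ)
    (heq : ∀ τ ∈ J,
      deriv (deriv u) τ + (2 * k - 1) * deriv u τ + k * (k - 1) * u τ = u τ ^ 4)
    (hinit : u 0 = u₀) (hinit' : deriv u 0 = 0)
    (hmax : ∀ (v : ℝ → ℝ) (J' : Set ℝ),
      (J' = Set.Ici (0 : ℝ) ∨ ∃ T' : ℝ, 0 < T' ∧ J' = Set.Ico 0 T') →
      J ⊆ J' → Set.EqOn v u J →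
      (∀ τ ∈ J', DifferentiableAt ℝ v τ) →
      (∀ τ ∈ J', DifferentiableAt ℝ (deriv v) τ) →
      (∀ τ ∈ J',
        deriv (deriv v) τ + (2 * k - 1) * deriv v τ + k * (k - 1) * v τ = v τ ^ 4) →
      J' ⊆ J) :
    ∀ M : ℝ, ∃ τ ∈ J, M < u τ := by
  intro M
  by_contra hcon
  push_neg at hcon
  -- abbreviations
  set a := 2 * k - 1 with ha_def
  set b := k * (k - 1) with hb_def
  have ha0 : 0 < a := by rw [ha_def]; linarith
  have hb0 : 0 < b := by rw [hb_def]; exact mul_pos (by linarith) (by linarith)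
  set c := b ^ ((1 : ℝ) / 3) with hc_def
  have hc0 : 0 < c := Real.rpow_pos_of_pos hb0 _
  have hu₀0 : 0 < u₀ := hc0.trans hu₀
  have hc3 : c ^ 3 = b := by
    rw [hc_def, ← Real.rpow_natCast (b ^ ((1 : ℝ) / 3)) 3, ← Real.rpow_mul hb0.le]
    norm_num
  have h0J : (0 : ℝ) ∈ J := by
    rcases hJ with h | ⟨T, hT, h⟩
    · rw [h]; exact Set.mem_Ici.mpr le_rfl
    · rw [h]; exact ⟨le_rfl, hT⟩
  have hJ0 : ∀ t ∈ J, (0 : ℝ) ≤ t := by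
    rcases hJ with h | ⟨T, hT, h⟩ <;> intro t ht
    · rw [h] at ht; exact ht
    · rw [h] at ht; exact ht.1
  have hsub : ∀ t ∈ J, Set.Icc 0 t ⊆ J := by
    rcases hJ with h | ⟨T, hT, h⟩ <;> intro t ht r hr <;> rw [h] at *
    · exact hr.1
    · exact ⟨hr.1, lt_of_le_of_lt hr.2 ht.2⟩
  have hM0 : u₀ ≤ M := by have := hcon 0 h0J; rwa [hinit] at this
  have hMpos : 0 < M := lt_of_lt_of_le hu₀0 hM0
  have heq' : ∀ τ ∈ J, deriv (deriv u) τ = u τ ^ 4 - b * u τ - a * deriv u τ := by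
    intro τ hτ; have := heq τ hτ; linarith
  set H : ℝ → ℝ := fun t => Real.exp (a * t) * deriv u t with hH_def
  have hHd : ∀ τ ∈ J, HasDerivAt H (Real.exp (a * τ) * (u τ ^ 4 - b * u τ)) τ := by
    intro τ hτ
    have h1 : HasDerivAt (fun r : ℝ => a * r) a τ := by
      simpa using (hasDerivAt_id τ).const_mul a
    have h2 := h1.exp.mul (hd2 τ hτ).hasDerivAt
    exact h2.congr_deriv (by rw [heq' τ hτ]; ring)
  have hHdiff : ∀ τ ∈ J, DifferentiableAt ℝ H τ := fun τ hτ => (hHd τ hτ).differentiableAt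
  have hH0 : H 0 = 0 := by simp [hH_def, hinit']
  have hpos4 : ∀ x : ℝ, c < x → 0 < x ^ 4 - b * x := by
    intro x hx
    have hx0 : 0 < x := hc0.trans hx
    have h3 : c ^ 3 < x ^ 3 := by
      have hp := mul_pos (sub_pos.mpr hx) (by positivity : (0:ℝ) < x ^ 2 + x * c + c ^ 2)
      have e : (x - c) * (x ^ 2 + x * c + c ^ 2) = x ^ 3 - c ^ 3 := by ring
      rw [e] at hp; linarith
    have hp2 := mul_pos hx0 (by linarith [hc3] : (0:ℝ) < x ^ 3 - b)
    have e2 : x * (x ^ 3 - b) = x ^ 4 - b * x := by ring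
    rw [e2] at hp2; linarith
  -- invariance: u stays above c
  have hclaim1 : ∀ t ∈ J, c < u t := by
    by_contra hcl
    push_neg at hcl
    obtain ⟨s₁, hs₁J, hs₁⟩ := hcl
    set S : Set ℝ := {s | s ∈ J ∧ u s ≤ c} with hS_def
    have hs₁S : s₁ ∈ S := ⟨hs₁J, hs₁⟩
    have hSne : S.Nonempty := ⟨s₁, hs₁S⟩
    have hSbd : BddBelow S := ⟨0, fun s hs => hJ0 s hs.1⟩
    set τ₁ := sInf S with hτ₁_def
    have hτ₁0 : 0 ≤ τ₁ := le_csInf hSne fun s hs => hJ0 s hs.1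
    have hτ₁le : τ₁ ≤ s₁ := csInf_le hSbd hs₁S
    have hτ₁J : τ₁ ∈ J := hsub s₁ hs₁J ⟨hτ₁0, hτ₁le⟩
    have huτ₁ : u τ₁ ≤ c := by
      by_contra hgt
      push_neg at hgt
      have hcont : ContinuousAt u τ₁ := (hd1 τ₁ hτ₁J).continuousAt
      obtain ⟨ε, hε0, hball⟩ := Metric.continuousAt_iff.mp hcont (u τ₁ - c) (by linarith)
      obtain ⟨s, hsS, hslt⟩ := (csInf_lt_iff hSbd hSne).mp (by linarith : sInf S < τ₁ + ε)
      have h1 : τ₁ ≤ s := csInf_le hSbd hsS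
      have hdist : dist s τ₁ < ε := by
        rw [Real.dist_eq, abs_of_nonneg (by linarith)]; linarith
      have h2 := hball hdist
      rw [Real.dist_eq] at h2
      have h3 := abs_lt.mp h2
      have h4 : u s ≤ c := hsS.2
      linarith [h3.1]
    have hτ₁pos : 0 < τ₁ := by
      rcases hτ₁0.lt_or_eq with h | h
      · exact h
      · exfalso; rw [← h, hinit] at huτ₁; linarith
    have hlt : ∀ s, 0 ≤ s → s < τ₁ → c < u s := by
      intro s h0 hslt
      by_contra hle
      push_neg at hle
      have hsJ : s ∈ J := hsub τ₁ hτ₁J ⟨h0, hslt.le⟩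
      exact absurd (csInf_le hSbd ⟨hsJ, hle⟩) (by rw [← hτ₁_def]; linarith)
    have hIccJ : Set.Icc 0 τ₁ ⊆ J := hsub τ₁ hτ₁J
    have hu'posτ : ∀ t, 0 < t → t ≤ τ₁ → 0 < deriv u t := by
      intro t h0 hle
      have hHt : H 0 < H t := by
        apply aux_strict h0
        · exact fun r hr => hHdiff r (hIccJ ⟨hr.1, hr.2.trans hle⟩)
        · intro r hr
          rw [(hHd r (hIccJ ⟨hr.1.le, hr.2.le.trans hle⟩)).deriv]
          have := hpos4 (u r) (hlt r hr.1.le (lt_of_lt_of_le hr.2 hle))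
          positivity
      rw [hH0] at hHt
      by_contra hnp
      push_neg at hnp
      have : H t ≤ 0 := mul_nonpos_of_nonneg_of_nonpos (Real.exp_pos _).le hnp
      linarith
    have hmono : u 0 < u τ₁ := by
      apply aux_strict hτ₁pos (fun r hr => hd1 r (hIccJ hr))
      exact fun r hr => hu'posτ r hr.1 hr.2.le
    rw [hinit] at hmono
    linarith
  have hu'pos : ∀ t ∈ J, 0 < t → 0 < deriv u t := by
    intro t ht h0
    have hIccJ : Set.Icc 0 t ⊆ J := hsub t ht
    have hHt : H 0 < H t := by
      apply aux_strict h0 (fun r hr => hHdiff r (hIccJ hr))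
      intro r hr
      rw [(hHd r (hIccJ ⟨hr.1.le, hr.2.le⟩)).deriv]
      have := hpos4 (u r) (hclaim1 r (hIccJ ⟨hr.1.le, hr.2.le⟩))
      positivity
    rw [hH0] at hHt
    by_contra hnp
    push_neg at hnp
    have : H t ≤ 0 := mul_nonpos_of_nonneg_of_nonpos (Real.exp_pos _).le hnp
    linarith
  have hu'0 : ∀ t ∈ J, 0 ≤ deriv u t := by
    intro t ht
    rcases (hJ0 t ht).lt_or_eq with h | h
    · exact (hu'pos t ht h).le
    · rw [← h, hinit']
  have hulb : ∀ t ∈ J, u₀ ≤ u t := by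
    intro t ht
    rcases (hJ0 t ht).lt_or_eq with h | h
    · have := aux_mono h.le (fun r hr => hd1 r (hsub t ht hr))
        (fun r hr => hu'0 r (hsub t ht ⟨hr.1.le, hr.2.le⟩))
      rwa [hinit] at this
    · rw [← h, hinit]
  have hbu₀ : b < u₀ ^ 3 := by
    have h := hpos4 u₀ hu₀
    have e : u₀ ^ 4 - b * u₀ = u₀ * (u₀ ^ 3 - b) := by ring
    rw [e] at h
    by_contra hle
    push_neg at hle
    have := mul_nonpos_of_nonneg_of_nonpos hu₀0.le (by linarith : u₀ ^ 3 - b ≤ 0)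
    linarith
  -- case split
  rcases hJ with hJi | ⟨Tmax, hT0, hJf⟩
  · -- infinite interval: linear growth, contradiction with bound M
    subst hJi
    obtain ⟨δ, hδ_def⟩ : ∃ δ : ℝ, δ = u₀ * (u₀ ^ 3 - b) := ⟨_, rfl⟩
    have hδ0 : 0 < δ := by rw [hδ_def]; exact mul_pos hu₀0 (by linarith)
    have hquad : ∀ t ∈ Set.Ici (0 : ℝ), δ ≤ u t ^ 4 - b * u t := by
      intro t ht
      have h1 := hulb t ht
      have hut0 : 0 < u t := lt_of_lt_of_le hu₀0 h1
      have h3 : u₀ ^ 3 ≤ u t ^ 3 := by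
        have hp := mul_nonneg (sub_nonneg.2 h1)
          (by positivity : (0:ℝ) ≤ u t ^ 2 + u t * u₀ + u₀ ^ 2)
        have e : (u t - u₀) * (u t ^ 2 + u t * u₀ + u₀ ^ 2) = u t ^ 3 - u₀ ^ 3 := by ring
        rw [e] at hp; linarith
      rw [hδ_def]
      have hm := mul_le_mul h1 (by linarith : u₀ ^ 3 - b ≤ u t ^ 3 - b)
        (by linarith) (by linarith : (0:ℝ) ≤ u t)
      have e2 : u t * (u t ^ 3 - b) = u t ^ 4 - b * u t := by ring
      rw [e2] at hm; linarith
    have hGd : ∀ τ ∈ Set.Ici (0 : ℝ),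
        HasDerivAt (fun t => H t - δ / a * (Real.exp (a * t) - 1))
          (Real.exp (a * τ) * (u τ ^ 4 - b * u τ) - δ / a * (Real.exp (a * τ) * a)) τ := by
      intro τ hτ
      have h1 : HasDerivAt (fun r : ℝ => a * r) a τ := by
        simpa using (hasDerivAt_id τ).const_mul a
      exact (hHd τ hτ).sub ((h1.exp.sub_const 1).const_mul (δ / a))
    have hGlb : ∀ t ∈ Set.Ici (0 : ℝ), δ / a * (Real.exp (a * t) - 1) ≤ H t := by
      intro t ht
      have hmono := aux_mono ht (fun r hr => (hGd r hr.1).differentiableAt)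
        (fun r hr => by
          rw [(hGd r hr.1.le).deriv]
          have h1 := hquad r hr.1.le
          have h2 : δ / a * a = δ := div_mul_cancel₀ δ ha0.ne'
          have h3 := Real.exp_pos (a * r)
          have e : Real.exp (a * r) * (u r ^ 4 - b * u r) - δ / a * (Real.exp (a * r) * a)
              = Real.exp (a * r) * (u r ^ 4 - b * u r - δ / a * a) := by ring
          rw [e]
          apply mul_nonneg h3.le
          rw [h2]
          linarith)
      simp only [mul_zero, Real.exp_zero, sub_self, hH0] at hmono
      linarith [hmono]
    obtain ⟨m, hm_def⟩ : ∃ m : ℝ, m = δ / a * (1 - Real.exp (-a)) := ⟨_, rfl⟩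
    have hm0 : 0 < m := by
      rw [hm_def]
      apply mul_pos (div_pos hδ0 ha0)
      have : Real.exp (-a) < Real.exp 0 := Real.exp_lt_exp.mpr (by linarith)
      simp only [Real.exp_zero] at this
      linarith
    have hu'm : ∀ t, 1 ≤ t → m ≤ deriv u t := by
      intro t h1
      have ht : t ∈ Set.Ici (0 : ℝ) := by simp only [Set.mem_Ici]; linarith
      have hHt := hGlb t ht
      have hkey : (1 : ℝ) ≤ Real.exp (-a) * Real.exp (a * t) := by
        rw [← Real.exp_add]
        have har : 0 ≤ a * (t - 1) := mul_nonneg ha0.le (by linarith)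
        have : Real.exp 0 ≤ Real.exp (-a + a * t) := Real.exp_le_exp.mpr (by linarith [har])
        simpa using this
      have hE := Real.exp_pos (a * t)
      have hda : 0 < δ / a := div_pos hδ0 ha0
      simp only [hH_def] at hHt
      have step : δ / a * 1 ≤ δ / a * (Real.exp (-a) * Real.exp (a * t)) :=
        mul_le_mul_of_nonneg_left hkey hda.le
      have h2 : m * Real.exp (a * t) ≤ Real.exp (a * t) * deriv u t := by
        rw [hm_def]
        linarith [step, hHt]
      have h3 : Real.exp (a * t) * m ≤ Real.exp (a * t) * deriv u t := by linarith
      exact le_of_mul_le_mul_left h3 hE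
    obtain ⟨t₂, ht₂_def⟩ : ∃ t₂ : ℝ, t₂ = 1 + (M - u₀) / m + 1 := ⟨_, rfl⟩
    have hfrac : 0 ≤ (M - u₀) / m := div_nonneg (by linarith) hm0.le
    have ht₂1 : (1 : ℝ) ≤ t₂ := by rw [ht₂_def]; linarith
    have hWd : ∀ r ∈ Set.Icc 1 t₂, HasDerivAt (fun r => u r - m * r) (deriv u r - m) r := by
      intro r hr
      have h1 : HasDerivAt (fun x : ℝ => m * x) m r := by
        simpa using (hasDerivAt_id r).const_mul m
      exact ((hd1 r (by simp only [Set.mem_Ici]; linarith [hr.1])).hasDerivAt).sub h1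
    have hW := aux_mono ht₂1 (fun r hr => (hWd r hr).differentiableAt)
      (fun r hr => by
        rw [(hWd r (Set.Ioo_subset_Icc_self hr)).deriv]
        linarith [hu'm r hr.1.le])
    have hu1 : u₀ ≤ u 1 := hulb 1 (by simp)
    have hdivm : m * ((M - u₀) / m) = M - u₀ := mul_div_cancel₀ _ hm0.ne'
    have hle : u t₂ ≤ M := hcon t₂ (by simp only [Set.mem_Ici]; linarith)
    have hexp : m * t₂ = m * 1 + m * ((M - u₀) / m) + m * 1 := by rw [ht₂_def]; ring
    linarith [hW, hu1, hdivm, hm0, hle, hexp]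
  · -- finite interval: extend the solution, contradicting maximality
    subst hJf
    -- bound on the first derivative
    obtain ⟨C₁, hC₁_def⟩ : ∃ C₁ : ℝ, C₁ = M ^ 4 / a := ⟨_, rfl⟩
    have hC₁0 : 0 < C₁ := by rw [hC₁_def]; positivity
    have hu'ub : ∀ t ∈ Set.Ico (0 : ℝ) Tmax, deriv u t ≤ C₁ := by
      intro t ht
      have hg : ∀ r ∈ Set.Ico (0 : ℝ) Tmax,
          HasDerivAt (fun r => C₁ * Real.exp (a * r) - H r)
            (C₁ * (Real.exp (a * r) * a) - Real.exp (a * r) * (u r ^ 4 - b * u r)) r := by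
        intro r hr
        have h1 : HasDerivAt (fun r : ℝ => a * r) a r := by
          simpa using (hasDerivAt_id r).const_mul a
        exact (h1.exp.const_mul C₁).sub (hHd r hr)
      have hmono := aux_mono ht.1 (fun r hr => (hg r ⟨hr.1, lt_of_le_of_lt hr.2 ht.2⟩).differentiableAt)
        (fun r hr => by
          rw [(hg r ⟨hr.1.le, hr.2.trans ht.2⟩).deriv]
          have hru1 := hulb r ⟨hr.1.le, hr.2.trans ht.2⟩
          have hru2 := hcon r ⟨hr.1.le, hr.2.trans ht.2⟩
          have h4 : u r ^ 4 ≤ M ^ 4 := pow_le_pow_left₀ (by linarith) hru2 4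
          have hE := Real.exp_pos (a * r)
          have hCa : C₁ * a = M ^ 4 := by rw [hC₁_def]; field_simp
          have e : C₁ * (Real.exp (a * r) * a) - Real.exp (a * r) * (u r ^ 4 - b * u r)
              = Real.exp (a * r) * (C₁ * a - u r ^ 4 + b * u r) := by ring
          rw [e]
          apply mul_nonneg hE.le
          rw [hCa]
          have : 0 ≤ b * u r := mul_nonneg hb0.le (by linarith)
          linarith)
      simp only [mul_zero, Real.exp_zero, mul_one, hH0, sub_zero] at hmono
      have hE := Real.exp_pos (a * t)
      have hH_t : Real.exp (a * t) * deriv u t ≤ C₁ * Real.exp (a * t) := by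
        have hHt : H t = Real.exp (a * t) * deriv u t := by rw [hH_def]
        have hp : 0 ≤ C₁ := hC₁0.le
        linarith [hmono, hHt, hp]
      have h3 : deriv u t * Real.exp (a * t) ≤ C₁ * Real.exp (a * t) := by linarith
      exact le_of_mul_le_mul_right h3 hE
    -- bound on the second derivative
    obtain ⟨C₂, hC₂_def⟩ : ∃ C₂ : ℝ, C₂ = M ^ 4 + b * M + a * C₁ := ⟨_, rfl⟩
    have hC₂0 : 0 < C₂ := by rw [hC₂_def]; positivity
    have hu''bnd : ∀ t ∈ Set.Ico (0 : ℝ) Tmax, |deriv (deriv u) t| ≤ C₂ := by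
      intro t ht
      rw [heq' t ht, abs_le]
      have h1 := hulb t ht
      have h2 := hcon t ht
      have h3 := hu'0 t ht
      have h4 := hu'ub t ht
      have h5 : u t ^ 4 ≤ M ^ 4 := pow_le_pow_left₀ (by linarith) h2 4
      have h6 : 0 ≤ u t ^ 4 := by positivity
      rw [hC₂_def]
      constructor <;> linarith [mul_le_mul_of_nonneg_left h2 hb0.le,
        mul_le_mul_of_nonneg_left h4 ha0.le, mul_nonneg hb0.le (by linarith : (0:ℝ) ≤ u t),
        mul_nonneg ha0.le h3]
    -- Lipschitz estimates for u and deriv u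
    have hLipu : ∀ s t, s ∈ Set.Ico (0 : ℝ) Tmax → t ∈ Set.Ico (0 : ℝ) Tmax → s ≤ t →
        0 ≤ u t - u s ∧ u t - u s ≤ C₁ * (t - s) := by
      intro s t hs ht hst
      have hIcc : Set.Icc s t ⊆ Set.Ico 0 Tmax :=
        fun r hr => ⟨hs.1.trans hr.1, lt_of_le_of_lt hr.2 ht.2⟩
      constructor
      · have := aux_mono hst (fun r hr => hd1 r (hIcc hr))
          (fun r hr => hu'0 r (hIcc (Set.Ioo_subset_Icc_self hr)))
        linarith
      · have hg : ∀ r ∈ Set.Icc s t, HasDerivAt (fun r => C₁ * r - u r) (C₁ - deriv u r) r := by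
          intro r hr
          have h1 : HasDerivAt (fun x : ℝ => C₁ * x) C₁ r := by
            simpa using (hasDerivAt_id r).const_mul C₁
          exact h1.sub (hd1 r (hIcc hr)).hasDerivAt
        have := aux_mono hst (fun r hr => (hg r hr).differentiableAt)
          (fun r hr => by
            rw [(hg r (Set.Ioo_subset_Icc_self hr)).deriv]
            linarith [hu'ub r (hIcc (Set.Ioo_subset_Icc_self hr))])
        linarith
    have hLipu' : ∀ s t, s ∈ Set.Ico (0 : ℝ) Tmax → t ∈ Set.Ico (0 : ℝ) Tmax → s ≤ t →
        |deriv u t - deriv u s| ≤ C₂ * (t - s) := by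
      intro s t hs ht hst
      have hIcc : Set.Icc s t ⊆ Set.Ico 0 Tmax :=
        fun r hr => ⟨hs.1.trans hr.1, lt_of_le_of_lt hr.2 ht.2⟩
      rw [abs_le]
      constructor
      · have hg : ∀ r ∈ Set.Icc s t,
            HasDerivAt (fun r => C₂ * r + deriv u r) (C₂ + deriv (deriv u) r) r := by
          intro r hr
          have h1 : HasDerivAt (fun x : ℝ => C₂ * x) C₂ r := by
            simpa using (hasDerivAt_id r).const_mul C₂
          exact h1.add (hd2 r (hIcc hr)).hasDerivAt
        have := aux_mono hst (fun r hr => (hg r hr).differentiableAt)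
          (fun r hr => by
            rw [(hg r (Set.Ioo_subset_Icc_self hr)).deriv]
            linarith [(abs_le.mp (hu''bnd r (hIcc (Set.Ioo_subset_Icc_self hr)))).1])
        linarith
      · have hg : ∀ r ∈ Set.Icc s t,
            HasDerivAt (fun r => C₂ * r - deriv u r) (C₂ - deriv (deriv u) r) r := by
          intro r hr
          have h1 : HasDerivAt (fun x : ℝ => C₂ * x) C₂ r := by
            simpa using (hasDerivAt_id r).const_mul C₂
          exact h1.sub (hd2 r (hIcc hr)).hasDerivAt
        have := aux_mono hst (fun r hr => (hg r hr).differentiableAt)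
          (fun r hr => by
            rw [(hg r (Set.Ioo_subset_Icc_self hr)).deriv]
            linarith [(abs_le.mp (hu''bnd r (hIcc (Set.Ioo_subset_Icc_self hr)))).2])
        linarith
    -- Picard-Lindelof data
    obtain ⟨B, hB_def⟩ : ∃ B : ℝ, B = M + C₁ + 1 := ⟨_, rfl⟩
    have hB1 : 1 ≤ B := by rw [hB_def]; linarith
    have hB0 : 0 < B := by linarith
    have hMB : M ≤ B := by rw [hB_def]; linarith
    have hC₁B : C₁ ≤ B := by rw [hB_def]; linarith
    obtain ⟨Cc, hCc_def⟩ : ∃ Cc : ℝ, Cc = B ^ 4 + b * B + a * B + B := ⟨_, rfl⟩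
    have hCc0 : 0 < Cc := by rw [hCc_def]; positivity
    have hBCc : B ≤ Cc := by
      rw [hCc_def]
      linarith [mul_pos hb0 hB0, mul_pos ha0 hB0, pow_pos hB0 4]
    obtain ⟨ε, hε_def⟩ : ∃ ε : ℝ, ε = 1 / Cc := ⟨_, rfl⟩
    have hε0 : 0 < ε := by rw [hε_def]; positivity
    have hCcε : Cc * ε = 1 := by rw [hε_def]; field_simp
    have hC₁ε : C₁ * ε ≤ 1 := by
      rw [← hCcε]
      apply mul_le_mul_of_nonneg_right _ hε0.le
      linarith
    have hC₂Cc : C₂ ≤ Cc := by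
      rw [hC₂_def, hCc_def]
      have h1 : M ^ 4 ≤ B ^ 4 := pow_le_pow_left₀ hMpos.le hMB 4
      linarith [mul_le_mul_of_nonneg_left hMB hb0.le, mul_le_mul_of_nonneg_left hC₁B ha0.le,
        hB0]
    have hC₂ε : C₂ * ε ≤ 1 := by
      rw [← hCcε]
      exact mul_le_mul_of_nonneg_right hC₂Cc hε0.le
    obtain ⟨t₀, ht₀_def⟩ : ∃ t₀ : ℝ, t₀ = max (Tmax - ε / 2) (Tmax / 2) := ⟨_, rfl⟩
    have ht₀Tm : t₀ < Tmax := by rw [ht₀_def]; exact max_lt (by linarith) (by linarith)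
    have ht₀0 : 0 < t₀ := by
      rw [ht₀_def]; exact lt_of_lt_of_le (by linarith : (0:ℝ) < Tmax / 2) (le_max_right _ _)
    have ht₀J : t₀ ∈ Set.Ico (0 : ℝ) Tmax := ⟨ht₀0.le, ht₀Tm⟩
    have hTt₀ : Tmax ≤ t₀ + ε / 2 := by
      rw [ht₀_def]; have := le_max_left (Tmax - ε / 2) (Tmax / 2); linarith
    obtain ⟨x₀, hx₀_def⟩ : ∃ x₀ : ℝ × ℝ, x₀ = (u t₀, deriv u t₀) := ⟨_, rfl⟩
    obtain ⟨f, hf_def⟩ : ∃ f : ℝ × ℝ → ℝ × ℝ,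
        f = fun p => (p.2, p.1 ^ 4 - b * p.1 - a * p.2) := ⟨_, rfl⟩
    have hx₀1 : |x₀.1| ≤ M := by
      rw [hx₀_def]
      exact abs_le.mpr ⟨by linarith [hulb t₀ ht₀J], hcon t₀ ht₀J⟩
    have hx₀2 : |x₀.2| ≤ C₁ := by
      rw [hx₀_def]
      exact abs_le.mpr ⟨by linarith [hu'0 t₀ ht₀J], hu'ub t₀ ht₀J⟩
    have hball : ∀ p : ℝ × ℝ, p ∈ Metric.closedBall x₀ 1 → |p.1| ≤ B ∧ |p.2| ≤ B := by
      intro p hp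
      rw [Metric.mem_closedBall, Prod.dist_eq] at hp
      have h1 : dist p.1 x₀.1 ≤ 1 := le_trans (le_max_left _ _) hp
      have h2 : dist p.2 x₀.2 ≤ 1 := le_trans (le_max_right _ _) hp
      rw [Real.dist_eq] at h1 h2
      constructor
      · have := abs_sub_abs_le_abs_sub p.1 x₀.1
        rw [hB_def]; linarith
      · have := abs_sub_abs_le_abs_sub p.2 x₀.2
        rw [hB_def]; linarith
    obtain ⟨L, hL_def⟩ : ∃ L : NNReal, (L : ℝ) = 4 * B ^ 3 + b + a :=
      ⟨⟨4 * B ^ 3 + b + a, by positivity⟩, rfl⟩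
    have hlip : ∀ r : ℝ, LipschitzOnWith L f (Metric.closedBall x₀ 1) := by
      intro r
      apply LipschitzOnWith.of_dist_le_mul
      intro p hp q hq
      obtain ⟨hp1, hp2⟩ := hball p hp
      obtain ⟨hq1, hq2⟩ := hball q hq
      rw [hf_def, Prod.dist_eq, Prod.dist_eq, hL_def]
      simp only [Real.dist_eq]
      have hd1' : |p.1 - q.1| ≤ max |p.1 - q.1| |p.2 - q.2| := le_max_left _ _
      have hd2' : |p.2 - q.2| ≤ max |p.1 - q.1| |p.2 - q.2| := le_max_right _ _
      have hd0 : 0 ≤ max |p.1 - q.1| |p.2 - q.2| := le_trans (abs_nonneg _) hd1'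
      have hB3 : 1 ≤ B ^ 3 := by
        have := pow_le_pow_left₀ zero_le_one hB1 3
        simpa using this
      have hcoef : 0 ≤ (4 * B ^ 3 + b + a - 1) * max |p.1 - q.1| |p.2 - q.2| :=
        mul_nonneg (by linarith) hd0
      apply max_le
      · linarith [hcoef, hd2']
      · have h4 := abs_pow4 hp1 hq1
        have e : p.1 ^ 4 - b * p.1 - a * p.2 - (q.1 ^ 4 - b * q.1 - a * q.2)
            = (p.1 ^ 4 - q.1 ^ 4) - b * (p.1 - q.1) - a * (p.2 - q.2) := by ring
        rw [e]
        have tri : |(p.1 ^ 4 - q.1 ^ 4) - b * (p.1 - q.1) - a * (p.2 - q.2)|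
            ≤ |p.1 ^ 4 - q.1 ^ 4| + b * |p.1 - q.1| + a * |p.2 - q.2| := by
          have t1 : |(p.1 ^ 4 - q.1 ^ 4) - b * (p.1 - q.1) - a * (p.2 - q.2)|
              ≤ |(p.1 ^ 4 - q.1 ^ 4) - b * (p.1 - q.1)| + |a * (p.2 - q.2)| :=
            abs_sub _ _
          have t2 : |(p.1 ^ 4 - q.1 ^ 4) - b * (p.1 - q.1)|
              ≤ |p.1 ^ 4 - q.1 ^ 4| + |b * (p.1 - q.1)| := abs_sub _ _
          rw [abs_mul, abs_of_pos ha0] at t1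
          rw [abs_mul, abs_of_pos hb0] at t2
          linarith
        have m1 : 4 * B ^ 3 * |p.1 - q.1| ≤ 4 * B ^ 3 * max |p.1 - q.1| |p.2 - q.2| :=
          mul_le_mul_of_nonneg_left hd1' (by positivity)
        have m2 : b * |p.1 - q.1| ≤ b * max |p.1 - q.1| |p.2 - q.2| :=
          mul_le_mul_of_nonneg_left hd1' hb0.le
        have m3 : a * |p.2 - q.2| ≤ a * max |p.1 - q.1| |p.2 - q.2| :=
          mul_le_mul_of_nonneg_left hd2' ha0.le
        calc |(p.1 ^ 4 - q.1 ^ 4) - b * (p.1 - q.1) - a * (p.2 - q.2)|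
            ≤ |p.1 ^ 4 - q.1 ^ 4| + b * |p.1 - q.1| + a * |p.2 - q.2| := tri
          _ ≤ (4 * B ^ 3 + b + a) * max |p.1 - q.1| |p.2 - q.2| := by
              have := h4; linarith
    have hpl : IsPicardLindelof (fun _ => f) (tmin := t₀ - ε) (tmax := t₀ + ε)
        ⟨t₀, ⟨by linarith, by linarith⟩⟩ x₀ 1 0 ⟨Cc, hCc0.le⟩ L := by
      refine ⟨fun t _ => by rw [NNReal.coe_one]; exact hlip t,
        fun x _ => continuousOn_const, ?_, ?_⟩
      · intro t _ x hx
        rw [NNReal.coe_one] at hx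
        change ‖f x‖ ≤ Cc
        obtain ⟨h1, h2⟩ := hball x hx
        rw [hf_def, Prod.norm_def]
        simp only [Real.norm_eq_abs]
        apply max_le
        · rw [hCc_def]
          linarith [mul_pos hb0 hB0, mul_pos ha0 hB0, pow_pos hB0 4]
        · have tri : |x.1 ^ 4 - b * x.1 - a * x.2| ≤ |x.1 ^ 4| + b * |x.1| + a * |x.2| := by
            have t1 : |x.1 ^ 4 - b * x.1 - a * x.2| ≤ |x.1 ^ 4 - b * x.1| + |a * x.2| :=
              abs_sub _ _
            have t2 : |x.1 ^ 4 - b * x.1| ≤ |x.1 ^ 4| + |b * x.1| := abs_sub _ _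
            rw [abs_mul, abs_of_pos ha0] at t1
            rw [abs_mul, abs_of_pos hb0] at t2
            linarith
          have e1 : |x.1 ^ 4| = |x.1| ^ 4 := abs_pow _ _
          have e2 : |x.1| ^ 4 ≤ B ^ 4 := pow_le_pow_left₀ (abs_nonneg _) h1 4
          have e3 : b * |x.1| ≤ b * B := mul_le_mul_of_nonneg_left h1 hb0.le
          have e4 : a * |x.2| ≤ a * B := mul_le_mul_of_nonneg_left h2 ha0.le
          rw [hCc_def]
          linarith [hB0]
      · have e1 : t₀ + ε - t₀ = ε := by ring
        have e2 : t₀ - (t₀ - ε) = ε := by ring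
        show Cc * max (t₀ + ε - t₀) (t₀ - (t₀ - ε)) ≤ ((1 : NNReal) : ℝ) - ((0 : NNReal) : ℝ)
        rw [e1, e2, max_self, hCcε]; simp
    obtain ⟨α, hα₀, hαd, hαball⟩ := picard_range _ x₀ hpl
    have hαd' : ∀ t ∈ Set.Ioo (t₀ - ε) (t₀ + ε), HasDerivAt α (f (α t)) t := fun t ht =>
      (hαd t (Set.Ioo_subset_Icc_self ht)).hasDerivAt (Icc_mem_nhds ht.1 ht.2)
    have hα₁ : ∀ t ∈ Set.Ioo (t₀ - ε) (t₀ + ε),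
        HasDerivAt (fun t => (α t).1) (α t).2 t := by
      intro t ht
      have h := ((ContinuousLinearMap.fst ℝ ℝ ℝ).hasFDerivAt).comp_hasDerivAt t (hαd' t ht)
      have h' : HasDerivAt (Prod.fst ∘ α) (α t).2 t := by simpa [hf_def] using h
      exact h'
    have hα₂ : ∀ t ∈ Set.Ioo (t₀ - ε) (t₀ + ε),
        HasDerivAt (fun t => (α t).2) ((α t).1 ^ 4 - b * (α t).1 - a * (α t).2) t := by
      intro t ht
      have h := ((ContinuousLinearMap.snd ℝ ℝ ℝ).hasFDerivAt).comp_hasDerivAt t (hαd' t ht)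
      have h' : HasDerivAt (Prod.snd ∘ α) ((α t).1 ^ 4 - b * (α t).1 - a * (α t).2) t := by
        simpa [hf_def] using h
      exact h'
    have hU : ∀ t ∈ Set.Ico (0 : ℝ) Tmax,
        HasDerivAt (fun t => (u t, deriv u t)) (f (u t, deriv u t)) t := by
      intro t ht
      have h := ((hd1 t ht).hasDerivAt).prodMk ((hd2 t ht).hasDerivAt)
      have e : f (u t, deriv u t) = (deriv u t, deriv (deriv u) t) := by
        rw [hf_def]; simp only []
        rw [heq' t ht]
      rw [e]
      exact h
    have hUball : ∀ t ∈ Set.Ico (0 : ℝ) Tmax, t₀ - ε ≤ t →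
        (u t, deriv u t) ∈ Metric.closedBall x₀ 1 := by
      intro t ht htl
      rw [Metric.mem_closedBall, hx₀_def, Prod.dist_eq, Real.dist_eq, Real.dist_eq]
      have htu : t - t₀ ≤ ε := by linarith [ht.2, hTt₀, hε0]
      have htl' : t₀ - t ≤ ε := by linarith
      have hpos : 0 ≤ C₁ * ε := mul_nonneg hC₁0.le hε0.le
      have h1 : |u t - u t₀| ≤ C₁ * ε := by
        rcases le_total t t₀ with h | h
        · obtain ⟨m1, m2⟩ := hLipu t t₀ ht ht₀J h
          have hbd : C₁ * (t₀ - t) ≤ C₁ * ε := mul_le_mul_of_nonneg_left htl' hC₁0.le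
          rw [abs_le]
          constructor <;> linarith
        · obtain ⟨m1, m2⟩ := hLipu t₀ t ht₀J ht h
          have hbd : C₁ * (t - t₀) ≤ C₁ * ε := mul_le_mul_of_nonneg_left htu hC₁0.le
          rw [abs_le]
          constructor <;> linarith
      have h2 : |deriv u t - deriv u t₀| ≤ C₂ * ε := by
        rcases le_total t t₀ with h | h
        · have m := hLipu' t t₀ ht ht₀J h
          rw [abs_sub_comm]
          calc |deriv u t₀ - deriv u t| ≤ C₂ * (t₀ - t) := m
            _ ≤ C₂ * ε := mul_le_mul_of_nonneg_left htl' hC₂0.le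
        · have m := hLipu' t₀ t ht₀J ht h
          calc |deriv u t - deriv u t₀| ≤ C₂ * (t - t₀) := m
            _ ≤ C₂ * ε := mul_le_mul_of_nonneg_left htu hC₂0.le
      exact max_le (by linarith [hC₁ε]) (by linarith [hC₂ε])
    obtain ⟨s₀, hs₀_def⟩ : ∃ s₀ : ℝ, s₀ = max (t₀ - ε / 2) 0 := ⟨_, rfl⟩
    have hs₀t₀ : s₀ < t₀ := by rw [hs₀_def]; exact max_lt (by linarith) ht₀0
    have hs₀0 : 0 ≤ s₀ := by rw [hs₀_def]; exact le_max_right _ _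
    have hs₀l : t₀ - ε / 2 ≤ s₀ := by rw [hs₀_def]; exact le_max_left _ _
    have hUeqα : ∀ t ∈ Set.Ico s₀ Tmax, (u t, deriv u t) = α t := by
      intro t ht
      obtain ⟨bb, hbb_def⟩ : ∃ bb : ℝ, bb = max t t₀ + (Tmax - max t t₀) / 2 := ⟨_, rfl⟩
      have hmaxT : max t t₀ < Tmax := max_lt ht.2 ht₀Tm
      have hbbT : bb < Tmax := by rw [hbb_def]; linarith
      have ht₀bb : t₀ < bb := by
        rw [hbb_def]; have := le_max_right t t₀; linarith
      have htbb : t ≤ bb := by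
        rw [hbb_def]; have := le_max_left t t₀; linarith
      have hs₀bbT : s₀ < Tmax := lt_trans hs₀t₀ ht₀Tm
      have hIccJ : Set.Icc s₀ bb ⊆ Set.Ico 0 Tmax :=
        fun r hr => ⟨hs₀0.trans hr.1, lt_of_le_of_lt hr.2 hbbT⟩
      have hIccIoo : Set.Icc s₀ bb ⊆ Set.Ioo (t₀ - ε) (t₀ + ε) := by
        intro r hr
        constructor
        · have := hr.1; linarith [hs₀l, hε0]
        · have := hr.2; linarith [hbbT, hTt₀, hε0]
      have key := ODE_solution_unique_of_mem_Icc (v := fun _ : ℝ => f)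
        (s := fun _ => Metric.closedBall x₀ 1) (K := L)
        (fun r _ => hlip r) (⟨hs₀t₀, ht₀bb⟩ : t₀ ∈ Set.Ioo s₀ bb)
        (fun r hr => (hU r (hIccJ hr)).continuousAt.continuousWithinAt)
        (fun r hr => hU r (hIccJ (Set.Ioo_subset_Icc_self hr)))
        (fun r hr => hUball r (hIccJ (Set.Ioo_subset_Icc_self hr))
          (by linarith [hr.1, hs₀l, hε0]))
        (fun r hr => (hαd' r (hIccIoo hr)).continuousAt.continuousWithinAt)
        (fun r hr => hαd' r (hIccIoo (Set.Ioo_subset_Icc_self hr)))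
        (fun r _ => hαball r)
        (by rw [hα₀, hx₀_def])
      exact key ⟨ht.1, htbb⟩
    -- the extension
    obtain ⟨T', hT'_def⟩ : ∃ T' : ℝ, T' = Tmax + ε / 4 := ⟨_, rfl⟩
    have hT'pos : 0 < T' := by rw [hT'_def]; linarith
    have hTmaxT' : Tmax < T' := by rw [hT'_def]; linarith
    have hT'lt : T' < t₀ + ε := by rw [hT'_def]; linarith [hTt₀]
    obtain ⟨w, hw_def⟩ : ∃ w : ℝ → ℝ, w = fun τ => if τ < t₀ then u τ else (α τ).1 := ⟨_, rfl⟩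
    have hw_eq_u : ∀ τ, τ < t₀ → w τ = u τ := by
      intro τ h; rw [hw_def]; exact if_pos h
    have hw_eq_α : ∀ τ ∈ Set.Ioo s₀ (t₀ + ε), w τ = (α τ).1 := by
      intro τ hτ
      by_cases h : τ < t₀
      · rw [hw_eq_u τ h]
        have := hUeqα τ ⟨hτ.1.le, h.trans ht₀Tm⟩
        exact congrArg Prod.fst this
      · rw [hw_def]; exact if_neg h
    have hw_ev_u : ∀ τ, τ < t₀ → w =ᶠ[nhds τ] u := fun τ h =>
      Filter.eventually_of_mem (isOpen_Iio.mem_nhds h) (fun r hr => hw_eq_u r hr)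
    have hw_ev_α : ∀ τ ∈ Set.Ioo s₀ (t₀ + ε), w =ᶠ[nhds τ] (fun t => (α t).1) := fun τ hτ =>
      Filter.eventually_of_mem (isOpen_Ioo.mem_nhds hτ) (fun r hr => hw_eq_α r hr)
    have hmemIoo : ∀ τ ∈ Set.Ico (0 : ℝ) T', t₀ ≤ τ → τ ∈ Set.Ioo s₀ (t₀ + ε) :=
      fun τ hτ h => ⟨lt_of_lt_of_le hs₀t₀ h, lt_trans hτ.2 hT'lt⟩
    have hmemIoo2 : ∀ τ ∈ Set.Ioo s₀ (t₀ + ε), τ ∈ Set.Ioo (t₀ - ε) (t₀ + ε) :=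
      fun τ hτ => ⟨by linarith [hτ.1, hs₀l, hε0], hτ.2⟩
    have hwd1 : ∀ τ ∈ Set.Ico (0 : ℝ) T', DifferentiableAt ℝ w τ := by
      intro τ hτ
      by_cases h : τ < t₀
      · exact (hw_ev_u τ h).differentiableAt_iff.mpr (hd1 τ ⟨hτ.1, h.trans ht₀Tm⟩)
      · push_neg at h
        have hm := hmemIoo τ hτ h
        exact (hw_ev_α τ hm).differentiableAt_iff.mpr (hα₁ τ (hmemIoo2 τ hm)).differentiableAt
    have hwderiv_u : ∀ τ, τ < t₀ → deriv w =ᶠ[nhds τ] deriv u := fun τ h => (hw_ev_u τ h).deriv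
    have hwderiv_α : ∀ τ ∈ Set.Ioo s₀ (t₀ + ε), deriv w =ᶠ[nhds τ] (fun t => (α t).2) := by
      intro τ hτ
      refine ((hw_ev_α τ hτ).deriv).trans ?_
      exact Filter.eventually_of_mem (isOpen_Ioo.mem_nhds (hmemIoo2 τ hτ))
        (fun r hr => (hα₁ r hr).deriv)
    have hwd2 : ∀ τ ∈ Set.Ico (0 : ℝ) T', DifferentiableAt ℝ (deriv w) τ := by
      intro τ hτ
      by_cases h : τ < t₀
      · exact (hwderiv_u τ h).differentiableAt_iff.mpr (hd2 τ ⟨hτ.1, h.trans ht₀Tm⟩)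
      · push_neg at h
        have hm := hmemIoo τ hτ h
        exact (hwderiv_α τ hm).differentiableAt_iff.mpr (hα₂ τ (hmemIoo2 τ hm)).differentiableAt
    have hweq : ∀ τ ∈ Set.Ico (0 : ℝ) T',
        deriv (deriv w) τ + a * deriv w τ + b * w τ = w τ ^ 4 := by
      intro τ hτ
      by_cases h : τ < t₀
      · rw [(hwderiv_u τ h).deriv_eq, (hw_ev_u τ h).deriv_eq, hw_eq_u τ h]
        exact heq τ ⟨hτ.1, h.trans ht₀Tm⟩
      · push_neg at h
        have hm := hmemIoo τ hτ h
        rw [(hwderiv_α τ hm).deriv_eq, (hw_ev_α τ hm).deriv_eq, hw_eq_α τ hm,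
          (hα₂ τ (hmemIoo2 τ hm)).deriv, (hα₁ τ (hmemIoo2 τ hm)).deriv]
        ring
    have hEqOn : Set.EqOn w u (Set.Ico 0 Tmax) := by
      intro τ hτ
      by_cases h : τ < t₀
      · exact hw_eq_u τ h
      · push_neg at h
        have h2 := hw_eq_α τ ⟨lt_of_lt_of_le hs₀t₀ h, by linarith [hτ.2, hTt₀, hε0]⟩
        rw [h2]
        exact (congrArg Prod.fst (hUeqα τ ⟨le_trans hs₀t₀.le h, hτ.2⟩)).symm
    have hJ'sub := hmax w (Set.Ico 0 T') (Or.inr ⟨T', hT'pos, rfl⟩)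
      (Set.Ico_subset_Ico_right hTmaxT'.le) hEqOn hwd1 hwd2 hweq
    have hTmem : Tmax ∈ Set.Ico (0 : ℝ) T' := ⟨hT0.le, hTmaxT'⟩
    exact absurd (hJ'sub hTmem).2 (lt_irrefl Tmax)
end

section
/- (First-quadrant orbits for k = 1.) Let u be a maximal forward solution of u''(τ) + u'(τ) = u(τ)^4 with u(0) > 0 and u'(0) > 0, defined on [0, T_max). Then u(τ) > 0 and u'(τ) > 0 for all τ ∈ [0, T_max) (the orbit never intersects the u- or v-axes), and both u and u' are unbounded: sup over [0, T_max) of u(τ) = +∞ and sup over [0, T_max) of u'(τ) = +∞. -/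
open Set Filter Topology

lemma s16_pos (u : ℝ → ℝ) (J : Set ℝ)
    (hJ0 : (0:ℝ) ∈ J) (hconv : Convex ℝ J) (hsub : J ⊆ Set.Ici 0)
    (hd1 : ∀ τ ∈ J, DifferentiableAt ℝ u τ)
    (hd2 : ∀ τ ∈ J, DifferentiableAt ℝ (deriv u) τ)
    (heq : ∀ τ ∈ J, deriv (deriv u) τ + deriv u τ = u τ ^ 4)
    (hinit : 0 < u 0) (hinit' : 0 < deriv u 0) :
    ∀ τ ∈ J, 0 < u τ ∧ 0 < deriv u τ := by
  have hv : ∀ τ ∈ J, 0 < deriv u τ := by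
    by_contra hcon
    push_neg at hcon
    obtain ⟨t1, ht1J, ht1⟩ := hcon
    set S := {t | t ∈ J ∧ deriv u t ≤ 0} with hSdef
    have hSne : S.Nonempty := ⟨t1, ⟨ht1J, ht1⟩⟩
    have hSbdd : BddBelow S := ⟨0, fun s hs => hsub hs.1⟩
    set t0 := sInf S with ht0def
    have ht0_le : ∀ s ∈ S, t0 ≤ s := fun s hs => csInf_le hSbdd hs
    have ht0_ge : 0 ≤ t0 := le_csInf hSne (fun s hs => hsub hs.1)
    have ht0J : t0 ∈ J :=
      (hconv.ordConnected.out hJ0 ht1J) ⟨ht0_ge, ht0_le t1 ⟨ht1J, ht1⟩⟩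
    have hcont : ContinuousAt (deriv u) t0 := (hd2 t0 ht0J).continuousAt
    have hle : deriv u t0 ≤ 0 := by
      by_contra hpos
      push_neg at hpos
      obtain ⟨δ, hδ, hball⟩ := Metric.mem_nhds_iff.1 (hcont (Ioi_mem_nhds hpos))
      have h2 : t0 + δ/2 ≤ t0 := by
        apply le_csInf hSne
        intro s hs
        by_contra hlt
        push_neg at hlt
        have hst0 : t0 ≤ s := ht0_le s hs
        have hmem : s ∈ Metric.ball t0 δ := by
          rw [Metric.mem_ball, Real.dist_eq, abs_lt]
          constructor <;> linarith
        exact absurd (hball hmem) (not_lt.2 hs.2)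
      linarith
    have ht0pos : 0 < t0 := by
      rcases ht0_ge.lt_or_eq with h | h
      · exact h
      · exfalso; rw [← h] at hle; linarith
    have hbelow : ∀ s, 0 ≤ s → s < t0 → 0 < deriv u s := by
      intro s hs0 hst
      have hsJ : s ∈ J := (hconv.ordConnected.out hJ0 ht0J) ⟨hs0, hst.le⟩
      by_contra hns
      push_neg at hns
      exact absurd (ht0_le s ⟨hsJ, hns⟩) (not_le.2 hst)
    have hge : 0 ≤ deriv u t0 := by
      have htend : Tendsto (deriv u) (𝓝[<] t0) (𝓝 (deriv u t0)) :=
        hcont.continuousWithinAt.tendsto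
      refine ge_of_tendsto htend ?_
      filter_upwards [Ioo_mem_nhdsLT_of_mem (⟨ht0pos, le_refl t0⟩ : t0 ∈ Ioc 0 t0)]
        with s hs
      exact (hbelow s hs.1.le hs.2).le
    have ht0zero : deriv u t0 = 0 := le_antisymm hle hge
    have hIccJ : Icc 0 t0 ⊆ J := hconv.ordConnected.out hJ0 ht0J
    have hmono : StrictMonoOn u (Icc 0 t0) := by
      apply strictMonoOn_of_deriv_pos (convex_Icc 0 t0)
      · exact fun x hx => (hd1 x (hIccJ hx)).continuousAt.continuousWithinAt
      · intro x hx
        rw [interior_Icc] at hx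
        exact hbelow x hx.1.le hx.2
    have hut0 : 0 < u t0 :=
      hinit.trans (hmono ⟨le_refl 0, ht0_ge⟩ ⟨ht0_ge, le_refl t0⟩ ht0pos)
    have hdd : deriv (deriv u) t0 = u t0 ^ 4 := by
      have := heq t0 ht0J; rw [ht0zero] at this; linarith
    have hDD : HasDerivAt (deriv u) (u t0 ^ 4) t0 := hdd ▸ (hd2 t0 ht0J).hasDerivAt
    have hslope := hasDerivAt_iff_tendsto_slope.1 hDD
    have hpos4 : 0 < u t0 ^ 4 := pow_pos hut0 4
    have hev1 : ∀ᶠ s in 𝓝[<] t0, 0 < slope (deriv u) t0 s := by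
      have h1 : Tendsto (slope (deriv u) t0) (𝓝[<] t0) (𝓝 (u t0 ^ 4)) :=
        hslope.mono_left (nhdsWithin_mono _ (fun x hx => ne_of_lt hx))
      exact h1.eventually (eventually_gt_nhds hpos4)
    have hev2 : ∀ᶠ s in 𝓝[<] t0, s ∈ Ioo 0 t0 :=
      Ioo_mem_nhdsLT_of_mem ⟨ht0pos, le_refl t0⟩
    obtain ⟨s, hs1, hs2⟩ := (hev1.and hev2).exists
    have hslopeval : slope (deriv u) t0 s = deriv u s / (s - t0) := by
      rw [slope_def_field, ht0zero]; ring_nf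
    rw [hslopeval] at hs1
    have : deriv u s / (s - t0) < 0 :=
      div_neg_of_pos_of_neg (hbelow s hs2.1.le hs2.2) (by linarith [hs2.2])
    linarith
  intro τ hτ
  refine ⟨?_, hv τ hτ⟩
  rcases (Set.mem_Ici.1 (hsub hτ) : (0:ℝ) ≤ τ).lt_or_eq with h | h
  · have hIccJ : Icc 0 τ ⊆ J := hconv.ordConnected.out hJ0 hτ
    have hmono : StrictMonoOn u (Icc 0 τ) := by
      apply strictMonoOn_of_deriv_pos (convex_Icc 0 τ)
      · exact fun x hx => (hd1 x (hIccJ hx)).continuousAt.continuousWithinAt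
      · intro x hx
        rw [interior_Icc] at hx
        exact hv x (hIccJ ⟨hx.1.le, hx.2.le⟩)
    exact hinit.trans (hmono ⟨le_refl 0, h.le⟩ ⟨h.le, le_refl τ⟩ h)
  · rw [← h]; exact hinit

-- derivative bound when u is bounded
lemma s16_derivBound (u : ℝ → ℝ) (J : Set ℝ) (L : ℝ)
    (hJ0 : (0:ℝ) ∈ J) (hconv : Convex ℝ J) (hsub : J ⊆ Set.Ici 0)
    (hd2 : ∀ τ ∈ J, DifferentiableAt ℝ (deriv u) τ)
    (heq : ∀ τ ∈ J, deriv (deriv u) τ + deriv u τ = u τ ^ 4)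
    (hpos : ∀ τ ∈ J, 0 < u τ ∧ 0 < deriv u τ)
    (hL : ∀ τ ∈ J, u τ ≤ L) :
    ∀ τ ∈ J, deriv u τ ≤ max (deriv u 0 - L^4) 0 + L^4 := by
  set ψ : ℝ → ℝ := fun t => Real.exp t * deriv u t - L^4 * Real.exp t with hψdef
  have hasψ : ∀ t ∈ J, HasDerivAt ψ (Real.exp t * (u t ^ 4 - L^4)) t := by
    intro t ht
    have h1 : HasDerivAt ψ
        (Real.exp t * deriv u t + Real.exp t * deriv (deriv u) t - L^4 * Real.exp t) t :=
      ((Real.hasDerivAt_exp t).mul (hd2 t ht).hasDerivAt).sub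
        ((Real.hasDerivAt_exp t).const_mul (L^4))
    have h2 : Real.exp t * deriv u t + Real.exp t * deriv (deriv u) t - L^4 * Real.exp t
        = Real.exp t * (u t ^ 4 - L^4) := by
      have h3 := heq t ht
      have : deriv (deriv u) t = u t ^ 4 - deriv u t := by linarith
      rw [this]; ring
    rwa [h2] at h1
  have hanti : AntitoneOn ψ J := by
    apply antitoneOn_of_deriv_nonpos hconv
    · exact fun x hx => (hasψ x hx).continuousAt.continuousWithinAt
    · exact fun x hx =>
        (hasψ x (interior_subset hx)).differentiableAt.differentiableWithinAt
    · intro x hx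
      have hxJ : x ∈ J := interior_subset hx
      rw [(hasψ x hxJ).deriv]
      have h1 : u x ^ 4 ≤ L ^ 4 := pow_le_pow_left₀ (hpos x hxJ).1.le (hL x hxJ) 4
      have := Real.exp_pos x
      nlinarith
  intro τ hτ
  have h1 : ψ τ ≤ ψ 0 := hanti hJ0 hτ (hsub hτ)
  have h2 : ψ 0 = deriv u 0 - L^4 := by simp [hψdef]
  have h3 : 1 ≤ Real.exp τ := Real.one_le_exp (hsub hτ)
  have h4 : Real.exp τ * deriv u τ ≤ (deriv u 0 - L^4) + L^4 * Real.exp τ := by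
    rw [h2] at h1; simp only [hψdef] at h1; linarith
  have h5 : deriv u 0 - L^4 ≤ max (deriv u 0 - L^4) 0 := le_max_left _ _
  have h6 : (0:ℝ) ≤ max (deriv u 0 - L^4) 0 := le_max_right _ _
  nlinarith [(hpos τ hτ).2]

-- linear growth of u + u'
lemma s16_growth (u : ℝ → ℝ) (J : Set ℝ)
    (hJ0 : (0:ℝ) ∈ J) (hconv : Convex ℝ J) (hsub : J ⊆ Set.Ici 0)
    (hd1 : ∀ τ ∈ J, DifferentiableAt ℝ u τ)
    (hd2 : ∀ τ ∈ J, DifferentiableAt ℝ (deriv u) τ)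
    (heq : ∀ τ ∈ J, deriv (deriv u) τ + deriv u τ = u τ ^ 4)
    (hinit : 0 < u 0)
    (hmono : ∀ τ ∈ J, u 0 ≤ u τ) :
    ∀ τ ∈ J, u 0 + deriv u 0 + u 0 ^ 4 * τ ≤ u τ + deriv u τ := by
  set χ : ℝ → ℝ := fun t => u t + deriv u t - u 0 ^ 4 * t with hχdef
  have hasχ : ∀ t ∈ J, HasDerivAt χ (deriv u t + deriv (deriv u) t - u 0 ^ 4) t := by
    intro t ht
    have h0 : HasDerivAt (fun s : ℝ => u 0 ^ 4 * s) (u 0 ^ 4) t := by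
      simpa using (hasDerivAt_id t).const_mul (u 0 ^ 4)
    exact ((hd1 t ht).hasDerivAt.add (hd2 t ht).hasDerivAt).sub h0
  have hm : MonotoneOn χ J := by
    apply monotoneOn_of_deriv_nonneg hconv
    · exact fun x hx => (hasχ x hx).continuousAt.continuousWithinAt
    · exact fun x hx =>
        (hasχ x (interior_subset hx)).differentiableAt.differentiableWithinAt
    · intro x hx
      have hxJ : x ∈ J := interior_subset hx
      rw [(hasχ x hxJ).deriv]
      have h1 : u 0 ^ 4 ≤ u x ^ 4 :=
        pow_le_pow_left₀ hinit.le (hmono x hxJ) 4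
      have := heq x hxJ; linarith
  intro τ hτ
  have h1 : χ 0 ≤ χ τ := hm hJ0 hτ (hsub hτ)
  simp only [hχdef] at h1
  linarith

-- limits of bounded monotone functions at the right endpoint
lemma s16_tendsto {g : ℝ → ℝ} {T B : ℝ} (hT : 0 < T)
    (hmono : MonotoneOn g (Set.Ico 0 T)) (hbdd : ∀ t ∈ Set.Ico 0 T, g t ≤ B) :
    ∃ p, Tendsto g (𝓝[<] T) (𝓝 p) := by
  set g' : ℝ → ℝ := fun t => g (max t 0) with hg'def
  have hmem : ∀ t ∈ Iio T, max t 0 ∈ Ico 0 T := fun t ht =>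
    ⟨le_max_right _ _, max_lt ht hT⟩
  have hm : MonotoneOn g' (Iio T) := fun s hs t ht hst =>
    hmono (hmem s hs) (hmem t ht) (max_le_max hst (le_refl 0))
  have hb : BddAbove (g' '' Iio T) := by
    refine ⟨B, ?_⟩
    rintro y ⟨t, ht, rfl⟩
    exact hbdd _ (hmem t ht)
  refine ⟨_, (hm.tendsto_nhdsLT hb).congr' ?_⟩
  filter_upwards [Ioo_mem_nhdsLT_of_mem (⟨hT, le_refl T⟩ : T ∈ Ioc 0 T)] with t ht
  simp [hg'def, max_eq_left ht.1.le]


/-- First-quadrant orbits for k = 1: A maximal forward solution of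
`u'' + u' = u⁴` with `u(0) > 0`, `u'(0) > 0`, defined on `J = [0, T_max)`, satisfies
`u(τ) > 0` and `u'(τ) > 0` on all of `J` (the orbit never meets the axes), and both
`u` and `u'` are unbounded on `J`. Maximality is expressed as non-extendability. -/
theorem statement16 (u : ℝ → ℝ) (J : Set ℝ)
    (hJ : J = Set.Ici (0 : ℝ) ∨ ∃ Tmax : ℝ, 0 < Tmax ∧ J = Set.Ico 0 Tmax)
    (hd1 : ∀ τ ∈ J, DifferentiableAt ℝ u τ)
    (hd2 : ∀ τ ∈ J, DifferentiableAt ℝ (deriv u) τ)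
    (heq : ∀ τ ∈ J, deriv (deriv u) τ + deriv u τ = u τ ^ 4)
    (hinit : 0 < u 0) (hinit' : 0 < deriv u 0)
    (hmax : ∀ (v : ℝ → ℝ) (J' : Set ℝ),
      (J' = Set.Ici (0 : ℝ) ∨ ∃ T' : ℝ, 0 < T' ∧ J' = Set.Ico 0 T') →
      J ⊆ J' → Set.EqOn v u J →
      (∀ τ ∈ J', DifferentiableAt ℝ v τ) →
      (∀ τ ∈ J', DifferentiableAt ℝ (deriv v) τ) →
      (∀ τ ∈ J', deriv (deriv v) τ + deriv v τ = v τ ^ 4) →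
      J' ⊆ J) :
    (∀ τ ∈ J, 0 < u τ ∧ 0 < deriv u τ) ∧
    (∀ M : ℝ, ∃ τ ∈ J, M < u τ) ∧
    (∀ M : ℝ, ∃ τ ∈ J, M < deriv u τ) := by
  rcases hJ with hJeq | ⟨T, hT, hJeq⟩
  · -- J = Ici 0
    subst hJeq
    have hJ0 : (0:ℝ) ∈ Ici (0:ℝ) := self_mem_Ici
    have hconv : Convex ℝ (Ici (0:ℝ)) := convex_Ici 0
    have hsub : Ici (0:ℝ) ⊆ Ici (0:ℝ) := subset_rfl
    have hpos := s16_pos u (Ici 0) hJ0 hconv hsub hd1 hd2 heq hinit hinit'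
    have hmonoOn : MonotoneOn u (Ici 0) := by
      apply monotoneOn_of_deriv_nonneg hconv
      · exact fun x hx => (hd1 x hx).continuousAt.continuousWithinAt
      · exact fun x hx =>
          (hd1 x (interior_subset hx)).differentiableWithinAt
      · intro x hx
        exact (hpos x (interior_subset hx)).2.le
    have hmono0 : ∀ τ ∈ Ici (0:ℝ), u 0 ≤ u τ := fun τ hτ => hmonoOn hJ0 hτ hτ
    have hgrowth := s16_growth u (Ici 0) hJ0 hconv hsub hd1 hd2 heq hinit hmono0
    have hU : ∀ M : ℝ, ∃ τ ∈ Ici (0:ℝ), M < u τ := by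
      intro M
      by_contra hcon
      push_neg at hcon
      set L := max M (u 0) with hLdef
      have hL : ∀ τ ∈ Ici (0:ℝ), u τ ≤ L := fun τ hτ =>
        (hcon τ hτ).trans (le_max_left _ _)
      have hB := s16_derivBound u (Ici 0) L hJ0 hconv hsub hd2 heq hpos hL
      set B := max (deriv u 0 - L^4) 0 + L^4 with hBdef
      set c := u 0 ^ 4 with hcdef
      have hc : 0 < c := pow_pos hinit 4
      set τ := max 0 ((L + B - (u 0 + deriv u 0))/c + 1) with hτdef
      have hτmem : τ ∈ Ici (0:ℝ) := Set.mem_Ici.2 (le_max_left _ _)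
      have hτge : (L + B - (u 0 + deriv u 0))/c + 1 ≤ τ := le_max_right _ _
      have h2 : u τ + deriv u τ ≤ L + B := add_le_add (hL τ hτmem) (hB τ hτmem)
      have h3 := hgrowth τ hτmem
      have h4 : c * ((L + B - (u 0 + deriv u 0))/c + 1) ≤ c * τ :=
        mul_le_mul_of_nonneg_left hτge hc.le
      have h5 : c * ((L + B - (u 0 + deriv u 0))/c + 1)
          = (L + B - (u 0 + deriv u 0)) + c := by field_simp
      linarith
    refine ⟨hpos, hU, ?_⟩
    intro M
    by_contra hcon
    push_neg at hcon
    have hMpos : 0 < M := hinit'.trans_le (hcon 0 hJ0)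
    obtain ⟨t0, ht0mem, ht0⟩ := hU (max 1 (2*M+1))
    set ω : ℝ → ℝ := fun t => deriv u t - (M+1)*t with hωdef
    have hasω : ∀ t ∈ Ici (0:ℝ), HasDerivAt ω (deriv (deriv u) t - (M+1)) t := by
      intro t ht
      have h0 : HasDerivAt (fun s : ℝ => (M+1) * s) (M+1) t := by
        simpa using (hasDerivAt_id t).const_mul (M+1)
      exact (hd2 t ht).hasDerivAt.sub h0
    have hIccsub : Icc t0 (t0+1) ⊆ Ici (0:ℝ) := fun x hx => le_trans ht0mem hx.1
    have hm : MonotoneOn ω (Icc t0 (t0+1)) := by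
      apply monotoneOn_of_deriv_nonneg (convex_Icc _ _)
      · exact fun x hx => (hasω x (hIccsub hx)).continuousAt.continuousWithinAt
      · exact fun x hx =>
          (hasω x (hIccsub (interior_subset hx))).differentiableAt.differentiableWithinAt
      · intro x hx
        have hxJ : x ∈ Ici (0:ℝ) := hIccsub (interior_subset hx)
        rw [(hasω x hxJ).deriv]
        have hux : u t0 ≤ u x :=
          hmonoOn ht0mem hxJ (le_trans (interior_subset hx).1 (le_refl x))
        have h1x : (1:ℝ) ≤ u x := le_trans (le_trans (le_max_left _ _) ht0.le) hux
        have hpow : u x ≤ u x ^ 4 := le_self_pow₀ h1x (by norm_num)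
        have h2M : 2*M+1 ≤ u x := le_trans (le_trans (le_max_right _ _) ht0.le) hux
        have hdu : deriv u x ≤ M := hcon x hxJ
        have := heq x hxJ
        nlinarith
    have hend : ω t0 ≤ ω (t0+1) :=
      hm ⟨le_refl _, by linarith⟩ ⟨by linarith, le_refl _⟩ (by linarith)
    have h1 : deriv u (t0+1) ≤ M := hcon _ (by exact le_trans (Set.mem_Ici.1 ht0mem) (by linarith))
    have h2 : 0 < deriv u t0 := (hpos t0 ht0mem).2
    simp only [hωdef] at hend
    nlinarith
  · -- J = Ico 0 T
    subst hJeq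
    have hJ0 : (0:ℝ) ∈ Ico 0 T := ⟨le_refl 0, hT⟩
    have hconv : Convex ℝ (Ico (0:ℝ) T) := convex_Ico 0 T
    have hsub : Ico (0:ℝ) T ⊆ Ici 0 := fun x hx => hx.1
    have hpos := s16_pos u (Ico 0 T) hJ0 hconv hsub hd1 hd2 heq hinit hinit'
    have hmonoOn : MonotoneOn u (Ico 0 T) := by
      apply monotoneOn_of_deriv_nonneg hconv
      · exact fun x hx => (hd1 x hx).continuousAt.continuousWithinAt
      · exact fun x hx =>
          (hd1 x (interior_subset hx)).differentiableWithinAt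
      · intro x hx
        exact (hpos x (interior_subset hx)).2.le
    have hU : ∀ M : ℝ, ∃ τ ∈ Ico (0:ℝ) T, M < u τ := by
      intro M
      by_contra hcon
      push_neg at hcon
      set L := max M (u 0) with hLdef
      have hL : ∀ τ ∈ Ico (0:ℝ) T, u τ ≤ L := fun τ hτ =>
        (hcon τ hτ).trans (le_max_left _ _)
      have hB := s16_derivBound u (Ico 0 T) L hJ0 hconv hsub hd2 heq hpos hL
      set B := max (deriv u 0 - L^4) 0 + L^4 with hBdef
      have hLpos : 0 < L := lt_of_lt_of_le hinit (le_max_right _ _)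
      have hBpos : 0 ≤ B := by
        have : (0:ℝ) ≤ max (deriv u 0 - L^4) 0 := le_max_right _ _
        nlinarith [pow_pos hLpos 4]
      -- g = exp * deriv u is monotone and bounded
      set g : ℝ → ℝ := fun t => Real.exp t * deriv u t with hgdef
      have hasg : ∀ t ∈ Ico (0:ℝ) T, HasDerivAt g (Real.exp t * u t ^ 4) t := by
        intro t ht
        have h1 : HasDerivAt g
            (Real.exp t * deriv u t + Real.exp t * deriv (deriv u) t) t :=
          (Real.hasDerivAt_exp t).mul (hd2 t ht).hasDerivAt
        have h2 : Real.exp t * deriv u t + Real.exp t * deriv (deriv u) t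
            = Real.exp t * u t ^ 4 := by
          have h3 := heq t ht
          have : deriv (deriv u) t = u t ^ 4 - deriv u t := by linarith
          rw [this]; ring
        rwa [h2] at h1
      have hgmono : MonotoneOn g (Ico 0 T) := by
        apply monotoneOn_of_deriv_nonneg hconv
        · exact fun x hx => (hasg x hx).continuousAt.continuousWithinAt
        · exact fun x hx =>
            (hasg x (interior_subset hx)).differentiableAt.differentiableWithinAt
        · intro x hx
          have hxJ : x ∈ Ico (0:ℝ) T := interior_subset hx
          rw [(hasg x hxJ).deriv]
          positivity
      have hgbdd : ∀ t ∈ Ico (0:ℝ) T, g t ≤ Real.exp T * B := by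
        intro t ht
        have h1 : Real.exp t ≤ Real.exp T := Real.exp_le_exp.2 ht.2.le
        have h2 : deriv u t ≤ B := hB t ht
        have h3 : 0 < deriv u t := (hpos t ht).2
        have h4 : 0 < Real.exp t := Real.exp_pos t
        simp only [hgdef]
        nlinarith
      obtain ⟨P, hgP⟩ := s16_tendsto hT hgmono hgbdd
      obtain ⟨p, hup⟩ := s16_tendsto hT hmonoOn hL
      set q := Real.exp (-T) * P with hqdef
      have htendh : Tendsto (deriv u) (𝓝[<] T) (𝓝 q) := by
        have h1 : Tendsto (fun t => Real.exp (-t) * g t) (𝓝[<] T)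
            (𝓝 (Real.exp (-T) * P)) :=
          Tendsto.mul
            (((Real.continuous_exp.comp continuous_neg).tendsto T).mono_left
              nhdsWithin_le_nhds) hgP
        refine h1.congr fun t => ?_
        simp only [hgdef]
        rw [Real.exp_neg]
        field_simp
      have htenddd : Tendsto (deriv (deriv u)) (𝓝[<] T) (𝓝 (p^4 - q)) := by
        have h2 : Tendsto (fun t => u t ^ 4 - deriv u t) (𝓝[<] T)
            (𝓝 (p^4 - q)) := (hup.pow 4).sub htendh
        refine h2.congr' ?_
        filter_upwards [Ioo_mem_nhdsLT_of_mem (⟨hT, le_refl T⟩ : T ∈ Ioc 0 T)]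
          with t ht
        have := heq t ⟨ht.1.le, ht.2⟩
        linarith
      -- local solution beyond T
      set F : ℝ × ℝ → ℝ × ℝ := fun x => (x.2, x.1^4 - x.2) with hFdef
      have hF : ContDiff ℝ 1 F :=
        ContDiff.prodMk contDiff_snd ((contDiff_fst.pow 4).sub contDiff_snd)
      obtain ⟨f, hf0, ε, hε, hf⟩ :=
        (hF.contDiffAt (x := (p, q))).exists_forall_mem_closedBall_exists_eq_forall_mem_Ioo_hasDerivAt₀ T
      set V : ℝ → ℝ := fun t => if t < T then u t else (f t).1 with hVdef
      set W : ℝ → ℝ := fun t => if t < T then deriv u t else (f t).2 with hWdef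
      have hVu : EqOn V u (Iio T) := fun t ht => if_pos ht
      have hWu : EqOn W (deriv u) (Iio T) := fun t ht => if_pos ht
      have hVf : ∀ s, T ≤ s → V s = (f s).1 := fun s hs => if_neg (not_lt.2 hs)
      have hWf : ∀ s, T ≤ s → W s = (f s).2 := fun s hs => if_neg (not_lt.2 hs)
      have hVT : V T = p := by rw [hVf T le_rfl, hf0]
      have hWT : W T = q := by rw [hWf T le_rfl, hf0]
      have hTmem : T ∈ Ioo (T-ε) (T+ε) := ⟨by linarith, by linarith⟩
      have hf1 : ∀ t ∈ Ioo (T-ε) (T+ε),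
          HasDerivAt (fun s => (f s).1) ((f t).2) t := fun t ht => by
        exact hasFDerivAt_fst.comp_hasDerivAt t (hf t ht)
      have hf2 : ∀ t ∈ Ioo (T-ε) (T+ε),
          HasDerivAt (fun s => (f s).2) ((f t).1^4 - (f t).2) t := fun t ht => by
        exact hasFDerivAt_snd.comp_hasDerivAt t (hf t ht)
      -- gluing at T : V
      have hVleft : HasDerivWithinAt V q (Iic T) T := by
        apply hasDerivWithinAt_Iic_of_tendsto_deriv (s := Ioo 0 T)
        · intro x hx
          have hev : V =ᶠ[𝓝 x] u := hVu.eventuallyEq_of_mem (Iio_mem_nhds hx.2)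
          exact (hev.differentiableAt_iff.2 (hd1 x ⟨hx.1.le, hx.2⟩)).differentiableWithinAt
        · show Tendsto V (𝓝[Ioo 0 T] T) (𝓝 (V T))
          rw [hVT]
          refine (hup.mono_left (nhdsWithin_mono _ Ioo_subset_Iio_self)).congr' ?_
          filter_upwards [self_mem_nhdsWithin] with t ht
          exact (hVu (Ioo_subset_Iio_self ht)).symm
        · exact Ioo_mem_nhdsLT_of_mem ⟨hT, le_refl T⟩
        · refine htendh.congr' ?_
          filter_upwards [self_mem_nhdsWithin] with t (ht : t ∈ Iio T)
          exact ((hVu.eventuallyEq_of_mem (Iio_mem_nhds ht)).deriv_eq).symm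
      have hVright : HasDerivWithinAt V q (Ici T) T := by
        have h1 := (hf1 T hTmem).hasDerivWithinAt (s := Ici T)
        rw [hf0] at h1
        exact h1.congr (fun s hs => hVf s hs) (hVf T le_rfl)
      have hVT' : HasDerivAt V q T := by
        have h1 := hVleft.union hVright
        rwa [Iic_union_Ici, hasDerivWithinAt_univ] at h1
      -- gluing at T : W
      have hWleft : HasDerivWithinAt W (p^4 - q) (Iic T) T := by
        apply hasDerivWithinAt_Iic_of_tendsto_deriv (s := Ioo 0 T)
        · intro x hx
          have hev : W =ᶠ[𝓝 x] deriv u := hWu.eventuallyEq_of_mem (Iio_mem_nhds hx.2)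
          exact (hev.differentiableAt_iff.2 (hd2 x ⟨hx.1.le, hx.2⟩)).differentiableWithinAt
        · show Tendsto W (𝓝[Ioo 0 T] T) (𝓝 (W T))
          rw [hWT]
          refine (htendh.mono_left (nhdsWithin_mono _ Ioo_subset_Iio_self)).congr' ?_
          filter_upwards [self_mem_nhdsWithin] with t ht
          exact (hWu (Ioo_subset_Iio_self ht)).symm
        · exact Ioo_mem_nhdsLT_of_mem ⟨hT, le_refl T⟩
        · refine htenddd.congr' ?_
          filter_upwards [self_mem_nhdsWithin] with t (ht : t ∈ Iio T)
          exact ((hWu.eventuallyEq_of_mem (Iio_mem_nhds ht)).deriv_eq).symm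
      have hWright : HasDerivWithinAt W (p^4 - q) (Ici T) T := by
        have h1 := (hf2 T hTmem).hasDerivWithinAt (s := Ici T)
        rw [hf0] at h1
        exact h1.congr (fun s hs => hWf s hs) (hWf T le_rfl)
      have hWT' : HasDerivAt W (p^4 - q) T := by
        have h1 := hWleft.union hWright
        rwa [Iic_union_Ici, hasDerivWithinAt_univ] at h1
      -- the extension interval
      set J' := Ico (0:ℝ) (T + ε/2) with hJ'def
      have hJ'lt : ∀ τ ∈ J', τ < T + ε := fun τ hτ => by
        have := hτ.2; linarith
      have hVdiff : ∀ τ ∈ J', DifferentiableAt ℝ V τ := by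
        intro τ hτ
        rcases lt_trichotomy τ T with h | h | h
        · exact (hVu.eventuallyEq_of_mem (Iio_mem_nhds h)).differentiableAt_iff.2
            (hd1 τ ⟨hτ.1, h⟩)
        · subst h; exact hVT'.differentiableAt
        · have hev : V =ᶠ[𝓝 τ] (fun s => (f s).1) :=
            Filter.eventuallyEq_of_mem (Ioi_mem_nhds h) (fun s hs => hVf s (le_of_lt hs))
          exact hev.differentiableAt_iff.2
            (hf1 τ ⟨by linarith, hJ'lt τ hτ⟩).differentiableAt
      have hWkey : ∀ τ ∈ J', DifferentiableAt ℝ W τ ∧ deriv W τ = V τ ^ 4 - W τ := by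
        intro τ hτ
        rcases lt_trichotomy τ T with h | h | h
        · have hev : W =ᶠ[𝓝 τ] deriv u := hWu.eventuallyEq_of_mem (Iio_mem_nhds h)
          refine ⟨hev.differentiableAt_iff.2 (hd2 τ ⟨hτ.1, h⟩), ?_⟩
          rw [hev.deriv_eq, hVu h, hWu h]
          have := heq τ ⟨hτ.1, h⟩
          linarith
        · subst h
          exact ⟨hWT'.differentiableAt, by rw [hWT'.deriv, hVT, hWT]⟩
        · have hev : W =ᶠ[𝓝 τ] (fun s => (f s).2) :=
            Filter.eventuallyEq_of_mem (Ioi_mem_nhds h) (fun s hs => hWf s (le_of_lt hs))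
          refine ⟨hev.differentiableAt_iff.2
            (hf2 τ ⟨by linarith, hJ'lt τ hτ⟩).differentiableAt, ?_⟩
          rw [hev.deriv_eq, (hf2 τ ⟨by linarith, hJ'lt τ hτ⟩).deriv,
            hVf τ h.le, hWf τ h.le]
      have hWeq : EqOn (deriv V) W (Iio (T + ε)) := by
        intro s hs
        rcases lt_trichotomy s T with h | h | h
        · rw [(hVu.eventuallyEq_of_mem (Iio_mem_nhds h)).deriv_eq]
          exact (hWu h).symm
        · subst h
          rw [hVT'.deriv, hWT]
        · have hev : V =ᶠ[𝓝 s] (fun r => (f r).1) :=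
            Filter.eventuallyEq_of_mem (Ioi_mem_nhds h) (fun r hr => hVf r (le_of_lt hr))
          rw [hev.deriv_eq, (hf1 s ⟨by linarith, hs⟩).deriv]
          exact (hWf s h.le).symm
      have hVd2 : ∀ τ ∈ J', DifferentiableAt ℝ (deriv V) τ := by
        intro τ hτ
        exact ((hWeq.eventuallyEq_of_mem (Iio_mem_nhds (hJ'lt τ hτ))).differentiableAt_iff).2
          (hWkey τ hτ).1
      have heq' : ∀ τ ∈ J', deriv (deriv V) τ + deriv V τ = V τ ^ 4 := by
        intro τ hτ
        have hnb : Iio (T + ε) ∈ 𝓝 τ := Iio_mem_nhds (hJ'lt τ hτ)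
        rw [(hWeq.eventuallyEq_of_mem hnb).deriv_eq, hWeq (hJ'lt τ hτ),
          (hWkey τ hτ).2]
        ring
      have happ : J' ⊆ Ico 0 T := by
        apply hmax V J' (Or.inr ⟨T + ε/2, by linarith, rfl⟩)
          (Ico_subset_Ico_right (by linarith)) (fun t ht => hVu ht.2)
          hVdiff hVd2 heq'
      have hTJ' : T ∈ J' := ⟨hT.le, by linarith⟩
      exact absurd (happ hTJ').2 (lt_irrefl T)
    refine ⟨hpos, hU, ?_⟩
    intro M
    by_contra hcon
    push_neg at hcon
    have hMpos : 0 < M := hinit'.trans_le (hcon 0 hJ0)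
    -- u t - M t is antitone, so u is bounded, contradiction
    set ρ : ℝ → ℝ := fun t => u t - M * t with hρdef
    have hasρ : ∀ t ∈ Ico (0:ℝ) T, HasDerivAt ρ (deriv u t - M) t := by
      intro t ht
      have h0 : HasDerivAt (fun s : ℝ => M * s) M t := by
        simpa using (hasDerivAt_id t).const_mul M
      exact (hd1 t ht).hasDerivAt.sub h0
    have hanti : AntitoneOn ρ (Ico 0 T) := by
      apply antitoneOn_of_deriv_nonpos hconv
      · exact fun x hx => (hasρ x hx).continuousAt.continuousWithinAt
      · exact fun x hx =>
          (hasρ x (interior_subset hx)).differentiableAt.differentiableWithinAt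
      · intro x hx
        have hxJ : x ∈ Ico (0:ℝ) T := interior_subset hx
        rw [(hasρ x hxJ).deriv]
        have := hcon x hxJ
        linarith
    obtain ⟨τ, hτmem, hτ⟩ := hU (u 0 + M * T)
    have h1 : ρ τ ≤ ρ 0 := hanti hJ0 hτmem hτmem.1
    simp only [hρdef] at h1
    have h2 : M * τ ≤ M * T := mul_le_mul_of_nonneg_left hτmem.2.le hMpos.le
    simp at h1
    linarith
end

section
/- (First-quadrant orbits for 0 < k < 1.) Let 0 < k < 1 and let u be a maximal forward solution of u''(τ) + (2k − 1)·u'(τ) + k(k − 1)·u(τ) = u(τ)^4 with u(0) > 0 and u'(0) > 0, defined on [0, T_max). Then u(τ) > 0 and u'(τ) > 0 for all τ ∈ [0, T_max) (the orbit never intersects the u- or v-axes), and both u and u' are unbounded: sup over [0, T_max) of u(τ) = +∞ and sup over [0, T_max) of u'(τ) = +∞. -/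
open Set Filter Topology

lemma st17_pos (k : ℝ) (hk0 : 0 < k) (hk1 : k < 1) (u : ℝ → ℝ) (J : Set ℝ)
    (hJ0 : (0:ℝ) ∈ J) (hJpos : ∀ τ ∈ J, 0 ≤ τ) (hJI : ∀ τ ∈ J, Set.Icc 0 τ ⊆ J)
    (hd1 : ∀ τ ∈ J, DifferentiableAt ℝ u τ)
    (hd2 : ∀ τ ∈ J, DifferentiableAt ℝ (deriv u) τ)
    (heq : ∀ τ ∈ J, deriv (deriv u) τ + (2*k-1) * deriv u τ + k*(k-1) * u τ = u τ ^ 4)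
    (hinit : 0 < u 0) (hinit' : 0 < deriv u 0) :
    ∀ τ ∈ J, 0 < u τ ∧ 0 < deriv u τ := by
  by_contra h
  push_neg at h
  obtain ⟨b0, hb0J, hb0⟩ := h
  set B : Set ℝ := {τ ∈ J | u τ ≤ 0 ∨ deriv u τ ≤ 0} with hBdef
  have hb0B : b0 ∈ B := by
    refine ⟨hb0J, ?_⟩
    by_cases h1 : 0 < u b0
    · exact Or.inr (hb0 h1)
    · exact Or.inl (le_of_not_gt h1)
  have hBne : B.Nonempty := ⟨b0, hb0B⟩
  have hBdd : BddBelow B := ⟨0, fun b hb => hJpos b hb.1⟩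
  set τ0 : ℝ := sInf B with hτ0def
  have hτ0le : τ0 ≤ b0 := csInf_le hBdd hb0B
  have hτ0nn : 0 ≤ τ0 := le_csInf hBne (fun b hb => hJpos b hb.1)
  have hτ0J : τ0 ∈ J := hJI b0 hb0J ⟨hτ0nn, hτ0le⟩
  -- min function
  set m : ℝ → ℝ := fun s => min (u s) (deriv u s) with hmdef
  have hmc : ContinuousAt m τ0 :=
    ((hd1 τ0 hτ0J).continuousAt).min ((hd2 τ0 hτ0J).continuousAt)
  have hmτ0 : m τ0 ≤ 0 := by
    have hcl : τ0 ∈ closure B := csInf_mem_closure hBne hBdd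
    obtain ⟨x, hxB, hxlim⟩ := mem_closure_iff_seq_limit.mp hcl
    have : Tendsto (fun n => m (x n)) atTop (𝓝 (m τ0)) := (hmc.tendsto).comp hxlim
    refine le_of_tendsto this (Eventually.of_forall fun n => ?_)
    rcases (hxB n).2 with h1 | h1
    · exact le_trans (min_le_left _ _) h1
    · exact le_trans (min_le_right _ _) h1
  have hτ0pos : 0 < τ0 := by
    rcases lt_or_eq_of_le hτ0nn with h1 | h1
    · exact h1
    · exfalso
      rw [← h1] at hmτ0
      have : 0 < m 0 := lt_min hinit hinit'
      linarith
  -- positivity before τ0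
  have hpre : ∀ s ∈ Ico (0:ℝ) τ0, 0 < u s ∧ 0 < deriv u s := by
    intro s hs
    have hsJ : s ∈ J := hJI τ0 hτ0J ⟨hs.1, le_of_lt hs.2⟩
    have hsB : s ∉ B := fun hsB => absurd (csInf_le hBdd hsB) (not_le.mpr hs.2)
    have : ¬ (u s ≤ 0 ∨ deriv u s ≤ 0) := fun hc => hsB ⟨hsJ, hc⟩
    push_neg at this
    exact this
  -- u strictly increasing on [0, τ0]
  have hIccJ : Icc (0:ℝ) τ0 ⊆ J := hJI τ0 hτ0J
  have hmono : StrictMonoOn u (Icc 0 τ0) := by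
    refine strictMonoOn_of_deriv_pos (convex_Icc _ _)
      (fun s hs => (hd1 s (hIccJ hs)).continuousAt.continuousWithinAt) (fun s hs => ?_)
    rw [interior_Icc] at hs
    exact (hpre s ⟨le_of_lt hs.1, hs.2⟩).2
  have huτ0 : 0 < u τ0 := lt_trans hinit (hmono ⟨le_refl _, hτ0nn⟩ ⟨hτ0nn, le_refl _⟩ hτ0pos)
  -- deriv u τ0 ≥ 0 by left limits
  have hNeBot : (𝓝[Ico (0:ℝ) τ0] τ0).NeBot := by
    rw [← mem_closure_iff_nhdsWithin_neBot, closure_Ico (ne_of_lt hτ0pos)]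
    exact ⟨hτ0nn, le_refl _⟩
  have hdu0 : 0 ≤ deriv u τ0 := by
    have ht : Tendsto (deriv u) (𝓝[Ico (0:ℝ) τ0] τ0) (𝓝 (deriv u τ0)) :=
      ((hd2 τ0 hτ0J).continuousAt).continuousWithinAt
    refine ge_of_tendsto ht ?_
    filter_upwards [self_mem_nhdsWithin] with s hs
    exact le_of_lt (hpre s hs).2
  have hduτ0 : deriv u τ0 = 0 := by
    rcases min_le_iff.mp hmτ0 with h1 | h1
    · linarith
    · linarith
  -- second derivative positive at τ0
  have hdd : 0 < deriv (deriv u) τ0 := by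
    have := heq τ0 hτ0J
    rw [hduτ0] at this
    nlinarith [pow_pos huτ0 4, mul_pos (mul_pos hk0 (sub_pos.mpr hk1)) huτ0]
  -- slope argument
  have hslope := hasDerivAt_iff_tendsto_slope.mp ((hd2 τ0 hτ0J).hasDerivAt)
  have hslope' : Tendsto (slope (deriv u) τ0) (𝓝[<] τ0) (𝓝 (deriv (deriv u) τ0)) :=
    hslope.mono_left (nhdsWithin_mono _ (fun s hs => ne_of_lt hs))
  have hev : ∀ᶠ s in 𝓝[<] τ0, 0 < slope (deriv u) τ0 s :=
    hslope'.eventually (eventually_gt_nhds hdd)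
  have hev2 : ∀ᶠ s in 𝓝[<] τ0, s ∈ Ioo (0:ℝ) τ0 := by
    rw [eventually_nhdsWithin_iff]
    filter_upwards [eventually_gt_nhds hτ0pos] with s hs hs'
    exact ⟨hs, hs'⟩
  obtain ⟨s, hs1, hs2⟩ := (hev.and hev2).exists
  have : slope (deriv u) τ0 s = (deriv u s - deriv u τ0) / (s - τ0) := by
    rw [slope_def_field]
  rw [this, hduτ0, sub_zero] at hs1
  have hneg : s - τ0 < 0 := by linarith [hs2.2]
  have : deriv u s < 0 := by
    by_contra hc
    push_neg at hc
    have := div_nonpos_of_nonneg_of_nonpos hc (le_of_lt hneg)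
    linarith
  linarith [(hpre s ⟨le_of_lt hs2.1, hs2.2⟩).2]

lemma st17_global (k : ℝ) (hk0 : 0 < k) (hk1 : k < 1) (u : ℝ → ℝ)
    (hd1 : ∀ τ ∈ Set.Ici (0:ℝ), DifferentiableAt ℝ u τ)
    (hd2 : ∀ τ ∈ Set.Ici (0:ℝ), DifferentiableAt ℝ (deriv u) τ)
    (heq : ∀ τ ∈ Set.Ici (0:ℝ),
      deriv (deriv u) τ + (2*k-1) * deriv u τ + k*(k-1) * u τ = u τ ^ 4)
    (hpos : ∀ τ ∈ Set.Ici (0:ℝ), 0 < u τ ∧ 0 < deriv u τ) :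
    (∀ M : ℝ, ∃ τ ∈ Set.Ici (0:ℝ), M < u τ) ∧
    (∀ M : ℝ, ∃ τ ∈ Set.Ici (0:ℝ), M < deriv u τ) := by
  have h0 : (0:ℝ) ∈ Ici (0:ℝ) := self_mem_Ici
  have humono : MonotoneOn u (Ici 0) := by
    refine monotoneOn_of_deriv_nonneg (convex_Ici 0)
      (fun s hs => (hd1 s hs).continuousAt.continuousWithinAt)
      (fun s hs => (hd1 s (interior_subset hs)).differentiableWithinAt) (fun s hs => ?_)
    rw [interior_Ici] at hs
    exact le_of_lt (hpos s (Set.mem_Ici.mpr (le_of_lt hs))).2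
  set c : ℝ := k*(1-k)*u 0 + u 0^4 with hcdef
  have hu0 := (hpos 0 h0).1
  have hdu0 := (hpos 0 h0).2
  have hcpos : 0 < c := by
    have := pow_pos hu0 4
    have := mul_pos (mul_pos hk0 (sub_pos.mpr hk1)) hu0
    positivity
  set f : ℝ → ℝ := fun τ => deriv u τ + (2*k-1) * u τ with hfdef
  have hfd : ∀ τ ∈ Ici (0:ℝ), HasDerivAt f
      (deriv (deriv u) τ + (2*k-1) * deriv u τ) τ := fun τ hτ =>
    ((hd2 τ hτ).hasDerivAt).add (((hd1 τ hτ).hasDerivAt).const_mul (2*k-1))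
  have hfderiv : ∀ τ ∈ Ici (0:ℝ), deriv f τ = u τ^4 - k*(k-1)*u τ := by
    intro τ hτ
    rw [(hfd τ hτ).deriv]
    linarith [heq τ hτ]
  have hfderiv_ge : ∀ τ ∈ interior (Ici (0:ℝ)), c ≤ deriv f τ := by
    intro τ hτ
    rw [interior_Ici] at hτ
    have hτ' : τ ∈ Ici (0:ℝ) := Set.mem_Ici.mpr (le_of_lt hτ)
    rw [hfderiv τ hτ']
    have hmle : u 0 ≤ u τ := humono h0 hτ' (le_of_lt hτ)
    have h4 : u 0^4 ≤ u τ^4 := pow_le_pow_left₀ (le_of_lt hu0) hmle 4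
    nlinarith [mul_pos hk0 (sub_pos.mpr hk1)]
  have hgrow : ∀ τ ∈ Ici (0:ℝ), f 0 + c * τ ≤ f τ := by
    intro τ hτ
    have := Convex.mul_sub_le_image_sub_of_le_deriv (convex_Ici 0)
      (fun s hs => ((hfd s hs).differentiableAt).continuousAt.continuousWithinAt)
      (fun s hs => ((hfd s (interior_subset hs)).differentiableAt).differentiableWithinAt)
      hfderiv_ge 0 h0 τ hτ hτ
    linarith
  -- generic linear growth helper
  have hlin : ∀ (g : ℝ → ℝ) (T : ℝ), 0 ≤ T → (∀ s ∈ Ici T, DifferentiableAt ℝ g s) →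
      (∀ s ∈ Ioi T, 1 ≤ deriv g s) → ∀ τ, T ≤ τ → g T + (τ - T) ≤ g τ := by
    intro g T hT hdg hdg1 τ hτ
    have := Convex.mul_sub_le_image_sub_of_le_deriv (convex_Ici T)
      (fun s hs => (hdg s hs).continuousAt.continuousWithinAt)
      (fun s hs => (hdg s (interior_subset hs)).differentiableWithinAt)
      (by rw [interior_Ici]; exact hdg1) T (self_mem_Ici) τ hτ hτ
    linarith
  have habs : ∀ x M : ℝ, 0 < x → x ≤ M → (2*k-1) * x ≤ |2*k-1| * M := by
    intro x M hx hxM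
    calc (2*k-1) * x ≤ |2*k-1| * x := mul_le_mul_of_nonneg_right (le_abs_self _) (le_of_lt hx)
    _ ≤ |2*k-1| * M := mul_le_mul_of_nonneg_left hxM (abs_nonneg _)
  have part1 : ∀ M : ℝ, ∃ τ ∈ Set.Ici (0:ℝ), M < u τ := by
    intro M
    by_contra hctr
    push_neg at hctr
    have hM0 : 0 < M := lt_of_lt_of_le hu0 (hctr 0 h0)
    set T : ℝ := max 1 ((1 + |2*k-1| * M - f 0)/c) with hTdef
    have hT0 : (0:ℝ) ≤ T := le_trans zero_le_one (le_max_left _ _)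
    have hder1 : ∀ s ∈ Ioi T, 1 ≤ deriv u s := by
      intro s hs
      have hsT : T < s := hs
      have hs0 : s ∈ Ici (0:ℝ) := le_of_lt (lt_of_le_of_lt hT0 hsT)
      have h1 : f 0 + c * s ≤ f s := hgrow s hs0
      have h2 : (2*k-1) * u s ≤ |2*k-1| * M := habs _ _ (hpos s hs0).1 (hctr s hs0)
      have h3 : (1 + |2*k-1| * M - f 0)/c ≤ s := le_of_lt (lt_of_le_of_lt (le_max_right _ _) hsT)
      have h4 : 1 + |2*k-1| * M - f 0 ≤ c * s := by
        rw [div_le_iff₀ hcpos] at h3; linarith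
      have : deriv u s = f s - (2*k-1) * u s := by simp [hfdef]
      linarith
    have := hlin u T hT0 (fun s hs => hd1 s (le_trans hT0 hs)) hder1 (T + M + 1) (by linarith)
    have huT : 0 < u T := (hpos T hT0).1
    have : M < u (T + M + 1) := by linarith
    exact absurd (hctr (T + M + 1) (by simp only [mem_Ici]; linarith)) (not_le.mpr this)
  refine ⟨part1, ?_⟩
  intro M
  by_contra hctr
  push_neg at hctr
  have hM0 : 0 < M := lt_of_lt_of_le hdu0 (hctr 0 h0)
  obtain ⟨T, hT0, hTu⟩ := part1 (max 1 (|2*k-1| * M + 1))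
  have hT1 : 1 ≤ u T := le_of_lt (lt_of_le_of_lt (le_max_left _ _) hTu)
  have hT4 : |2*k-1| * M + 1 ≤ u T^4 := by
    have h1 : u T ≤ u T^4 := le_self_pow₀ (by linarith) (by norm_num)
    have := lt_of_le_of_lt (le_max_right _ _) hTu
    linarith
  have hder1 : ∀ s ∈ Ioi T, 1 ≤ deriv (deriv u) s := by
    intro s hs
    have hs0 : s ∈ Ici (0:ℝ) := Set.mem_Ici.mpr (le_trans hT0 (le_of_lt hs))
    have hmle : u T ≤ u s := humono hT0 hs0 (le_of_lt hs)
    have h4 : u T^4 ≤ u s^4 := pow_le_pow_left₀ (by linarith) hmle 4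
    have h2 : (2*k-1) * deriv u s ≤ |2*k-1| * M := habs _ _ (hpos s hs0).2 (hctr s hs0)
    have h5 : 0 ≤ k*(1-k)*u s := le_of_lt (mul_pos (mul_pos hk0 (sub_pos.mpr hk1)) (hpos s hs0).1)
    have heqs := heq s hs0
    nlinarith
  have hTIci : (0:ℝ) ≤ T := hT0
  have := hlin (deriv u) T hTIci (fun s hs => hd2 s (le_trans hTIci hs)) hder1 (T + M + 1)
    (by linarith)
  have hduT : 0 < deriv u T := (hpos T hT0).2
  have : M < deriv u (T + M + 1) := by linarith
  exact absurd (hctr (T + M + 1) (by simp only [mem_Ici]; linarith)) (not_le.mpr this)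

lemma st17_finite (k : ℝ) (u : ℝ → ℝ) (Tmax : ℝ) (hT : 0 < Tmax)
    (hd1 : ∀ τ ∈ Set.Ico (0:ℝ) Tmax, DifferentiableAt ℝ u τ)
    (hd2 : ∀ τ ∈ Set.Ico (0:ℝ) Tmax, DifferentiableAt ℝ (deriv u) τ)
    (heq : ∀ τ ∈ Set.Ico (0:ℝ) Tmax,
      deriv (deriv u) τ + (2*k-1) * deriv u τ + k*(k-1) * u τ = u τ ^ 4)
    (A V : ℝ)
    (hulim : Tendsto u (𝓝[<] Tmax) (𝓝 A))
    (hdulim : Tendsto (deriv u) (𝓝[<] Tmax) (𝓝 V)) :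
    ∃ (v : ℝ → ℝ) (T' : ℝ), Tmax < T' ∧ Set.EqOn v u (Set.Ico 0 Tmax) ∧
      (∀ τ ∈ Set.Ico (0:ℝ) T', DifferentiableAt ℝ v τ) ∧
      (∀ τ ∈ Set.Ico (0:ℝ) T', DifferentiableAt ℝ (deriv v) τ) ∧
      (∀ τ ∈ Set.Ico (0:ℝ) T',
        deriv (deriv v) τ + (2*k-1) * deriv v τ + k*(k-1) * v τ = v τ ^ 4) := by
  -- the vector field
  set g : ℝ × ℝ → ℝ × ℝ :=
    fun p => (p.2, p.1^4 - k*(k-1) * p.1 - (2*k-1) * p.2) with hgdef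
  have hg : ContDiff ℝ 1 g :=
    ContDiff.prodMk contDiff_snd
      (((contDiff_fst.pow 4).sub (contDiff_const.mul contDiff_fst)).sub
        (contDiff_const.mul contDiff_snd))
  have hgc : Continuous g := hg.continuous
  -- local solution at Tmax with initial value (A, V)
  obtain ⟨α, hα0, ε, hε, hαd⟩ :=
    ContDiffAt.exists_forall_mem_closedBall_exists_eq_forall_mem_Ioo_hasDerivAt₀ (x₀ := ((A : ℝ), (V : ℝ))) hg.contDiffAt Tmax
  -- glued function
  set w : ℝ → ℝ × ℝ := fun τ => if τ < Tmax then (u τ, deriv u τ) else α τ with hwdef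
  have hwIio : ∀ x ∈ Iio Tmax, w x = (u x, deriv u x) := fun x hx => if_pos hx
  have hwIci : ∀ x ∈ Ici Tmax, w x = α x := fun x hx => if_neg (not_lt.mpr hx)
  have hwTmax : w Tmax = (A, V) := by rw [hwIci Tmax self_mem_Ici, hα0]
  -- derivative of the pair (u, u') on [0, Tmax)
  have hpair : ∀ τ ∈ Ico (0:ℝ) Tmax,
      HasDerivAt (fun s => (u s, deriv u s)) (g (u τ, deriv u τ)) τ := by
    intro τ hτ
    have h := ((hd1 τ hτ).hasDerivAt).prodMk ((hd2 τ hτ).hasDerivAt)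
    have h2 : u τ^4 - k*(k-1) * u τ - (2*k-1) * deriv u τ = deriv (deriv u) τ := by
      linarith [heq τ hτ]
    have h3 : g (u τ, deriv u τ) = (deriv u τ, deriv (deriv u) τ) := by
      simp only [hgdef]; rw [h2]
    rw [h3]; exact h
  have hwleft : ∀ s ∈ Ioo (0:ℝ) Tmax, HasDerivAt w (g (u s, deriv u s)) s := by
    intro s hs
    exact (hpair s ⟨le_of_lt hs.1, hs.2⟩).congr_of_eventuallyEq
      (eventually_of_mem (Iio_mem_nhds hs.2) hwIio)
  have hwderiv : ∀ s ∈ Ioo (0:ℝ) Tmax, deriv w s = g (u s, deriv u s) :=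
    fun s hs => (hwleft s hs).deriv
  have hpairlim : Tendsto (fun s => (u s, deriv u s)) (𝓝[<] Tmax) (𝓝 (A, V)) :=
    hulim.prodMk_nhds hdulim
  have hIooIio : Ioo (0:ℝ) Tmax ∈ 𝓝[<] Tmax := Ioo_mem_nhdsLT_of_mem ⟨hT, le_refl _⟩
  -- derivative of w everywhere in (0, Tmax + ε)
  have hopen : ∀ τ ∈ Ioo (0:ℝ) (Tmax + ε), HasDerivAt w (g (w τ)) τ := by
    intro τ hτ
    rcases lt_trichotomy τ Tmax with hlt | heqt | hgt
    · have h := hwleft τ ⟨hτ.1, hlt⟩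
      rw [hwIio τ hlt]; exact h
    · rw [heqt]
      have hdiffIoo : DifferentiableOn ℝ w (Ioo 0 Tmax) :=
        fun s hs => (hwleft s hs).differentiableAt.differentiableWithinAt
      have hlim : ContinuousWithinAt w (Ioo 0 Tmax) Tmax := by
        unfold ContinuousWithinAt
        rw [hwTmax]
        refine Tendsto.congr' ?_ (hpairlim.mono_left (nhdsWithin_mono _ Ioo_subset_Iio_self))
        filter_upwards [self_mem_nhdsWithin] with s hs
        exact (hwIio s hs.2).symm
      have hlim' : Tendsto (fun x => deriv w x) (𝓝[<] Tmax) (𝓝 (g (A, V))) := by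
        refine Tendsto.congr' ?_ ((hgc.continuousAt.tendsto).comp hpairlim)
        filter_upwards [hIooIio] with s hs
        exact (hwderiv s hs).symm
      have hleft : HasDerivWithinAt w (g (A, V)) (Iic Tmax) Tmax :=
        hasDerivWithinAt_Iic_of_tendsto_deriv hdiffIoo hlim hIooIio hlim'
      have hright : HasDerivWithinAt w (g (A, V)) (Ici Tmax) Tmax := by
        have hα : HasDerivAt α (g (α Tmax)) Tmax :=
          hαd Tmax ⟨by linarith, by linarith⟩
        rw [hα0] at hα
        exact (hα.hasDerivWithinAt).congr (fun x hx => hwIci x hx) (hwTmax.trans hα0.symm)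
      have h := hleft.union hright
      rw [Iic_union_Ici] at h
      have h2 := hasDerivWithinAt_univ.mp h
      rwa [hwTmax]
    · have hα : HasDerivAt α (g (α τ)) τ := hαd τ ⟨by linarith [hτ.1], hτ.2⟩
      have h := hα.congr_of_eventuallyEq
        (eventually_of_mem (Ioi_mem_nhds hgt) (fun x hx => hwIci x (Set.mem_Ici.mpr (le_of_lt hx))))
      rw [hwIci τ (le_of_lt hgt)]; exact h
  -- the extended scalar solution
  set v : ℝ → ℝ := fun τ => (w τ).1 with hvdef
  have hvIio : ∀ x ∈ Iio Tmax, v x = u x := by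
    intro x hx; simp only [hvdef, hwIio x hx]
  have hfst : ∀ τ ∈ Ioo (0:ℝ) (Tmax+ε), HasDerivAt v ((w τ).2) τ := by
    intro τ hτ
    have h := (ContinuousLinearMap.fst ℝ ℝ ℝ).hasFDerivAt.comp_hasDerivAt τ (hopen τ hτ)
    simpa [hgdef, Function.comp_def, hvdef] using h
  have hsnd : ∀ τ ∈ Ioo (0:ℝ) (Tmax+ε), HasDerivAt (fun s => (w s).2) ((g (w τ)).2) τ := by
    intro τ hτ
    have h := (ContinuousLinearMap.snd ℝ ℝ ℝ).hasFDerivAt.comp_hasDerivAt τ (hopen τ hτ)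
    simpa [Function.comp_def] using h
  have hvderiv : ∀ τ ∈ Ioo (0:ℝ) (Tmax+ε), deriv v τ = (w τ).2 :=
    fun τ hτ => (hfst τ hτ).deriv
  have hddv : ∀ τ ∈ Ioo (0:ℝ) (Tmax+ε), HasDerivAt (deriv v) ((g (w τ)).2) τ := by
    intro τ hτ
    refine (hsnd τ hτ).congr_of_eventuallyEq ?_
    exact eventually_of_mem (Ioo_mem_nhds hτ.1 hτ.2) (fun x hx => hvderiv x hx)
  refine ⟨v, Tmax + ε/2, by linarith, fun x hx => hvIio x hx.2, ?_, ?_, ?_⟩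
  · intro τ hτ
    rcases lt_or_ge τ Tmax with hlt | hge
    · have hev : v =ᶠ[𝓝 τ] u := eventually_of_mem (Iio_mem_nhds hlt) hvIio
      exact (hev.differentiableAt_iff).mpr (hd1 τ ⟨hτ.1, hlt⟩)
    · exact (hfst τ ⟨lt_of_lt_of_le hT hge, by linarith [hτ.2]⟩).differentiableAt
  · intro τ hτ
    rcases lt_or_ge τ Tmax with hlt | hge
    · have hevd : deriv v =ᶠ[𝓝 τ] deriv u :=
        eventually_of_mem (Iio_mem_nhds hlt)
          (fun x hx =>
            Filter.EventuallyEq.deriv_eq (eventually_of_mem (Iio_mem_nhds hx) hvIio))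
      exact (hevd.differentiableAt_iff).mpr (hd2 τ ⟨hτ.1, hlt⟩)
    · exact (hddv τ ⟨lt_of_lt_of_le hT hge, by linarith [hτ.2]⟩).differentiableAt
  · intro τ hτ
    rcases lt_or_ge τ Tmax with hlt | hge
    · have hev : v =ᶠ[𝓝 τ] u := eventually_of_mem (Iio_mem_nhds hlt) hvIio
      have hevd : deriv v =ᶠ[𝓝 τ] deriv u :=
        eventually_of_mem (Iio_mem_nhds hlt)
          (fun x hx =>
            Filter.EventuallyEq.deriv_eq (eventually_of_mem (Iio_mem_nhds hx) hvIio))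
      rw [hevd.deriv_eq, hev.deriv_eq, hvIio τ hlt]
      exact heq τ ⟨hτ.1, hlt⟩
    · have hτ' : τ ∈ Ioo (0:ℝ) (Tmax+ε) := ⟨lt_of_lt_of_le hT hge, by linarith [hτ.2]⟩
      rw [(hddv τ hτ').deriv, hvderiv τ hτ']
      simp only [hvdef, hgdef]
      ring

/-- First-quadrant orbits for 0 < k < 1: A maximal forward solution of
`u'' + (2k-1)u' + k(k-1)u = u⁴`, `0 < k < 1`, with `u(0) > 0`, `u'(0) > 0`, defined on
`J = [0, T_max)`, satisfies `u(τ) > 0` and `u'(τ) > 0` on all of `J` (the orbit never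
meets the axes), and both `u` and `u'` are unbounded on `J`. Maximality is expressed as
non-extendability. -/
theorem statement17 (k : ℝ) (hk0 : 0 < k) (hk1 : k < 1) (u : ℝ → ℝ) (J : Set ℝ)
    (hJ : J = Set.Ici (0 : ℝ) ∨ ∃ Tmax : ℝ, 0 < Tmax ∧ J = Set.Ico 0 Tmax)
    (hd1 : ∀ τ ∈ J, DifferentiableAt ℝ u τ)
    (hd2 : ∀ τ ∈ J, DifferentiableAt ℝ (deriv u) τ)
    (heq : ∀ τ ∈ J,
      deriv (deriv u) τ + (2 * k - 1) * deriv u τ + k * (k - 1) * u τ = u τ ^ 4)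
    (hinit : 0 < u 0) (hinit' : 0 < deriv u 0)
    (hmax : ∀ (v : ℝ → ℝ) (J' : Set ℝ),
      (J' = Set.Ici (0 : ℝ) ∨ ∃ T' : ℝ, 0 < T' ∧ J' = Set.Ico 0 T') →
      J ⊆ J' → Set.EqOn v u J →
      (∀ τ ∈ J', DifferentiableAt ℝ v τ) →
      (∀ τ ∈ J', DifferentiableAt ℝ (deriv v) τ) →
      (∀ τ ∈ J',
        deriv (deriv v) τ + (2 * k - 1) * deriv v τ + k * (k - 1) * v τ = v τ ^ 4) →
      J' ⊆ J) :
    (∀ τ ∈ J, 0 < u τ ∧ 0 < deriv u τ) ∧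
    (∀ M : ℝ, ∃ τ ∈ J, M < u τ) ∧
    (∀ M : ℝ, ∃ τ ∈ J, M < deriv u τ) := by
  have hJ0 : (0:ℝ) ∈ J := by
    rcases hJ with rfl | ⟨T, hT, rfl⟩
    · exact self_mem_Ici
    · exact ⟨le_refl _, hT⟩
  have hJpos : ∀ τ ∈ J, 0 ≤ τ := by
    rcases hJ with rfl | ⟨T, hT, rfl⟩
    · exact fun τ hτ => hτ
    · exact fun τ hτ => hτ.1
  have hJI : ∀ τ ∈ J, Icc 0 τ ⊆ J := by
    rcases hJ with rfl | ⟨T, hT, rfl⟩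
    · exact fun τ hτ s hs => hs.1
    · exact fun τ hτ s hs => ⟨hs.1, lt_of_le_of_lt hs.2 hτ.2⟩
  have heq' : ∀ τ ∈ J,
      deriv (deriv u) τ + (2*k-1) * deriv u τ + k*(k-1) * u τ = u τ ^ 4 := heq
  have hpos := st17_pos k hk0 hk1 u J hJ0 hJpos hJI hd1 hd2 heq' hinit hinit'
  rcases hJ with rfl | ⟨Tmax, hT, rfl⟩
  · obtain ⟨g1, g2⟩ := st17_global k hk0 hk1 u hd1 hd2 heq' hpos
    exact ⟨hpos, g1, g2⟩
  -- finite case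
  have hu0 : (0:ℝ) ∈ Ico (0:ℝ) Tmax := ⟨le_refl _, hT⟩
  have hfalse : ∀ Mu : ℝ, (∀ τ ∈ Set.Ico (0:ℝ) Tmax, u τ ≤ Mu) → False := by
    intro Mu hMu
    have huMu : u 0 ≤ Mu := hMu 0 hu0
    have hMupos : 0 < Mu := lt_of_lt_of_le hinit huMu
    have hmono_u : MonotoneOn u (Ico 0 Tmax) := by
      refine monotoneOn_of_deriv_nonneg (convex_Ico _ _)
        (fun s hs => (hd1 s hs).continuousAt.continuousWithinAt)
        (fun s hs => (hd1 s (interior_subset hs)).differentiableWithinAt) (fun s hs => ?_)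
      rw [interior_Ico] at hs
      exact le_of_lt (hpos s ⟨le_of_lt hs.1, hs.2⟩).2
    set f : ℝ → ℝ := fun τ => deriv u τ + (2*k-1) * u τ with hfdef
    have hfd : ∀ τ ∈ Ico (0:ℝ) Tmax, HasDerivAt f
        (deriv (deriv u) τ + (2*k-1) * deriv u τ) τ := fun τ hτ =>
      ((hd2 τ hτ).hasDerivAt).add (((hd1 τ hτ).hasDerivAt).const_mul (2*k-1))
    have hfderiv : ∀ τ ∈ Ico (0:ℝ) Tmax, deriv f τ = u τ^4 - k*(k-1) * u τ := by
      intro τ hτ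
      rw [(hfd τ hτ).deriv]
      linarith [heq τ hτ]
    set C : ℝ := Mu^4 + k*(1-k) * Mu with hCdef
    have hCpos : 0 < C := by
      have := pow_pos hMupos 4
      have := mul_pos (mul_pos hk0 (sub_pos.mpr hk1)) hMupos
      positivity
    have hfderiv_le : ∀ τ ∈ interior (Ico (0:ℝ) Tmax), deriv f τ ≤ C := by
      intro τ hτ
      rw [interior_Ico] at hτ
      have hτ' : τ ∈ Ico (0:ℝ) Tmax := ⟨le_of_lt hτ.1, hτ.2⟩
      rw [hfderiv τ hτ']
      have h1 := (hpos τ hτ').1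
      have h2 := hMu τ hτ'
      have h4 : u τ^4 ≤ Mu^4 := pow_le_pow_left₀ (le_of_lt h1) h2 4
      nlinarith [mul_pos hk0 (sub_pos.mpr hk1)]
    have hfderiv_ge : ∀ τ ∈ interior (Ico (0:ℝ) Tmax), 0 ≤ deriv f τ := by
      intro τ hτ
      rw [interior_Ico] at hτ
      have hτ' : τ ∈ Ico (0:ℝ) Tmax := ⟨le_of_lt hτ.1, hτ.2⟩
      rw [hfderiv τ hτ']
      have h1 := (hpos τ hτ').1
      nlinarith [mul_pos hk0 (sub_pos.mpr hk1), pow_pos h1 4,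
        mul_pos (mul_pos hk0 (sub_pos.mpr hk1)) h1]
    have hfcont : ContinuousOn f (Ico 0 Tmax) :=
      fun s hs => ((hfd s hs).differentiableAt).continuousAt.continuousWithinAt
    have hfdiff : DifferentiableOn ℝ f (interior (Ico (0:ℝ) Tmax)) :=
      fun s hs => ((hfd s (interior_subset hs)).differentiableAt).differentiableWithinAt
    have hfbound : ∀ τ ∈ Ico (0:ℝ) Tmax, f τ ≤ f 0 + C * Tmax := by
      intro τ hτ
      have := Convex.image_sub_le_mul_sub_of_deriv_le (convex_Ico _ _) hfcont hfdiff
        hfderiv_le 0 hu0 τ hτ hτ.1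
      nlinarith [hτ.2, hτ.1]
    have hfmono : MonotoneOn f (Ico 0 Tmax) :=
      monotoneOn_of_deriv_nonneg (convex_Ico _ _) hfcont hfdiff hfderiv_ge
    -- limits via monotone bounded convergence
    have hlimgen : ∀ (h : ℝ → ℝ) (Mh : ℝ), MonotoneOn h (Ico 0 Tmax) →
        (∀ τ ∈ Ico (0:ℝ) Tmax, h τ ≤ Mh) → ∃ L, Tendsto h (𝓝[<] Tmax) (𝓝 L) := by
      intro h Mh hmono hbd
      set h' : ℝ → ℝ := fun s => h (max s 0) with hh'
      have hmem : ∀ s ∈ Iio Tmax, max s 0 ∈ Ico (0:ℝ) Tmax :=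
        fun s hs => ⟨le_max_right _ _, max_lt hs hT⟩
      have hmono' : MonotoneOn h' (Iio Tmax) := fun s hs t ht hst =>
        hmono (hmem s hs) (hmem t ht) (max_le_max hst (le_refl 0))
      have hbdd : BddAbove (h' '' Iio Tmax) := by
        refine ⟨Mh, fun y hy => ?_⟩
        obtain ⟨s, hs, rfl⟩ := hy
        exact hbd _ (hmem s hs)
      refine ⟨_, Tendsto.congr' ?_ (hmono'.tendsto_nhdsLT hbdd)⟩
      filter_upwards [Ioo_mem_nhdsLT_of_mem (⟨hT, le_refl _⟩ : Tmax ∈ Ioc 0 Tmax)] with s hs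
      simp only [hh', max_eq_left (le_of_lt hs.1)]
    obtain ⟨A, hulim⟩ := hlimgen u Mu hmono_u hMu
    obtain ⟨Lf, hflim⟩ := hlimgen f (f 0 + C * Tmax) hfmono hfbound
    have hdulim : Tendsto (deriv u) (𝓝[<] Tmax) (𝓝 (Lf - (2*k-1) * A)) := by
      have h1 : Tendsto (fun s => f s - (2*k-1) * u s) (𝓝[<] Tmax)
          (𝓝 (Lf - (2*k-1) * A)) := hflim.sub (hulim.const_mul (2*k-1))
      refine h1.congr (fun s => ?_)
      simp only [hfdef]
      ring
    obtain ⟨v, T', hT'gt, hEq, hv1, hv2, hv3⟩ :=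
      st17_finite k u Tmax hT hd1 hd2 heq' A (Lf - (2*k-1) * A) hulim hdulim
    have hsub := hmax v (Ico 0 T') (Or.inr ⟨T', lt_trans hT hT'gt, rfl⟩)
      (Ico_subset_Ico_right (le_of_lt hT'gt)) hEq hv1 hv2 hv3
    have : Tmax ∈ Ico (0:ℝ) T' := ⟨le_of_lt hT, hT'gt⟩
    exact absurd (hsub this).2 (lt_irrefl Tmax)
  refine ⟨hpos, ?_, ?_⟩
  · intro M
    by_contra hc
    push_neg at hc
    exact hfalse M hc
  · intro M
    by_contra hc
    push_neg at hc
    have hM0 : 0 < M := lt_of_lt_of_le hinit' (hc 0 hu0)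
    have hub : ∀ τ ∈ Ico (0:ℝ) Tmax, u τ ≤ u 0 + M * Tmax := by
      intro τ hτ
      have hcont : ContinuousOn u (Ico 0 Tmax) :=
        fun s hs => (hd1 s hs).continuousAt.continuousWithinAt
      have hdiff : DifferentiableOn ℝ u (interior (Ico (0:ℝ) Tmax)) :=
        fun s hs => (hd1 s (interior_subset hs)).differentiableWithinAt
      have hle : ∀ x ∈ interior (Ico (0:ℝ) Tmax), deriv u x ≤ M := by
        intro x hx
        rw [interior_Ico] at hx
        exact hc x ⟨le_of_lt hx.1, hx.2⟩
      have := Convex.image_sub_le_mul_sub_of_deriv_le (convex_Ico _ _) hcont hdiff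
        hle 0 hu0 τ hτ hτ.1
      nlinarith [hτ.2, hτ.1]
    exact hfalse _ hub
end
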